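/- arXiv:2207.08238 — 4 statements merged into one kernel-verified Lean document; each statement's English description precedes it below -/
import Mathlib

section
/- Let μ ∈ 𝔐_x(M), ν ∈ 𝔐_y(M) be global Keisler measures and D ∈ L_y(A) an A-definable set with 0 < ν(D) < 1. Suppose μ ≥_{E,A} ν and that some separated amalgam λ ∈ 𝔐_xy(A) witnesses the domination. Then μ ≥_{E,A} ν_[D], where ν_[D] is the localization of ν at D. -/
open FirstOrder

/-- A Keisler measure over the parameter set `A`, in the variables indexed by `α`:
a finitely additive probability measure on the Boolean algebra of `A`-definable
subsets of `M^α` (i.e. on `L_α(A)`).  The function `toFun` is defined on all sets,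
but only its values on `A`-definable sets are constrained (and relevant). -/
structure KeislerMeasure (L : FirstOrder.Language) (M : Type*) [L.Structure M]
    (A : Set M) (α : Type*) where
  toFun : Set (α → M) → ℝ
  measure_univ : toFun Set.univ = 1
  nonneg' : ∀ s : Set (α → M), A.Definable L s → 0 ≤ toFun s
  compl' : ∀ s : Set (α → M), A.Definable L s → toFun sᶜ = 1 - toFun s
  union_inter' : ∀ s t : Set (α → M), A.Definable L s → A.Definable L t →
    toFun (s ∪ t) = toFun s + toFun t - toFun (s ∩ t)

/-- Pull back a set of variable assignments along a variable reindexing map: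
for `S ⊆ M^α` and `f : α → β`, `cyl f S ⊆ M^β` is the corresponding cylinder.
E.g. `cyl Sum.inl X = X × M^β` inside `M^(α ⊕ β)`. -/
def cyl {M : Type*} {α β : Type*} (f : α → β) (S : Set (α → M)) : Set (β → M) :=
  {g : β → M | (fun a => g (f a)) ∈ S}

section DomSec
open Finset

lemma dominance_aux (N : ℕ) : ∀ {I J : Type} [Fintype I] [Fintype J]
    (ρ : I → ℝ) (σ : J → ℝ) (c : I → ℝ) (e : J → ℝ),
    (∀ i, 0 ≤ ρ i) → (∀ j, 0 ≤ σ j) →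
    (∑ j, σ j = ∑ i, ρ i) →
    (∀ r : ℝ, ∑ j ∈ univ.filter (fun j => r ≤ e j), σ j ≤
      ∑ i ∈ univ.filter (fun i => r ≤ c i), ρ i) →
    ((univ.image c) ∪ (univ.image e)).card ≤ N →
    ∑ j, (e j) * σ j ≤ ∑ i, (c i) * ρ i := by
  induction N with
  | zero =>
    intro I J _ _ ρ σ c e hρ hσ hmass hdom hcard
    have hV : ((univ.image c) ∪ (univ.image e)) = ∅ := card_eq_zero.mp (Nat.le_zero.mp hcard)
    have hI : (univ : Finset I) = ∅ := by
      by_contra h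
      obtain ⟨i, hi⟩ := nonempty_iff_ne_empty.mpr h
      have : c i ∈ (univ.image c) ∪ (univ.image e) := by
        simp only [mem_union, mem_image]
        exact Or.inl ⟨i, mem_univ i, rfl⟩
      rw [hV] at this; exact absurd this (notMem_empty _)
    have hJ : (univ : Finset J) = ∅ := by
      by_contra h
      obtain ⟨j, hj⟩ := nonempty_iff_ne_empty.mpr h
      have : e j ∈ (univ.image c) ∪ (univ.image e) := by
        simp only [mem_union, mem_image]
        exact Or.inr ⟨j, mem_univ j, rfl⟩
      rw [hV] at this; exact absurd this (notMem_empty _)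
    rw [hI, hJ]; simp
  | succ N ih =>
    intro I J _ _ ρ σ c e hρ hσ hmass hdom hcard
    set V := (univ.image c) ∪ (univ.image e) with hVdef
    by_cases hVe : V = ∅
    · refine ih ρ σ c e hρ hσ hmass hdom ?_
      rw [show (univ.image c) ∪ (univ.image e) = (∅ : Finset ℝ) from hVe]; simp
    have hVne : V.Nonempty := nonempty_iff_ne_empty.mpr hVe
    set Mx := V.max' hVne with hMx
    have hcmem : ∀ i : I, c i ∈ V := fun i => by
      simp only [hVdef, mem_union, mem_image]; exact Or.inl ⟨i, mem_univ i, rfl⟩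
    have hemem : ∀ j : J, e j ∈ V := fun j => by
      simp only [hVdef, mem_union, mem_image]; exact Or.inr ⟨j, mem_univ j, rfl⟩
    have hcle : ∀ i, c i ≤ Mx := fun i => le_max' V _ (hcmem i)
    have hele : ∀ j, e j ≤ Mx := fun j => le_max' V _ (hemem j)
    by_cases hV' : V.erase Mx = ∅
    · -- all values equal Mx
      have hall : ∀ x ∈ V, x = Mx := by
        intro x hx
        by_contra hne
        have : x ∈ V.erase Mx := mem_erase.mpr ⟨hne, hx⟩
        rw [hV'] at this; exact absurd this (notMem_empty _)
      have hc : ∀ i, c i = Mx := fun i => hall _ (hcmem i)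
      have he : ∀ j, e j = Mx := fun j => hall _ (hemem j)
      refine le_of_eq ?_
      calc ∑ j, e j * σ j = Mx * ∑ j, σ j := by
            rw [mul_sum]; exact Finset.sum_congr rfl (fun j _ => by rw [he j])
        _ = Mx * ∑ i, ρ i := by rw [hmass]
        _ = ∑ i, c i * ρ i := by
            rw [mul_sum]; exact Finset.sum_congr rfl (fun i _ => by rw [hc i])
    have hV'ne : (V.erase Mx).Nonempty := nonempty_iff_ne_empty.mpr hV'
    set M' := (V.erase Mx).max' hV'ne with hM'
    have hM'mem : M' ∈ V.erase Mx := max'_mem _ _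
    have hM'lt : M' < Mx := by
      rcases mem_erase.mp hM'mem with ⟨hne, hmem⟩
      exact lt_of_le_of_ne (le_max' V _ hmem) hne
    -- truncated values
    set c' : I → ℝ := fun i => min (c i) M' with hc'
    set e' : J → ℝ := fun j => min (e j) M' with he'
    have hc'mem : ∀ i, c' i ∈ V.erase Mx := by
      intro i
      rcases le_or_gt (c i) M' with h | h
      · have hq2 : c' i = c i := min_eq_left h
        rw [hq2]
        exact mem_erase.mpr ⟨fun hq => absurd (hq ▸ h) (not_le.mpr hM'lt), hcmem i⟩
      · have hq2 : c' i = M' := min_eq_right h.le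
        rw [hq2]; exact hM'mem
    have he'mem : ∀ j, e' j ∈ V.erase Mx := by
      intro j
      rcases le_or_gt (e j) M' with h | h
      · have hq2 : e' j = e j := min_eq_left h
        rw [hq2]
        exact mem_erase.mpr ⟨fun hq => absurd (hq ▸ h) (not_le.mpr hM'lt), hemem j⟩
      · have hq2 : e' j = M' := min_eq_right h.le
        rw [hq2]; exact hM'mem
    have hsub : (univ.image c') ∪ (univ.image e') ⊆ V.erase Mx := by
      intro x hx
      rcases mem_union.mp hx with hx | hx <;> rcases mem_image.mp hx with ⟨i, _, rfl⟩
      · exact hc'mem i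
      · exact he'mem i
    have hcard' : ((univ.image c') ∪ (univ.image e')).card ≤ N := by
      have h1 : ((univ.image c') ∪ (univ.image e')).card ≤ (V.erase Mx).card :=
        card_le_card hsub
      have h2 : (V.erase Mx).card < V.card := card_erase_lt_of_mem (max'_mem _ _)
      omega
    have hdom' : ∀ r : ℝ, ∑ j ∈ univ.filter (fun j => r ≤ e' j), σ j ≤
        ∑ i ∈ univ.filter (fun i => r ≤ c' i), ρ i := by
      intro r
      rcases le_or_gt r M' with h | h
      · have hfe : univ.filter (fun j => r ≤ e' j) = univ.filter (fun j => r ≤ e j) := by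
          apply filter_congr; intro j _
          simp only [he', le_min_iff, eq_iff_iff]
          exact ⟨fun ⟨h1, _⟩ => h1, fun h1 => ⟨h1, h⟩⟩
        have hfc : univ.filter (fun i => r ≤ c' i) = univ.filter (fun i => r ≤ c i) := by
          apply filter_congr; intro i _
          simp only [hc', le_min_iff, eq_iff_iff]
          exact ⟨fun ⟨h1, _⟩ => h1, fun h1 => ⟨h1, h⟩⟩
        rw [hfe, hfc]; exact hdom r
      · have hfe : univ.filter (fun j => r ≤ e' j) = ∅ := by
          apply filter_eq_empty_iff.mpr
          intro j _
          simp only [he', not_le]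
          exact lt_of_le_of_lt (min_le_right _ _) h
        rw [hfe]
        simp only [sum_empty]
        exact Finset.sum_nonneg (fun i _ => hρ i)
    have IH := ih ρ σ c' e' hρ hσ hmass hdom' hcard'
    -- bridge
    have hbridge_c : ∑ i, c i * ρ i = ∑ i, c' i * ρ i
        + (Mx - M') * ∑ i ∈ univ.filter (fun i => Mx ≤ c i), ρ i := by
      rw [mul_sum, ← sum_filter_add_sum_filter_not univ (fun i => Mx ≤ c i) (fun i => c i * ρ i),
        ← sum_filter_add_sum_filter_not univ (fun i => Mx ≤ c i) (fun i => c' i * ρ i)]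
      have h1 : ∀ i ∈ univ.filter (fun i => Mx ≤ c i),
          c i * ρ i = c' i * ρ i + (Mx - M') * ρ i := by
        intro i hi
        have hci : c i = Mx := le_antisymm (hcle i) (mem_filter.mp hi).2
        have hc'i : c' i = M' := by
          show min (c i) M' = M'
          rw [hci]; exact min_eq_right hM'lt.le
        rw [hci, hc'i]; ring
      have h2 : ∀ i ∈ univ.filter (fun i => ¬ Mx ≤ c i), c i * ρ i = c' i * ρ i := by
        intro i hi
        have : c i ≤ M' := by
          have hlt : c i < Mx := not_le.mp (mem_filter.mp hi).2
          have := hcmem i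
          have : c i ∈ V.erase Mx := mem_erase.mpr ⟨ne_of_lt hlt, this⟩
          exact le_max' _ _ this
        show c i * ρ i = min (c i) M' * ρ i
        rw [min_eq_left this]
      rw [Finset.sum_congr rfl h1, Finset.sum_congr rfl h2, sum_add_distrib, ← mul_sum]
      ring
    have hbridge_e : ∑ j, e j * σ j = ∑ j, e' j * σ j
        + (Mx - M') * ∑ j ∈ univ.filter (fun j => Mx ≤ e j), σ j := by
      rw [mul_sum, ← sum_filter_add_sum_filter_not univ (fun j => Mx ≤ e j) (fun j => e j * σ j),
        ← sum_filter_add_sum_filter_not univ (fun j => Mx ≤ e j) (fun j => e' j * σ j)]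
      have h1 : ∀ j ∈ univ.filter (fun j => Mx ≤ e j),
          e j * σ j = e' j * σ j + (Mx - M') * σ j := by
        intro j hj
        have hej : e j = Mx := le_antisymm (hele j) (mem_filter.mp hj).2
        have he'j : e' j = M' := by
          show min (e j) M' = M'
          rw [hej]; exact min_eq_right hM'lt.le
        rw [hej, he'j]; ring
      have h2 : ∀ j ∈ univ.filter (fun j => ¬ Mx ≤ e j), e j * σ j = e' j * σ j := by
        intro j hj
        have : e j ≤ M' := by
          have hlt : e j < Mx := not_le.mp (mem_filter.mp hj).2
          have := hemem j
          have : e j ∈ V.erase Mx := mem_erase.mpr ⟨ne_of_lt hlt, this⟩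
          exact le_max' _ _ this
        show e j * σ j = min (e j) M' * σ j
        rw [min_eq_left this]
      rw [Finset.sum_congr rfl h1, Finset.sum_congr rfl h2, sum_add_distrib, ← mul_sum]
      ring
    have hkey := hdom Mx
    have hfac : (0:ℝ) ≤ Mx - M' := by linarith
    rw [hbridge_c, hbridge_e]
    have := mul_le_mul_of_nonneg_left hkey hfac
    linarith

lemma dominance {I J : Type} [Fintype I] [Fintype J]
    (ρ : I → ℝ) (σ : J → ℝ) (c : I → ℝ) (e : J → ℝ)
    (hρ : ∀ i, 0 ≤ ρ i) (hσ : ∀ j, 0 ≤ σ j)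
    (hmass : ∑ j, σ j = ∑ i, ρ i)
    (hdom : ∀ r : ℝ, ∑ j ∈ univ.filter (fun j => r ≤ e j), σ j ≤
      ∑ i ∈ univ.filter (fun i => r ≤ c i), ρ i) :
    ∑ j, (e j) * σ j ≤ ∑ i, (c i) * ρ i :=
  dominance_aux _ ρ σ c e hρ hσ hmass hdom le_rfl

end DomSec

namespace KMtools

variable {L : FirstOrder.Language} {M : Type*} [L.Structure M] {A : Set M} {α β : Type*}

lemma cyl_def (f : α → β) (S : Set (α → M)) :
    cyl f S = (fun g : β → M => g ∘ f) ⁻¹' S := rfl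

lemma cyl_definable (f : α → β) {S : Set (α → M)} (h : A.Definable L S) :
    A.Definable L (cyl f S) := h.preimage_comp f

lemma cyl_inter (f : α → β) (S T : Set (α → M)) :
    cyl f (S ∩ T) = cyl f S ∩ cyl f T := rfl

lemma cyl_compl (f : α → β) (S : Set (α → M)) :
    cyl f Sᶜ = (cyl f S)ᶜ := rfl

lemma cyl_mono (f : α → β) {S T : Set (α → M)} (h : S ⊆ T) :
    cyl f S ⊆ cyl f T := fun _ hg => h hg

variable (κ : KeislerMeasure L M A α)

lemma km_empty : κ.toFun ∅ = 0 := by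
  have := κ.compl' Set.univ Set.definable_univ
  rw [Set.compl_univ, κ.measure_univ] at this
  linarith

lemma km_disj_union {s t : Set (α → M)} (hs : A.Definable L s) (ht : A.Definable L t)
    (hst : s ∩ t = ∅) : κ.toFun (s ∪ t) = κ.toFun s + κ.toFun t := by
  rw [κ.union_inter' s t hs ht, hst, km_empty]; ring

lemma km_mono {s t : Set (α → M)} (hs : A.Definable L s) (ht : A.Definable L t)
    (hsub : s ⊆ t) : κ.toFun s ≤ κ.toFun t := by
  have hd : A.Definable L (t ∩ sᶜ) := ht.inter hs.compl
  have h1 : s ∪ (t ∩ sᶜ) = t := by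
    ext g; constructor
    · rintro (h | ⟨h, _⟩)
      · exact hsub h
      · exact h
    · intro h; by_cases hg : g ∈ s
      · exact Or.inl hg
      · exact Or.inr ⟨h, hg⟩
  have h2 : s ∩ (t ∩ sᶜ) = ∅ := by
    ext g; simp only [Set.mem_inter_iff, Set.mem_compl_iff, Set.mem_empty_iff_false, iff_false]
    rintro ⟨h1, _, h3⟩; exact h3 h1
  have := km_disj_union κ hs hd h2
  rw [h1] at this
  have hnn := κ.nonneg' _ hd
  linarith

lemma km_le_one {s : Set (α → M)} (hs : A.Definable L s) : κ.toFun s ≤ 1 := by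
  have := km_mono κ hs Set.definable_univ (Set.subset_univ s)
  rwa [κ.measure_univ] at this

lemma km_biUnion {ι : Type*} (t : Finset ι) (P : ι → Set (α → M))
    (hP : ∀ i, A.Definable L (P i))
    (hdisj : ∀ i ∈ t, ∀ j ∈ t, i ≠ j → P i ∩ P j = ∅) :
    κ.toFun (⋃ i ∈ t, P i) = ∑ i ∈ t, κ.toFun (P i) := by
  classical
  induction t using Finset.induction_on with
  | empty => simp [km_empty]
  | @insert a s ha ih =>
    have hu : (⋃ i ∈ insert a s, P i) = P a ∪ ⋃ i ∈ s, P i := by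
      simp [Set.biUnion_insert]
    have hds : A.Definable L (⋃ i ∈ s, P i) :=
      Set.definable_biUnion_finset (fun i => hP i) s
    have hdisj2 : P a ∩ (⋃ i ∈ s, P i) = ∅ := by
      ext g
      simp only [Set.mem_inter_iff, Set.mem_iUnion, Set.mem_empty_iff_false, iff_false, not_and]
      rintro hga ⟨i, hi, hgi⟩
      have : P a ∩ P i = ∅ := hdisj a (Finset.mem_insert_self a s) i
        (Finset.mem_insert_of_mem hi) (by rintro rfl; exact ha hi)
      have : g ∈ P a ∩ P i := ⟨hga, hgi⟩
      rw [‹P a ∩ P i = ∅›] at this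
      exact this
    rw [hu, km_disj_union κ (hP a) hds hdisj2,
      ih (fun i hi => fun j hj => hdisj i (Finset.mem_insert_of_mem hi) j
        (Finset.mem_insert_of_mem hj)), Finset.sum_insert ha]

-- projection lemma: images under restriction to the left coordinates are definable
lemma definable_image_proj {s : Set (α ⊕ β → M)} (h : A.Definable L s) :
    A.Definable L ((fun g : α ⊕ β → M => g ∘ Sum.inl) '' s) := by
  classical
  obtain ⟨φ, rfl⟩ := h
  by_cases hne : {v : α ⊕ β → M | φ.Realize v} = ∅
  · rw [hne, Set.image_empty]; exact Set.definable_empty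
  obtain ⟨v₀, hv₀⟩ := Set.nonempty_iff_ne_empty.mpr hne
  set F := φ.freeVarFinset with hF
  have hsub : ↑φ.freeVarFinset ⊆ (↑F : Set (α ⊕ β)) := by rw [hF]
  set ψ := φ.restrictFreeVar (Set.inclusion hsub) with hψ
  set Fb : Finset β := F.preimage Sum.inr (Sum.inr_injective.injOn) with hFb
  set m := Fintype.card ↥Fb with hm
  set e : ↥Fb ≃ Fin m := Fintype.equivFin ↥Fb with he
  set r : ↥(↑F : Set (α ⊕ β)) → α ⊕ Fin m := fun x =>
    match x with
    | ⟨Sum.inl a, _⟩ => Sum.inl a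
    | ⟨Sum.inr b, hb⟩ => Sum.inr (e ⟨b, by
        rw [hFb, Finset.mem_preimage]
        exact Finset.mem_coe.mp hb⟩) with hr
  set χ : L[[A]].Formula (α ⊕ Fin m) := FirstOrder.Language.Formula.relabel r ψ with hχ
  have key : ∀ w : α ⊕ Fin m → M, ∀ v : α ⊕ β → M,
      (∀ x : ↥(↑F : Set (α ⊕ β)), v x.1 = w (r x)) → (χ.Realize w ↔ φ.Realize v) := by
    intro w v hvw
    have h1 : χ.Realize w ↔ ψ.Realize (w ∘ r) (default : Fin 0 → M) := by
      rw [hχ]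
      exact FirstOrder.Language.Formula.realize_relabel
    have h2 : ψ.Realize (v ∘ (fun x : ↥(↑F : Set (α ⊕ β)) => x.1)) (default : Fin 0 → M)
        ↔ φ.Realize v := by
      rw [hψ]
      exact FirstOrder.Language.BoundedFormula.realize_restrictFreeVar' hsub
    rw [h1, ← h2]
    have heq : w ∘ r = v ∘ (fun x : ↥(↑F : Set (α ⊕ β)) => x.1) := by
      funext x
      exact (hvw x).symm
    rw [heq]
  have himg : ((fun g : α ⊕ β → M => g ∘ Sum.inl) ''
      {v : α ⊕ β → M | φ.Realize v}) =
      ((fun g : α ⊕ Fin m → M => g ∘ Sum.inl) '' {w : α ⊕ Fin m → M | χ.Realize w}) := by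
    ext x
    simp only [Set.mem_image, Set.mem_setOf_eq]
    constructor
    · rintro ⟨v, hv, rfl⟩
      refine ⟨Sum.elim (v ∘ Sum.inl) (fun i => v (Sum.inr (e.symm i).1)), ?_, rfl⟩
      rw [key _ v]
      · exact hv
      · rintro ⟨xv, hx⟩
        rcases xv with a | b
        · rfl
        · show v (Sum.inr b) =
            Sum.elim (v ∘ Sum.inl) (fun i => v (Sum.inr (e.symm i).1)) (Sum.inr (e ⟨b, _⟩))
          simp only [Sum.elim_inr]
          congr 1
          rw [Equiv.symm_apply_apply]
    · rintro ⟨w, hw, rfl⟩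
      refine ⟨Sum.elim (w ∘ Sum.inl)
        (fun b => if hb : b ∈ Fb then w (Sum.inr (e ⟨b, hb⟩)) else v₀ (Sum.inr b)), ?_, rfl⟩
      rw [← key w]
      · exact hw
      · rintro ⟨xv, hx⟩
        rcases xv with a | b
        · rfl
        · have hbF : b ∈ Fb := by
            rw [hFb, Finset.mem_preimage]
            exact Finset.mem_coe.mp hx
          show Sum.elim (w ∘ Sum.inl)
            (fun b => if hb : b ∈ Fb then w (Sum.inr (e ⟨b, hb⟩)) else v₀ (Sum.inr b))
            (Sum.inr b) = w (Sum.inr (e ⟨b, _⟩))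
          simp only [Sum.elim_inr, dif_pos hbF]
  rw [himg]
  exact Set.Definable.image_comp_sumInl_fin m (⟨χ, rfl⟩ : A.Definable L _)

end KMtools


namespace KMtools

open Finset

variable {L : FirstOrder.Language} {M : Type*} [L.Structure M] {A : Set M} {α β : Type*}

-- atoms of the algebra generated by S
def atom {γ : Type*} {n : ℕ} (S : Fin n → Set γ) (t : Finset (Fin n)) : Set γ :=
  ⋂ i ∈ (Finset.univ : Finset (Fin n)), (if i ∈ t then S i else (S i)ᶜ)

lemma mem_atom {γ : Type*} {n : ℕ} (S : Fin n → Set γ) (t : Finset (Fin n)) (g : γ) :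
    g ∈ atom S t ↔ ∀ i, (g ∈ S i ↔ i ∈ t) := by
  classical
  rw [atom, Set.mem_iInter₂]
  constructor
  · intro h i
    have := h i (mem_univ i)
    by_cases hit : i ∈ t
    · rw [if_pos hit] at this; exact ⟨fun _ => hit, fun _ => this⟩
    · rw [if_neg hit] at this
      exact ⟨fun hg => absurd hg this, fun ht => absurd ht hit⟩
  · intro h i _
    by_cases hit : i ∈ t
    · rw [if_pos hit]; exact (h i).mpr hit
    · rw [if_neg hit]; exact fun hg => hit ((h i).mp hg)

open scoped Classical in
noncomputable def patt {γ : Type*} {n : ℕ} (S : Fin n → Set γ) (g : γ) : Finset (Fin n) :=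
  Finset.univ.filter (fun i => g ∈ S i)

lemma mem_patt {γ : Type*} {n : ℕ} (S : Fin n → Set γ) (g : γ) (i : Fin n) :
    i ∈ patt S g ↔ g ∈ S i := by
  classical
  simp [patt]

lemma mem_patt_atom {γ : Type*} {n : ℕ} (S : Fin n → Set γ) (g : γ) :
    g ∈ atom S (patt S g) := by
  classical
  rw [mem_atom]
  intro i
  exact (mem_patt S g i).symm

lemma atom_eq_patt {γ : Type*} {n : ℕ} (S : Fin n → Set γ) {t : Finset (Fin n)} {g : γ}
    (h : g ∈ atom S t) : t = patt S g := by
  classical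
  rw [mem_atom] at h
  ext i
  rw [mem_patt]
  exact (h i).symm

lemma atom_disjoint {γ : Type*} {n : ℕ} (S : Fin n → Set γ) {t t' : Finset (Fin n)}
    (h : t ≠ t') : atom S t ∩ atom S t' = ∅ := by
  ext g
  simp only [Set.mem_inter_iff, Set.mem_empty_iff_false, iff_false, not_and]
  intro h1 h2
  exact h ((atom_eq_patt S h1).trans (atom_eq_patt S h2).symm)

lemma atom_definable {n : ℕ} {γ : Type*} {S : Fin n → Set (γ → M)}
    (hS : ∀ i, A.Definable L (S i)) (t : Finset (Fin n)) :
    A.Definable L (atom S t) := by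
  apply Set.definable_biInter_finset (fun i => ?_) Finset.univ
  by_cases hit : i ∈ t
  · rw [if_pos hit]; exact hS i
  · rw [if_neg hit]; exact (hS i).compl

lemma atom_union_univ {γ : Type*} {n : ℕ} (S : Fin n → Set γ) :
    (⋃ t ∈ (Finset.univ : Finset (Finset (Fin n))), atom S t) = Set.univ := by
  ext g
  simp only [Set.mem_iUnion, Set.mem_univ, iff_true]
  exact ⟨patt S g, mem_univ _, mem_patt_atom S g⟩

lemma set_eq_union_atoms {γ : Type*} {n : ℕ} (S : Fin n → Set γ) (i : Fin n) :
    S i = ⋃ t ∈ Finset.univ.filter (fun t : Finset (Fin n) => i ∈ t), atom S t := by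
  classical
  ext g
  simp only [Set.mem_iUnion, mem_filter, mem_univ, true_and]
  constructor
  · intro hg
    refine ⟨patt S g, (mem_patt S g i).mpr hg, mem_patt_atom S g⟩
  · rintro ⟨t, hit, hg⟩
    exact ((mem_atom S t g).mp hg i).mpr hit

-- finset algebra: expanding a sum over generators into a sum over atoms
lemma sum_decomp {n : ℕ} (a : Fin n → ℝ) (ρ : Finset (Fin n) → ℝ) :
    ∑ i, a i * (∑ t ∈ Finset.univ.filter (fun t : Finset (Fin n) => i ∈ t), ρ t)
      = ∑ t, (∑ i ∈ t, a i) * ρ t := by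
  classical
  have h1 : ∀ i, a i * (∑ t ∈ Finset.univ.filter (fun t : Finset (Fin n) => i ∈ t), ρ t)
      = ∑ t : Finset (Fin n), (if i ∈ t then a i * ρ t else 0) := by
    intro i
    rw [Finset.mul_sum, Finset.sum_filter]
  rw [Finset.sum_congr rfl (fun i _ => h1 i), Finset.sum_comm]
  apply Finset.sum_congr rfl
  intro t _
  rw [Finset.sum_mul]
  have hsw : ∑ i ∈ t, a i * ρ t = ∑ i ∈ Finset.univ, (if i ∈ t then a i * ρ t else 0) := by
    rw [Finset.sum_ite_mem, Finset.univ_inter]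
  rw [hsw]

-- pointwise version
lemma pointwise_decomp {γ : Type*} {n : ℕ} (S : Fin n → Set γ) (a : Fin n → ℝ) (g : γ) :
    ∑ i, Set.indicator (S i) (fun _ => a i) g = ∑ i ∈ patt S g, a i := by
  classical
  have h : ∀ i, Set.indicator (S i) (fun _ => a i) g = if i ∈ patt S g then a i else 0 := by
    intro i
    by_cases hmem : g ∈ S i
    · rw [Set.indicator_of_mem hmem, if_pos ((mem_patt S g i).mpr hmem)]
    · rw [Set.indicator_of_notMem hmem,
        if_neg (fun hc => hmem ((mem_patt S g i).mp hc))]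
  rw [Finset.sum_congr rfl (fun i _ => h i), Finset.sum_ite_mem, Finset.univ_inter]

theorem crux {n m : ℕ}
    (κ : KeislerMeasure L M A (α ⊕ β)) (mu : KeislerMeasure L M (Set.univ : Set M) α)
    (hmarg : ∀ X : Set (α → M), A.Definable L X → κ.toFun (cyl Sum.inl X) = mu.toFun X)
    (S : Fin n → Set (α ⊕ β → M)) (a : Fin n → ℝ) (hS : ∀ i, A.Definable L (S i))
    (X : Fin m → Set (α → M)) (b : Fin m → ℝ)
    (hX : ∀ j, (Set.univ : Set M).Definable L (X j))
    (hpos : ∀ g : α ⊕ β → M,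
      0 ≤ ∑ i, Set.indicator (S i) (fun _ => a i) g
        + ∑ j, Set.indicator (X j) (fun _ => b j) (fun x => g (Sum.inl x))) :
    0 ≤ ∑ i, a i * κ.toFun (S i) + ∑ j, b j * mu.toFun (X j) := by
  classical
  set R : Finset (Fin n) → Set (α ⊕ β → M) := atom S with hR
  set T : Finset (Fin m) → Set (α → M) := atom X with hT
  have hRdef : ∀ t, A.Definable L (R t) := atom_definable hS
  have hTdef : ∀ u, (Set.univ : Set M).Definable L (T u) := atom_definable hX
  set c : Finset (Fin n) → ℝ := fun t => ∑ i ∈ t, a i with hc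
  set e : Finset (Fin m) → ℝ := fun u => ∑ j ∈ u, b j with he
  -- measure of generators as sums over atoms
  have hκS : ∀ i, κ.toFun (S i)
      = ∑ t ∈ Finset.univ.filter (fun t : Finset (Fin n) => i ∈ t), κ.toFun (R t) := by
    intro i
    rw [show S i = ⋃ t ∈ Finset.univ.filter (fun t : Finset (Fin n) => i ∈ t), R t from
      set_eq_union_atoms S i]
    exact km_biUnion κ _ _ hRdef (fun t _ t' _ h => atom_disjoint S h)
  have hmuX : ∀ j, mu.toFun (X j)
      = ∑ u ∈ Finset.univ.filter (fun u : Finset (Fin m) => j ∈ u), mu.toFun (T u) := by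
    intro j
    rw [show X j = ⋃ u ∈ Finset.univ.filter (fun u : Finset (Fin m) => j ∈ u), T u from
      set_eq_union_atoms X j]
    exact km_biUnion mu _ _ hTdef (fun u _ u' _ h => atom_disjoint X h)
  have hLHS : ∑ i, a i * κ.toFun (S i) = ∑ t, c t * κ.toFun (R t) := by
    rw [Finset.sum_congr rfl (fun i _ => by rw [hκS i]), sum_decomp]
  have hRHS : ∑ j, b j * mu.toFun (X j) = ∑ u, e u * mu.toFun (T u) := by
    rw [Finset.sum_congr rfl (fun j _ => by rw [hmuX j]), sum_decomp]
  -- pointwise condition in atom form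
  have hpos' : ∀ g : α ⊕ β → M, 0 ≤ c (patt S g) + e (patt X (fun x => g (Sum.inl x))) := by
    intro g
    have := hpos g
    rwa [pointwise_decomp S a g, pointwise_decomp X b (fun x => g (Sum.inl x))] at this
  -- mass equalities
  have hmassκ : ∑ t, κ.toFun (R t) = 1 := by
    have := km_biUnion κ (Finset.univ : Finset (Finset (Fin n))) R hRdef
      (fun t _ t' _ h => atom_disjoint S h)
    rw [atom_union_univ S, κ.measure_univ] at this
    exact this.symm
  have hmassμ : ∑ u, mu.toFun (T u) = 1 := by
    have := km_biUnion mu (Finset.univ : Finset (Finset (Fin m))) T hTdef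
      (fun u _ u' _ h => atom_disjoint X h)
    rw [atom_union_univ X, mu.measure_univ] at this
    exact this.symm
  -- the domination condition
  have hdom : ∀ r : ℝ,
      ∑ u ∈ Finset.univ.filter (fun u : Finset (Fin m) => r ≤ - e u), mu.toFun (T u) ≤
      ∑ t ∈ Finset.univ.filter (fun t : Finset (Fin n) => r ≤ c t), κ.toFun (R t) := by
    intro r
    set Aset : Set (α → M) :=
      ⋃ u ∈ Finset.univ.filter (fun u : Finset (Fin m) => r ≤ - e u), T u with hAset
    set Bset : Set (α ⊕ β → M) :=
      ⋃ t ∈ Finset.univ.filter (fun t : Finset (Fin n) => r ≤ c t), R t with hBset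
    have hAdef : (Set.univ : Set M).Definable L Aset :=
      Set.definable_biUnion_finset (fun u => hTdef u) _
    have hBdef : A.Definable L Bset :=
      Set.definable_biUnion_finset (fun t => hRdef t) _
    set W : Set (α → M) := ((fun g : α ⊕ β → M => g ∘ Sum.inl) '' Bsetᶜ)ᶜ with hW
    have hWdef : A.Definable L W := (definable_image_proj hBdef.compl).compl
    have hA_eq : ∑ u ∈ Finset.univ.filter (fun u : Finset (Fin m) => r ≤ - e u), mu.toFun (T u)
        = mu.toFun Aset :=
      (km_biUnion mu _ _ hTdef (fun u _ u' _ h => atom_disjoint X h)).symm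
    have hB_eq : ∑ t ∈ Finset.univ.filter (fun t : Finset (Fin n) => r ≤ c t), κ.toFun (R t)
        = κ.toFun Bset :=
      (km_biUnion κ _ _ hRdef (fun t _ t' _ h => atom_disjoint S h)).symm
    have hAW : Aset ⊆ W := by
      intro f hf
      rw [hAset] at hf
      rw [Set.mem_iUnion₂] at hf
      obtain ⟨u, hu, hfT⟩ := hf
      rw [mem_filter] at hu
      intro hmem
      obtain ⟨g, hgB, hgf⟩ := hmem
      -- g ∘ Sum.inl = f, g ∉ Bset
      have hfpat : u = patt X f := atom_eq_patt X hfT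
      have hgf' : (fun x => g (Sum.inl x)) = f := hgf
      have h1 := hpos' g
      rw [hgf'] at h1
      rw [← hfpat] at h1
      have hcge : r ≤ c (patt S g) := by
        have := hu.2
        linarith
      apply hgB
      rw [hBset, Set.mem_iUnion₂]
      exact ⟨patt S g, by rw [mem_filter]; exact ⟨mem_univ _, hcge⟩, mem_patt_atom S g⟩
    have hcylWB : cyl Sum.inl W ⊆ Bset := by
      intro g hg
      by_contra hgB
      exact hg ⟨g, hgB, rfl⟩
    calc ∑ u ∈ Finset.univ.filter (fun u : Finset (Fin m) => r ≤ - e u), mu.toFun (T u)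
        = mu.toFun Aset := hA_eq
      _ ≤ mu.toFun W := km_mono mu hAdef (hWdef.mono (Set.subset_univ A)) hAW
      _ = κ.toFun (cyl Sum.inl W) := (hmarg W hWdef).symm
      _ ≤ κ.toFun Bset := km_mono κ (cyl_definable Sum.inl hWdef) hBdef hcylWB
      _ = ∑ t ∈ Finset.univ.filter (fun t : Finset (Fin n) => r ≤ c t), κ.toFun (R t) := hB_eq.symm
  have hdominance := dominance (fun t => κ.toFun (R t)) (fun u => mu.toFun (T u))
    c (fun u => - e u)
    (fun t => κ.nonneg' _ (hRdef t)) (fun u => mu.nonneg' _ (hTdef u))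
    (by rw [hmassκ, hmassμ]) hdom
  rw [hLHS, hRHS]
  have : ∑ u, (- e u) * mu.toFun (T u) = - ∑ u, e u * mu.toFun (T u) := by
    rw [← Finset.sum_neg_distrib]
    exact Finset.sum_congr rfl (fun u _ => by ring)
  rw [this] at hdominance
  linarith

end KMtools


namespace KMtools

variable {L : FirstOrder.Language} {M : Type*} [L.Structure M] {A : Set M} {α β : Type*}

lemma sum_map_get {γ : Type*} (l : List γ) (h : γ → ℝ) :
    (l.map h).sum = ∑ i : Fin l.length, h (l.get i) := by
  induction l with
  | nil => simp
  | cons a l ih =>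
    rw [List.map_cons, List.sum_cons, ih]
    show _ = ∑ i : Fin (l.length + 1), h ((a :: l).get i)
    rw [Fin.sum_univ_succ]
    rfl

noncomputable def fnOf {γ : Type*} (l : List (ℝ × Set γ)) (g : γ) : ℝ :=
  (l.map (fun p => Set.indicator p.2 (fun _ => p.1) g)).sum

noncomputable def valOf {γ : Type*} (κf : Set γ → ℝ) (l : List (ℝ × Set γ)) : ℝ :=
  (l.map (fun p => p.1 * κf p.2)).sum

lemma fnOf_nil {γ : Type*} (g : γ) : fnOf ([] : List (ℝ × Set γ)) g = 0 := rfl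

lemma fnOf_cons {γ : Type*} (p : ℝ × Set γ) (l : List (ℝ × Set γ)) (g : γ) :
    fnOf (p :: l) g = Set.indicator p.2 (fun _ => p.1) g + fnOf l g := by
  rw [fnOf, fnOf, List.map_cons, List.sum_cons]

lemma valOf_nil {γ : Type*} (κf : Set γ → ℝ) : valOf κf ([] : List (ℝ × Set γ)) = 0 := rfl

lemma valOf_cons {γ : Type*} (κf : Set γ → ℝ) (p : ℝ × Set γ) (l : List (ℝ × Set γ)) :
    valOf κf (p :: l) = p.1 * κf p.2 + valOf κf l := by
  rw [valOf, valOf, List.map_cons, List.sum_cons]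

lemma fnOf_append {γ : Type*} (l l' : List (ℝ × Set γ)) (g : γ) :
    fnOf (l ++ l') g = fnOf l g + fnOf l' g := by
  rw [fnOf, fnOf, fnOf, List.map_append, List.sum_append]

lemma valOf_append {γ : Type*} (κf : Set γ → ℝ) (l l' : List (ℝ × Set γ)) :
    valOf κf (l ++ l') = valOf κf l + valOf κf l' := by
  rw [valOf, valOf, valOf, List.map_append, List.sum_append]

lemma fnOf_scale {γ : Type*} (c : ℝ) (l : List (ℝ × Set γ)) (g : γ) :
    fnOf (l.map (fun p => (c * p.1, p.2))) g = c * fnOf l g := by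
  induction l with
  | nil => rw [List.map_nil, fnOf_nil, mul_zero]
  | cons p l ih =>
    rw [List.map_cons, fnOf_cons, fnOf_cons, ih]
    by_cases h : g ∈ p.2
    · rw [Set.indicator_of_mem h, Set.indicator_of_mem h]; ring
    · rw [Set.indicator_of_notMem h, Set.indicator_of_notMem h]; ring

lemma valOf_scale {γ : Type*} (κf : Set γ → ℝ) (c : ℝ) (l : List (ℝ × Set γ)) :
    valOf κf (l.map (fun p => (c * p.1, p.2))) = c * valOf κf l := by
  induction l with
  | nil => rw [List.map_nil, valOf_nil, mul_zero]
  | cons p l ih => rw [List.map_cons, valOf_cons, valOf_cons, ih]; ring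

/-- crux in list form -/
lemma crux_list (κ : KeislerMeasure L M A (α ⊕ β)) (mu : KeislerMeasure L M (Set.univ : Set M) α)
    (hmarg : ∀ X : Set (α → M), A.Definable L X → κ.toFun (cyl Sum.inl X) = mu.toFun X)
    (l₁ : List (ℝ × Set (α ⊕ β → M))) (l₂ : List (ℝ × Set (α → M)))
    (h₁ : ∀ p ∈ l₁, A.Definable L p.2) (h₂ : ∀ p ∈ l₂, (Set.univ : Set M).Definable L p.2)
    (hpos : ∀ g : α ⊕ β → M, 0 ≤ fnOf l₁ g + fnOf l₂ (fun x => g (Sum.inl x))) :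
    0 ≤ valOf κ.toFun l₁ + valOf mu.toFun l₂ := by
  have e1 : valOf κ.toFun l₁ = ∑ i : Fin l₁.length, (l₁.get i).1 * κ.toFun ((l₁.get i).2) :=
    sum_map_get l₁ _
  have e2 : valOf mu.toFun l₂ = ∑ j : Fin l₂.length, (l₂.get j).1 * mu.toFun ((l₂.get j).2) :=
    sum_map_get l₂ _
  rw [e1, e2]
  apply crux κ mu hmarg (fun i => (l₁.get i).2) (fun i => (l₁.get i).1)
    (fun i => h₁ _ (List.get_mem l₁ i)) (fun j => (l₂.get j).2) (fun j => (l₂.get j).1)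
    (fun j => h₂ _ (List.get_mem l₂ j))
  intro g
  have f1 : fnOf l₁ g = ∑ i : Fin l₁.length,
      Set.indicator ((l₁.get i).2) (fun _ => (l₁.get i).1) g := sum_map_get l₁ _
  have f2 : fnOf l₂ (fun x => g (Sum.inl x)) = ∑ j : Fin l₂.length,
      Set.indicator ((l₂.get j).2) (fun _ => (l₂.get j).1) (fun x => g (Sum.inl x)) :=
    sum_map_get l₂ _
  rw [← f1, ← f2]
  exact hpos g

/-- the submodule of bounded functions -/
def bddFns (γ : Type*) : Submodule ℝ (γ → ℝ) where
  carrier := {f | ∃ C : ℝ, ∀ g, |f g| ≤ C}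
  add_mem' := by
    rintro f f' ⟨C, hC⟩ ⟨C', hC'⟩
    exact ⟨C + C', fun g => (abs_add_le _ _).trans (add_le_add (hC g) (hC' g))⟩
  zero_mem' := ⟨0, fun g => by simp⟩
  smul_mem' := by
    rintro c f ⟨C, hC⟩
    exact ⟨|c| * C, fun g => by
      rw [Pi.smul_apply, smul_eq_mul, abs_mul]
      exact mul_le_mul_of_nonneg_left (hC g) (abs_nonneg c)⟩

/-- set of upper values -/
def vals (κ : KeislerMeasure L M A (α ⊕ β)) (mu : KeislerMeasure L M (Set.univ : Set M) α)
    (f : (α ⊕ β → M) → ℝ) : Set ℝ :=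
  { r | ∃ l₁ : List (ℝ × Set (α ⊕ β → M)), ∃ l₂ : List (ℝ × Set (α → M)),
      (∀ p ∈ l₁, A.Definable L p.2) ∧ (∀ p ∈ l₂, (Set.univ : Set M).Definable L p.2) ∧
      (∀ g, f g ≤ fnOf l₁ g + fnOf l₂ (fun x => g (Sum.inl x))) ∧
      r = valOf κ.toFun l₁ + valOf mu.toFun l₂ }

section Amalg

variable (κ : KeislerMeasure L M A (α ⊕ β)) (mu : KeislerMeasure L M (Set.univ : Set M) α)

lemma vals_nonempty (f : ↥(bddFns (α ⊕ β → M))) : (vals κ mu f.1).Nonempty := by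
  obtain ⟨C, hC⟩ := f.2
  refine ⟨max C 0, [(max C 0, Set.univ)], [], fun p hp => ?_, by simp, fun g => ?_, ?_⟩
  · rcases List.mem_singleton.mp hp with rfl
    exact Set.definable_univ
  · have h1 : f.1 g ≤ C := (abs_le.mp (hC g)).2
    rw [fnOf_cons, fnOf_nil, fnOf_nil, Set.indicator_of_mem (Set.mem_univ g)]
    have := le_max_left C 0
    linarith
  · rw [valOf_cons, valOf_nil, valOf_nil, κ.measure_univ]; ring

lemma vals_lb
    (hmarg : ∀ X : Set (α → M), A.Definable L X → κ.toFun (cyl Sum.inl X) = mu.toFun X)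
    (f : ↥(bddFns (α ⊕ β → M))) (C : ℝ) (hC : ∀ g, -C ≤ f.1 g) :
    ∀ r ∈ vals κ mu f.1, -C ≤ r := by
  rintro r ⟨l₁, l₂, h₁, h₂, hdom, rfl⟩
  have hpos : ∀ g : α ⊕ β → M,
      0 ≤ fnOf ((C, Set.univ) :: l₁) g + fnOf l₂ (fun x => g (Sum.inl x)) := by
    intro g
    rw [fnOf_cons, Set.indicator_of_mem (Set.mem_univ g)]
    have := hdom g
    have := hC g
    linarith
  have := crux_list κ mu hmarg ((C, Set.univ) :: l₁) l₂
    (by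
      rintro p hp
      rcases List.mem_cons.mp hp with rfl | hp
      · exact Set.definable_univ
      · exact h₁ p hp) h₂ hpos
  rw [valOf_cons, κ.measure_univ] at this
  linarith

lemma vals_bddBelow
    (hmarg : ∀ X : Set (α → M), A.Definable L X → κ.toFun (cyl Sum.inl X) = mu.toFun X)
    (f : ↥(bddFns (α ⊕ β → M))) : BddBelow (vals κ mu f.1) := by
  obtain ⟨C, hC⟩ := f.2
  exact ⟨-C, fun r hr => vals_lb κ mu hmarg f C (fun g => neg_le_of_abs_le (hC g)) r hr⟩

noncomputable def NN : ↥(bddFns (α ⊕ β → M)) → ℝ := fun f => sInf (vals κ mu f.1)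

lemma NN_le
    (hmarg : ∀ X : Set (α → M), A.Definable L X → κ.toFun (cyl Sum.inl X) = mu.toFun X)
    (f : ↥(bddFns (α ⊕ β → M))) {r : ℝ} (hr : r ∈ vals κ mu f.1) :
    NN κ mu f ≤ r := csInf_le (vals_bddBelow κ mu hmarg f) hr

lemma le_NN (f : ↥(bddFns (α ⊕ β → M))) {b : ℝ} (hb : ∀ r ∈ vals κ mu f.1, b ≤ r) :
    b ≤ NN κ mu f := le_csInf (vals_nonempty κ mu f) hb

lemma vals_add {x y : ↥(bddFns (α ⊕ β → M))} {r s : ℝ}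
    (hr : r ∈ vals κ mu x.1) (hs : s ∈ vals κ mu y.1) : r + s ∈ vals κ mu (x + y).1 := by
  obtain ⟨l₁, l₂, h₁, h₂, hd, rfl⟩ := hr
  obtain ⟨l₁', l₂', h₁', h₂', hd', rfl⟩ := hs
  refine ⟨l₁ ++ l₁', l₂ ++ l₂', ?_, ?_, fun g => ?_, ?_⟩
  · intro p hp; rcases List.mem_append.mp hp with hp | hp
    · exact h₁ p hp
    · exact h₁' p hp
  · intro p hp; rcases List.mem_append.mp hp with hp | hp
    · exact h₂ p hp
    · exact h₂' p hp
  · have hxy : (x + y).1 g = x.1 g + y.1 g := rfl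
    rw [hxy, fnOf_append, fnOf_append]
    have := hd g; have := hd' g
    linarith
  · rw [valOf_append, valOf_append]; ring

lemma NN_add
    (hmarg : ∀ X : Set (α → M), A.Definable L X → κ.toFun (cyl Sum.inl X) = mu.toFun X)
    (x y : ↥(bddFns (α ⊕ β → M))) :
    NN κ mu (x + y) ≤ NN κ mu x + NN κ mu y := by
  have h1 : ∀ s ∈ vals κ mu y.1, NN κ mu (x + y) - s ≤ NN κ mu x := by
    intro s hs
    apply le_NN κ mu
    intro r hr
    have := NN_le κ mu hmarg (x + y) (vals_add κ mu hr hs)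
    linarith
  have h2 : NN κ mu (x + y) - NN κ mu x ≤ NN κ mu y := by
    apply le_NN κ mu
    intro s hs
    have := h1 s hs
    linarith
  linarith

lemma vals_smul {x : ↥(bddFns (α ⊕ β → M))} {c : ℝ} (hc : 0 < c) {r : ℝ}
    (hr : r ∈ vals κ mu x.1) : c * r ∈ vals κ mu (c • x).1 := by
  obtain ⟨l₁, l₂, h₁, h₂, hd, rfl⟩ := hr
  refine ⟨l₁.map (fun p => (c * p.1, p.2)), l₂.map (fun p => (c * p.1, p.2)), ?_, ?_,
    fun g => ?_, ?_⟩
  · intro p hp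
    obtain ⟨q, hq, rfl⟩ := List.mem_map.mp hp
    exact h₁ q hq
  · intro p hp
    obtain ⟨q, hq, rfl⟩ := List.mem_map.mp hp
    exact h₂ q hq
  · have hcx : (c • x).1 g = c * x.1 g := rfl
    rw [hcx, fnOf_scale, fnOf_scale]
    have := hd g
    nlinarith
  · rw [valOf_scale, valOf_scale]; ring

lemma NN_smul_le
    (hmarg : ∀ X : Set (α → M), A.Definable L X → κ.toFun (cyl Sum.inl X) = mu.toFun X)
    (c : ℝ) (hc : 0 < c) (x : ↥(bddFns (α ⊕ β → M))) :
    NN κ mu (c • x) ≤ c * NN κ mu x := by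
  have h : NN κ mu (c • x) / c ≤ NN κ mu x := by
    apply le_NN κ mu
    intro r hr
    rw [div_le_iff₀ hc]
    have := NN_le κ mu hmarg (c • x) (vals_smul κ mu hc hr)
    linarith [this]
  calc NN κ mu (c • x) = (NN κ mu (c • x) / c) * c := by field_simp
    _ ≤ NN κ mu x * c := mul_le_mul_of_nonneg_right h hc.le
    _ = c * NN κ mu x := mul_comm _ _

lemma NN_smul
    (hmarg : ∀ X : Set (α → M), A.Definable L X → κ.toFun (cyl Sum.inl X) = mu.toFun X)
    (c : ℝ) (hc : 0 < c) (x : ↥(bddFns (α ⊕ β → M))) :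
    NN κ mu (c • x) = c * NN κ mu x := by
  refine le_antisymm (NN_smul_le κ mu hmarg c hc x) ?_
  have h := NN_smul_le κ mu hmarg c⁻¹ (inv_pos.mpr hc) (c • x)
  rw [smul_smul, inv_mul_cancel₀ (ne_of_gt hc), one_smul] at h
  calc c * NN κ mu x ≤ c * (c⁻¹ * NN κ mu (c • x)) := mul_le_mul_of_nonneg_left h hc.le
    _ = NN κ mu (c • x) := by field_simp

lemma NN_zero_nonneg
    (hmarg : ∀ X : Set (α → M), A.Definable L X → κ.toFun (cyl Sum.inl X) = mu.toFun X) :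
    0 ≤ NN κ mu 0 := by
  apply le_NN κ mu
  rintro r ⟨l₁, l₂, h₁, h₂, hd, rfl⟩
  apply crux_list κ mu hmarg l₁ l₂ h₁ h₂
  intro g
  have := hd g
  have hz : (0 : ↥(bddFns (α ⊕ β → M))).1 g = 0 := rfl
  rw [hz] at this
  linarith

end Amalg

/-- the indicator function as an element of the bounded functions -/
noncomputable def indF {γ : Type*} (S : Set γ) : ↥(bddFns γ) :=
  ⟨Set.indicator S 1, 1, fun g => by
    by_cases h : g ∈ S
    · rw [Set.indicator_of_mem h]; simp
    · rw [Set.indicator_of_notMem h]; simp⟩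

lemma indF_of_mem {γ : Type*} {S : Set γ} {g : γ} (h : g ∈ S) : (indF S).1 g = 1 :=
  Set.indicator_of_mem h 1

lemma indF_of_not_mem {γ : Type*} {S : Set γ} {g : γ} (h : g ∉ S) : (indF S).1 g = 0 :=
  Set.indicator_of_notMem h 1

section Amalg2

variable (κ : KeislerMeasure L M A (α ⊕ β)) (mu : KeislerMeasure L M (Set.univ : Set M) α)

theorem amalg
    (hmarg : ∀ X : Set (α → M), A.Definable L X → κ.toFun (cyl Sum.inl X) = mu.toFun X) :
    ∃ om : KeislerMeasure L M (Set.univ : Set M) (α ⊕ β),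
    (∀ s : Set (α ⊕ β → M), A.Definable L s → om.toFun s = κ.toFun s) ∧
    (∀ X : Set (α → M), (Set.univ : Set M).Definable L X →
      om.toFun (cyl Sum.inl X) = mu.toFun X) := by
  classical
  obtain ⟨G, hG0, hG⟩ := exists_extension_of_le_sublinear
    (⟨⊥, 0⟩ : ↥(bddFns (α ⊕ β → M)) →ₗ.[ℝ] ℝ) (NN κ mu)
    (fun c hc x => NN_smul κ mu hmarg c hc x)
    (fun x y => NN_add κ mu hmarg x y)
    (by
      rintro ⟨x, hx⟩
      rw [Submodule.mem_bot] at hx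
      subst hx
      simpa using NN_zero_nonneg κ mu hmarg)
  have hGle : ∀ x : ↥(bddFns (α ⊕ β → M)), ∀ r ∈ vals κ mu x.1, G x ≤ r := by
    intro x r hr
    exact (hG x).trans (NN_le κ mu hmarg x hr)
  -- `G` of the indicator of an `A`-definable set
  have hGκ : ∀ s : Set (α ⊕ β → M), A.Definable L s → G (indF s) = κ.toFun s := by
    intro s hs
    have hup : G (indF s) ≤ κ.toFun s := by
      apply hGle
      refine ⟨[(1, s)], [], fun p hp => ?_, by simp, fun g => ?_, ?_⟩
      · rcases List.mem_singleton.mp hp with rfl; exact hs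
      · rw [fnOf_cons, fnOf_nil, fnOf_nil]
        by_cases h : g ∈ s
        · rw [indF_of_mem h, Set.indicator_of_mem h]; norm_num
        · rw [indF_of_not_mem h, Set.indicator_of_notMem h]; norm_num
      · rw [valOf_cons, valOf_nil, valOf_nil]; ring
    have hlo : G (indF s) ≥ κ.toFun s := by
      have hneg : G (-(indF s)) ≤ -κ.toFun s := by
        apply hGle
        refine ⟨[(1, sᶜ), (-1, Set.univ)], [], fun p hp => ?_, by simp, fun g => ?_, ?_⟩
        · rcases List.mem_cons.mp hp with rfl | hp
          · exact hs.compl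
          · rcases List.mem_singleton.mp hp with rfl
            exact Set.definable_univ
        · have hng : (-(indF s)).1 g = -((indF s).1 g) := rfl
          rw [hng, fnOf_cons, fnOf_cons, fnOf_nil, fnOf_nil,
            Set.indicator_of_mem (Set.mem_univ g)]
          by_cases h : g ∈ s
          · rw [indF_of_mem h, Set.indicator_of_notMem (show g ∉ sᶜ by simpa using h)]
            norm_num
          · rw [indF_of_not_mem h, Set.indicator_of_mem (show g ∈ sᶜ by simpa using h)]
            norm_num
        · rw [valOf_cons, valOf_cons, valOf_nil, valOf_nil, κ.compl' s hs, κ.measure_univ]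
          ring
      rw [map_neg] at hneg
      linarith
    linarith
  -- `G` of the indicator of a cylinder over a globally definable set
  have hGmu : ∀ X : Set (α → M), (Set.univ : Set M).Definable L X →
      G (indF (cyl Sum.inl X)) = mu.toFun X := by
    intro X hX
    have hup : G (indF (cyl Sum.inl X)) ≤ mu.toFun X := by
      apply hGle
      refine ⟨[], [(1, X)], by simp, fun p hp => ?_, fun g => ?_, ?_⟩
      · rcases List.mem_singleton.mp hp with rfl; exact hX
      · rw [fnOf_nil, fnOf_cons, fnOf_nil, zero_add]
        by_cases h : g ∈ cyl Sum.inl X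
        · rw [indF_of_mem h,
            Set.indicator_of_mem (show (fun x => g (Sum.inl x)) ∈ X from h)]
          norm_num
        · rw [indF_of_not_mem h,
            Set.indicator_of_notMem (show ¬(fun x => g (Sum.inl x)) ∈ X from h)]
          norm_num
      · rw [valOf_nil, valOf_cons, valOf_nil]; ring
    have hlo : G (indF (cyl Sum.inl X)) ≥ mu.toFun X := by
      have hneg : G (-(indF (cyl Sum.inl X))) ≤ -mu.toFun X := by
        apply hGle
        refine ⟨[], [(1, Xᶜ), (-1, Set.univ)], by simp, fun p hp => ?_, fun g => ?_, ?_⟩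
        · rcases List.mem_cons.mp hp with rfl | hp
          · exact hX.compl
          · rcases List.mem_singleton.mp hp with rfl
            exact Set.definable_univ
        · have hng : (-(indF (cyl Sum.inl X))).1 g = -((indF (cyl Sum.inl X)).1 g) := rfl
          rw [hng, fnOf_nil, fnOf_cons, fnOf_cons, fnOf_nil, zero_add,
            Set.indicator_of_mem (Set.mem_univ (fun x => g (Sum.inl x)))]
          by_cases h : g ∈ cyl Sum.inl X
          · rw [indF_of_mem h,
              Set.indicator_of_notMem (show ¬(fun x => g (Sum.inl x)) ∈ Xᶜ from fun hc => hc h)]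
            norm_num
          · rw [indF_of_not_mem h,
              Set.indicator_of_mem (show (fun x => g (Sum.inl x)) ∈ Xᶜ from h)]
            norm_num
        · rw [valOf_nil, valOf_cons, valOf_cons, valOf_nil, mu.compl' X hX, mu.measure_univ]
          ring
      rw [map_neg] at hneg
      linarith
    linarith
  -- nonnegativity on arbitrary indicators
  have hGnn : ∀ s : Set (α ⊕ β → M), 0 ≤ G (indF s) := by
    intro s
    have hneg : G (-(indF s)) ≤ 0 := by
      apply hGle
      refine ⟨[], [], by simp, by simp, fun g => ?_, by rw [valOf_nil, valOf_nil]; ring⟩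
      have hng : (-(indF s)).1 g = -((indF s).1 g) := rfl
      rw [hng, fnOf_nil, fnOf_nil, add_zero]
      by_cases h : g ∈ s
      · rw [indF_of_mem h]; norm_num
      · rw [indF_of_not_mem h]; norm_num
    rw [map_neg] at hneg
    linarith
  have hGuniv : G (indF Set.univ) = 1 := by
    rw [hGκ Set.univ Set.definable_univ, κ.measure_univ]
  -- indicator identities
  have hind_compl : ∀ s : Set (α ⊕ β → M), indF sᶜ = indF Set.univ - indF s := by
    intro s
    apply Subtype.ext
    funext g
    have h1 : (indF Set.univ - indF s).1 g = (indF Set.univ).1 g - (indF s).1 g := rfl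
    rw [h1, indF_of_mem (Set.mem_univ g)]
    by_cases h : g ∈ s
    · rw [indF_of_mem h, indF_of_not_mem (show g ∉ sᶜ by simpa using h)]; norm_num
    · rw [indF_of_not_mem h, indF_of_mem (show g ∈ sᶜ by simpa using h)]; norm_num
  have hind_ui : ∀ s t : Set (α ⊕ β → M),
      indF (s ∪ t) = indF s + indF t - indF (s ∩ t) := by
    intro s t
    apply Subtype.ext
    funext g
    have h1 : (indF s + indF t - indF (s ∩ t)).1 g
        = (indF s).1 g + (indF t).1 g - (indF (s ∩ t)).1 g := rfl
    rw [h1]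
    by_cases hs : g ∈ s <;> by_cases ht : g ∈ t
    · rw [indF_of_mem (Set.mem_union_left t hs), indF_of_mem hs, indF_of_mem ht,
        indF_of_mem (show g ∈ s ∩ t from ⟨hs, ht⟩)]
      norm_num
    · rw [indF_of_mem (Set.mem_union_left t hs), indF_of_mem hs, indF_of_not_mem ht,
        indF_of_not_mem (show g ∉ s ∩ t from fun hc => ht hc.2)]
      norm_num
    · rw [indF_of_mem (Set.mem_union_right s ht), indF_of_not_mem hs, indF_of_mem ht,
        indF_of_not_mem (show g ∉ s ∩ t from fun hc => hs hc.1)]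
      norm_num
    · rw [indF_of_not_mem (show g ∉ s ∪ t from fun hc => hc.elim hs ht), indF_of_not_mem hs,
        indF_of_not_mem ht, indF_of_not_mem (show g ∉ s ∩ t from fun hc => hs hc.1)]
      norm_num
  refine ⟨⟨fun S => G (indF S), hGuniv, fun s _ => hGnn s, fun s _ => ?_, fun s t _ _ => ?_⟩,
    fun s hs => hGκ s hs, fun X hX => hGmu X hX⟩
  · show G (indF sᶜ) = 1 - G (indF s)
    rw [hind_compl s, map_sub, hGuniv]
  · show G (indF (s ∪ t)) = G (indF s) + G (indF t) - G (indF (s ∩ t))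
    rw [hind_ui s t, map_sub, map_add]

end Amalg2

end KMtools


namespace KMtools

variable {L : FirstOrder.Language} {M : Type*} [L.Structure M] {A : Set M} {γ : Type*}

lemma km_split (κ : KeislerMeasure L M A γ) {s C : Set (γ → M)}
    (hs : A.Definable L s) (hC : A.Definable L C) :
    κ.toFun (s ∩ C) + κ.toFun (s ∩ Cᶜ) = κ.toFun s := by
  have hu : (s ∩ C) ∪ (s ∩ Cᶜ) = s := by
    ext g
    by_cases h : g ∈ C <;> simp [h]
  have hdisj : (s ∩ C) ∩ (s ∩ Cᶜ) = ∅ := by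
    ext g
    by_cases h : g ∈ C <;> simp [h]
  have := km_disj_union κ (hs.inter hC) (hs.inter hC.compl) hdisj
  rw [hu] at this
  linarith

/-- the localization of a Keisler measure at a definable set of positive measure -/
noncomputable def localize (κ : KeislerMeasure L M A γ) (C : Set (γ → M))
    (hC : A.Definable L C) (h0 : 0 < κ.toFun C) : KeislerMeasure L M A γ where
  toFun := fun S => κ.toFun (S ∩ C) / κ.toFun C
  measure_univ := by
    show κ.toFun (Set.univ ∩ C) / κ.toFun C = 1
    rw [Set.univ_inter]; field_simp
  nonneg' := fun s hs => div_nonneg (κ.nonneg' _ (hs.inter hC)) h0.le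
  compl' := fun s hs => by
    have hsplit : κ.toFun (C ∩ s) + κ.toFun (C ∩ sᶜ) = κ.toFun C :=
      km_split κ hC hs
    rw [Set.inter_comm C s, Set.inter_comm C sᶜ] at hsplit
    rw [eq_sub_iff_add_eq, ← add_div, div_eq_one_iff_eq (ne_of_gt h0)]
    linarith
  union_inter' := fun s t hs ht => by
    have h1 : (s ∪ t) ∩ C = (s ∩ C) ∪ (t ∩ C) := Set.union_inter_distrib_right s t C
    have h2 : (s ∩ C) ∩ (t ∩ C) = (s ∩ t) ∩ C := by
      ext g; constructor
      · rintro ⟨⟨h1', h2'⟩, h3', _⟩; exact ⟨⟨h1', h3'⟩, h2'⟩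
      · rintro ⟨⟨h1', h2'⟩, h3'⟩; exact ⟨⟨h1', h3'⟩, ⟨h2', h3'⟩⟩
    show κ.toFun ((s ∪ t) ∩ C) / κ.toFun C = κ.toFun (s ∩ C) / κ.toFun C
      + κ.toFun (t ∩ C) / κ.toFun C - κ.toFun ((s ∩ t) ∩ C) / κ.toFun C
    rw [h1, κ.union_inter' _ _ (hs.inter hC) (ht.inter hC), h2, sub_div, add_div]

lemma localize_apply (κ : KeislerMeasure L M A γ) (C : Set (γ → M))
    (hC : A.Definable L C) (h0 : 0 < κ.toFun C) (S : Set (γ → M)) :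
    (localize κ C hC h0).toFun S = κ.toFun (S ∩ C) / κ.toFun C := rfl

end KMtools


/-- The product `X × Y` of a set in variables `α` and a set in variables `β`,
viewed inside the variables `α ⊕ β`. -/
def prodSet {M : Type*} {α β : Type*} (X : Set (α → M)) (Y : Set (β → M)) :
    Set (α ⊕ β → M) :=
  cyl Sum.inl X ∩ cyl Sum.inr Y

/-- The extension space `E(λ, μ)`: all global Keisler measures `ω` in the
variables `α ⊕ β` whose restriction to `A`-definable sets is `λ` and whose
marginal `π_α(ω)` is `μ`. -/
def extSpace (L : FirstOrder.Language) {M : Type*} [L.Structure M] (A : Set M)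
    {α β : Type*} (lam : KeislerMeasure L M A (α ⊕ β))
    (mu : KeislerMeasure L M (Set.univ : Set M) α) :
    Set (KeislerMeasure L M (Set.univ : Set M) (α ⊕ β)) :=
  {om | (∀ s : Set (α ⊕ β → M), A.Definable L s → om.toFun s = lam.toFun s) ∧
    (∀ X : Set (α → M), (Set.univ : Set M).Definable L X →
      om.toFun (cyl Sum.inl X) = mu.toFun X)}

/-- `μ` extension dominates `ν` over `A` (written `μ ≥_{E,A} ν`): there is
`λ ∈ 𝔐_{αβ}(A)` with `π_α(λ) = μ|_A` such that `π_β(ω) = ν` for every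
`ω ∈ E(λ, μ)`. -/
def ExtDomOver (L : FirstOrder.Language) {M : Type*} [L.Structure M] (A : Set M)
    {α β : Type*} (mu : KeislerMeasure L M (Set.univ : Set M) α)
    (nu : KeislerMeasure L M (Set.univ : Set M) β) : Prop :=
  ∃ lam : KeislerMeasure L M A (α ⊕ β),
    (∀ X : Set (α → M), A.Definable L X →
      lam.toFun (cyl Sum.inl X) = mu.toFun X) ∧
    ∀ om ∈ extSpace L A lam mu, ∀ Y : Set (β → M),
      (Set.univ : Set M).Definable L Y → om.toFun (cyl Sum.inr Y) = nu.toFun Y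

/-- Extension domination witnessed by a separated amalgam is closed under
localizations: if `D ∈ L_β(A)` with `0 < ν(D) < 1`, `μ ≥_{E,A} ν` is witnessed by a
separated amalgam `λ ∈ 𝔐_{αβ}(A)`, and `nuD` is the localization `ν_[D]`
(`nuD(Y) = ν(D ∩ Y)/ν(D)` for every definable `Y`), then `μ ≥_{E,A} ν_[D]`. -/
theorem extDom_localization {L : FirstOrder.Language} {M : Type*} [L.Structure M]
    (A : Set M) {α β : Type*}
    (mu : KeislerMeasure L M (Set.univ : Set M) α)
    (nu : KeislerMeasure L M (Set.univ : Set M) β)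
    (D : Set (β → M)) (hD : A.Definable L D)
    (hD0 : 0 < nu.toFun D) (hD1 : nu.toFun D < 1)
    (lam : KeislerMeasure L M A (α ⊕ β))
    (hamal : ∀ (X : Set (α → M)) (Y : Set (β → M)),
      A.Definable L X → A.Definable L Y →
      lam.toFun (prodSet X Y) = lam.toFun (cyl Sum.inl X) * lam.toFun (cyl Sum.inr Y))
    (hmarg : ∀ X : Set (α → M), A.Definable L X →
      lam.toFun (cyl Sum.inl X) = mu.toFun X)
    (hwit : ∀ om ∈ extSpace L A lam mu, ∀ Y : Set (β → M),
      (Set.univ : Set M).Definable L Y → om.toFun (cyl Sum.inr Y) = nu.toFun Y)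
    (nuD : KeislerMeasure L M (Set.univ : Set M) β)
    (hnuD : ∀ Y : Set (β → M), (Set.univ : Set M).Definable L Y →
      nuD.toFun Y = nu.toFun (D ∩ Y) / nu.toFun D) :
    ExtDomOver L A mu nuD := by
  classical
  open KMtools in
  have hcylD : A.Definable L (cyl (Sum.inr : β → α ⊕ β) D) := cyl_definable Sum.inr hD
  have hcylDc : A.Definable L ((cyl Sum.inr D)ᶜ) := hcylD.compl
  have hDuniv : (Set.univ : Set M).Definable L D := hD.mono (Set.subset_univ A)
  -- Step 1: an element of `E(λ, μ)` pins `λ(M^α × D) = ν(D)`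
  obtain ⟨om₀, hom₀A, hom₀X⟩ := amalg lam mu hmarg
  have hd : lam.toFun (cyl Sum.inr D) = nu.toFun D := by
    rw [← hom₀A _ hcylD]
    exact hwit om₀ ⟨hom₀A, hom₀X⟩ D hDuniv
  have hd0 : 0 < lam.toFun (cyl Sum.inr D) := by rw [hd]; exact hD0
  have hd1 : lam.toFun (cyl Sum.inr D) < 1 := by rw [hd]; exact hD1
  have hco : lam.toFun ((cyl Sum.inr D)ᶜ) = 1 - lam.toFun (cyl Sum.inr D) :=
    lam.compl' _ hcylD
  have hd0c : 0 < lam.toFun ((cyl Sum.inr D)ᶜ) := by rw [hco]; linarith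
  -- the two localizations of `λ`
  set lam1 := localize lam (cyl Sum.inr D) hcylD hd0 with hlam1
  set lam2 := localize lam ((cyl Sum.inr D)ᶜ) hcylDc hd0c with hlam2
  have hmarg1 : ∀ X : Set (α → M), A.Definable L X →
      lam1.toFun (cyl Sum.inl X) = mu.toFun X := by
    intro X hX
    rw [hlam1, localize_apply,
      show cyl Sum.inl X ∩ cyl Sum.inr D = prodSet X D from rfl,
      hamal X D hX hD, hmarg X hX]
    field_simp
  have hmarg2 : ∀ X : Set (α → M), A.Definable L X →
      lam2.toFun (cyl Sum.inl X) = mu.toFun X := by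
    intro X hX
    rw [hlam2, localize_apply,
      show cyl Sum.inl X ∩ (cyl Sum.inr D)ᶜ = prodSet X Dᶜ from rfl,
      hamal X Dᶜ hX hD.compl,
      show cyl Sum.inr Dᶜ = (cyl Sum.inr D)ᶜ from rfl,
      hmarg X hX]
    field_simp
  -- a fixed extension of the anti-localization
  obtain ⟨sig, hsigA, hsigX⟩ := amalg lam2 mu hmarg2
  refine ⟨lam1, hmarg1, ?_⟩
  rintro om' ⟨hom'A, hom'X⟩ Y hY
  set dd := lam.toFun (cyl Sum.inr D) with hdd
  -- the recombined measure
  set om : KeislerMeasure L M (Set.univ : Set M) (α ⊕ β) :=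
    { toFun := fun S => dd * om'.toFun S + (1 - dd) * sig.toFun S
      measure_univ := by
        show dd * om'.toFun Set.univ + (1 - dd) * sig.toFun Set.univ = 1
        rw [om'.measure_univ, sig.measure_univ]; ring
      nonneg' := fun s hs => add_nonneg (mul_nonneg hd0.le (om'.nonneg' s hs))
        (mul_nonneg (by linarith) (sig.nonneg' s hs))
      compl' := fun s hs => by
        show dd * om'.toFun sᶜ + (1 - dd) * sig.toFun sᶜ
          = 1 - (dd * om'.toFun s + (1 - dd) * sig.toFun s)
        rw [om'.compl' s hs, sig.compl' s hs]; ring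
      union_inter' := fun s t hs ht => by
        show dd * om'.toFun (s ∪ t) + (1 - dd) * sig.toFun (s ∪ t) = _
        rw [om'.union_inter' s t hs ht, sig.union_inter' s t hs ht]; ring } with hom
  have hommem : om ∈ extSpace L A lam mu := by
    constructor
    · intro s hs
      show dd * om'.toFun s + (1 - dd) * sig.toFun s = lam.toFun s
      rw [hom'A s hs, hsigA s hs, hlam1, hlam2, localize_apply, localize_apply, hco]
      rw [← hdd]
      have hsplit := km_split lam hs hcylD
      have hne1 : dd ≠ 0 := ne_of_gt hd0
      have hne2 : (1 : ℝ) - dd ≠ 0 := by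
        intro hcl
        rw [show (1:ℝ) - dd = 0 ↔ dd = 1 from by constructor <;> intro <;> linarith] at hcl
        linarith
      field_simp
      linarith
    · intro X hX
      show dd * om'.toFun (cyl Sum.inl X) + (1 - dd) * sig.toFun (cyl Sum.inl X) = mu.toFun X
      rw [hom'X X hX, hsigX X hX]; ring
  have hwitY : ∀ Z : Set (β → M), (Set.univ : Set M).Definable L Z →
      dd * om'.toFun (cyl Sum.inr Z) + (1 - dd) * sig.toFun (cyl Sum.inr Z) = nu.toFun Z := by
    intro Z hZ
    exact hwit om hommem Z hZ
  -- `σ` vanishes on the cylinder over `D`, `ω'` on the cylinder over `Dᶜ`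
  have hsigD : sig.toFun (cyl Sum.inr D) = 0 := by
    rw [hsigA _ hcylD, hlam2, localize_apply, Set.inter_compl_self, km_empty, zero_div]
  have hom'Dc : om'.toFun ((cyl Sum.inr D)ᶜ) = 0 := by
    rw [hom'A _ hcylDc, hlam1, localize_apply, Set.compl_inter_self, km_empty, zero_div]
  have hcylDuniv : (Set.univ : Set M).Definable L (cyl Sum.inr D) :=
    hcylD.mono (Set.subset_univ A)
  have hsigDY : sig.toFun (cyl Sum.inr (D ∩ Y)) = 0 := by
    refine le_antisymm ?_ (sig.nonneg' _ (cyl_definable Sum.inr (hDuniv.inter hY)))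
    rw [← hsigD]
    exact km_mono sig (cyl_definable Sum.inr (hDuniv.inter hY)) hcylDuniv
      (cyl_mono Sum.inr Set.inter_subset_left)
  have hom'DcY : om'.toFun (cyl Sum.inr (Dᶜ ∩ Y)) = 0 := by
    refine le_antisymm ?_ (om'.nonneg' _ (cyl_definable Sum.inr ((hDuniv.compl).inter hY)))
    rw [← hom'Dc]
    exact km_mono om' (cyl_definable Sum.inr ((hDuniv.compl).inter hY)) hcylDuniv.compl
      (show cyl Sum.inr (Dᶜ ∩ Y) ⊆ (cyl Sum.inr D)ᶜ from
        cyl_mono Sum.inr (Set.inter_subset_left (s := Dᶜ) (t := Y)))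
  -- the main computation
  have h1 : dd * om'.toFun (cyl Sum.inr (D ∩ Y)) = nu.toFun (D ∩ Y) := by
    have := hwitY (D ∩ Y) (hDuniv.inter hY)
    rw [hsigDY] at this
    linarith
  have h2 : om'.toFun (cyl Sum.inr Y)
      = om'.toFun (cyl Sum.inr (D ∩ Y)) + om'.toFun (cyl Sum.inr (Dᶜ ∩ Y)) := by
    have hu : cyl (Sum.inr : β → α ⊕ β) (D ∩ Y) ∪ cyl Sum.inr (Dᶜ ∩ Y) = cyl Sum.inr Y := by
      ext g
      by_cases h : (fun x => g (Sum.inr x)) ∈ D <;>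
        simp [cyl, Set.mem_setOf_eq, h]
    have hdisj : cyl (Sum.inr : β → α ⊕ β) (D ∩ Y) ∩ cyl Sum.inr (Dᶜ ∩ Y) = ∅ := by
      ext g
      by_cases h : (fun x => g (Sum.inr x)) ∈ D <;>
        simp [cyl, Set.mem_setOf_eq, h]
    have := km_disj_union om' (cyl_definable Sum.inr (hDuniv.inter hY))
      (cyl_definable Sum.inr ((hDuniv.compl).inter hY)) hdisj
    rw [hu] at this
    exact this
  have hne : dd ≠ 0 := ne_of_gt hd0
  rw [hnuD Y hY, h2, hom'DcY, add_zero, ← h1, ← hd, mul_comm dd _, mul_div_assoc,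
    div_self hne, mul_one]
end

section
/- Assume that M is strongly homogeneous over A, i.e., for all finite tuples b, c in M with the same type over A there is an automorphism of M fixing A pointwise and sending b to c. Let μ ∈ 𝔐_x(M) and ν ∈ 𝔐_y(M) be global Keisler measures. If μ is A-invariant and μ ≥_{E,A} ν, then ν is A-invariant. -/
open FirstOrder

/-- Tuples `b, c ∈ M^γ` have the same type over `A`: they belong to exactly the same
`A`-definable sets. -/
def SameTypeOver (L : FirstOrder.Language) {M : Type*} [L.Structure M] (A : Set M)
    {γ : Type*} (b c : γ → M) : Prop :=
  ∀ Z : Set (γ → M), A.Definable L Z → (b ∈ Z ↔ c ∈ Z)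

/-- `M` is strongly homogeneous over `A`: any two finite tuples with the same type
over `A` are conjugate by an automorphism of `M` fixing `A` pointwise. -/
def StronglyHomogeneousOver (L : FirstOrder.Language) (M : Type*) [L.Structure M]
    (A : Set M) : Prop :=
  ∀ (n : ℕ) (b c : Fin n → M), SameTypeOver L A b c →
    ∃ σ : M ≃[L] M, (∀ a ∈ A, σ a = a) ∧ ∀ i, σ (b i) = c i

/-- A global Keisler measure `μ ∈ 𝔐_α(M)` is `A`-invariant: for every `L`-formula
`φ(x; z)` and all tuples `b, c` with the same type over `A`,
`μ(φ(M^α; b)) = μ(φ(M^α; c))`. -/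
def InvariantOver (L : FirstOrder.Language) {M : Type*} [L.Structure M] (A : Set M)
    {α : Type*} (mu : KeislerMeasure L M (Set.univ : Set M) α) : Prop :=
  ∀ (n : ℕ) (φ : L.Formula (α ⊕ Fin n)) (b c : Fin n → M), SameTypeOver L A b c →
    mu.toFun {a : α → M | φ.Realize (Sum.elim a b)} =
      mu.toFun {a : α → M | φ.Realize (Sum.elim a c)}


namespace KMAux

open FirstOrder Language Set

variable {L : FirstOrder.Language} {M : Type*} [L.Structure M] {A : Set M} {α β γ : Type*}

theorem defCyl (f : α → β) {S : Set (α → M)} (h : A.Definable L S) :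
    A.Definable L (cyl f S) := h.preimage_comp f

/-- Projection of an `A`-definable subset of `M^(α⊕β)` to `M^α` is `A`-definable. -/
theorem defProj [Nonempty M] {s : Set ((α ⊕ β) → M)} (h : A.Definable L s) :
    A.Definable L ((fun g : (α ⊕ β) → M => g ∘ Sum.inl) '' s) := by
  classical
  obtain ⟨φ, rfl⟩ := h
  set F := φ.freeVarFinset with hF
  have hsub : ↑φ.freeVarFinset ⊆ (↑F : Set (α ⊕ β)) := by rw [hF]
  set ψ : L[[A]].Formula {x : α ⊕ β // x ∈ (↑F : Set (α ⊕ β))} :=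
    φ.restrictFreeVar (Set.inclusion hsub) with hψ
  have hrest : ∀ v : (α ⊕ β) → M, φ.Realize v ↔ ψ.Realize (v ∘ (↑)) := by
    intro v
    exact (BoundedFormula.realize_restrictFreeVar' hsub).symm
  set Fα := {a : α // Sum.inl a ∈ F} with hFα
  set Fβ := {b : β // Sum.inr b ∈ F} with hFβ
  haveI : Finite Fα := Finite.of_injective
    (fun a => (⟨Sum.inl a.1, a.2⟩ : {x : α ⊕ β // x ∈ F}))
    (by rintro ⟨a, _⟩ ⟨a', _⟩ h
        simp only [Subtype.mk.injEq, Sum.inl.injEq] at h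
        exact Subtype.ext h)
  haveI : Finite Fβ := Finite.of_injective
    (fun b => (⟨Sum.inr b.1, b.2⟩ : {x : α ⊕ β // x ∈ F}))
    (by rintro ⟨b, _⟩ ⟨b', _⟩ h
        simp only [Subtype.mk.injEq, Sum.inr.injEq] at h
        exact Subtype.ext h)
  let q : {x : α ⊕ β // x ∈ (↑F : Set (α ⊕ β))} → Fα ⊕ Fβ := fun x =>
    match x with
    | ⟨Sum.inl a, hx⟩ => Sum.inl ⟨a, hx⟩
    | ⟨Sum.inr b, hx⟩ => Sum.inr ⟨b, hx⟩
  have hs1 : A.Definable L ((fun u : Fα ⊕ Fβ → M => u ∘ q) ⁻¹' (setOf ψ.Realize)) :=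
    Set.Definable.preimage_comp q ⟨ψ, rfl⟩
  have hs2 : A.Definable L ((fun u : Fα ⊕ Fβ → M => u ∘ (Sum.inl : Fα → Fα ⊕ Fβ)) ''
      ((fun u : Fα ⊕ Fβ → M => u ∘ q) ⁻¹' (setOf ψ.Realize))) :=
    hs1.image_comp _
  have hs3 := hs2.preimage_comp (fun a : Fα => (a : α))
  convert hs3 using 1
  ext h
  simp only [Set.mem_image, Set.mem_preimage, Set.mem_setOf_eq]
  constructor
  · rintro ⟨g, hg, rfl⟩
    refine ⟨Sum.elim (fun a : Fα => g (Sum.inl a.1)) (fun b : Fβ => g (Sum.inr b.1)), ?_, ?_⟩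
    · have : (Sum.elim (fun a : Fα => g (Sum.inl a.1)) (fun b : Fβ => g (Sum.inr b.1))) ∘ q
          = g ∘ (↑) := by
        funext x
        rcases x with ⟨a | b, hx⟩ <;> rfl
      rw [this]
      exact (hrest g).1 hg
    · funext a; rfl
  · rintro ⟨u, hu1, hu2⟩
    refine ⟨Sum.elim h (fun b => if hb : Sum.inr b ∈ F then u (Sum.inr ⟨b, hb⟩)
      else Classical.arbitrary M), ?_, ?_⟩
    · rw [hrest]
      have : (Sum.elim h (fun b => if hb : Sum.inr b ∈ F then u (Sum.inr ⟨b, hb⟩)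
          else Classical.arbitrary M)) ∘ (↑) = u ∘ q := by
        funext x
        rcases x with ⟨a | b, hx⟩
        · have := congrFun hu2 ⟨a, hx⟩
          simpa [q] using this.symm
        · have hx' : Sum.inr b ∈ F := hx
          simp only [Function.comp_apply, Sum.elim_inr, dif_pos hx']
          rfl
      rw [this]
      exact hu1
    · funext a; rfl


theorem defParam {n : ℕ} (ψ : L.Formula (γ ⊕ Fin n)) (d : Fin n → M) :
    (Set.univ : Set M).Definable L {v : γ → M | ψ.Realize (Sum.elim v d)} := by
  rw [Set.definable_iff_exists_formula_sum]
  refine ⟨ψ.relabel (Sum.elim Sum.inr (fun i => Sum.inl ⟨d i, Set.mem_univ _⟩)), ?_⟩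
  ext v
  simp only [Set.mem_setOf_eq, Formula.realize_relabel]
  constructor <;> intro hr <;> (convert hr using 2; funext z; rcases z with z | i <;> rfl)

/-- Every `univ`-definable set is defined by an `L`-formula with a finite tuple of params. -/
theorem exists_param {X : Set (γ → M)} (h : (Set.univ : Set M).Definable L X) :
    ∃ (n : ℕ) (ψ : L.Formula (γ ⊕ Fin n)) (d : Fin n → M),
      X = {v : γ → M | ψ.Realize (Sum.elim v d)} := by
  classical
  obtain ⟨A0, -, h0⟩ := Set.definable_iff_finitely_definable.1 h
  rw [Set.definable_iff_exists_formula_sum] at h0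
  obtain ⟨φ, rfl⟩ := h0
  haveI : Fintype (↑(↑A0 : Set M) : Type _) := FinsetCoe.fintype A0
  set n := Fintype.card (↑(↑A0 : Set M) : Type _) with hn
  set e := Fintype.equivFin (↑(↑A0 : Set M) : Type _) with he
  refine ⟨n, φ.relabel (Sum.elim (fun c => Sum.inr (e c)) Sum.inl),
    (fun i => (e.symm i : M)), ?_⟩
  ext v
  simp only [Set.mem_setOf_eq, Formula.realize_relabel]
  constructor <;> intro hr <;>
    (convert hr using 2; funext z
     rcases z with c | a
     · simp [e.symm_apply_apply]
     · rfl)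

/-- An automorphism fixing `A` pointwise fixes every `A`-definable set. -/
theorem fix_mem (σ : M ≃[L] M) (hσ : ∀ a ∈ A, σ a = a) {Z : Set (γ → M)}
    (hZ : A.Definable L Z) (v : γ → M) : v ∈ Z ↔ (σ ∘ v) ∈ Z := by
  rw [Set.definable_iff_exists_formula_sum] at hZ
  obtain ⟨φ, rfl⟩ := hZ
  simp only [Set.mem_setOf_eq]
  have : Sum.elim ((↑) : A → M) (σ ∘ v) = σ ∘ Sum.elim ((↑) : A → M) v := by
    funext z; rcases z with a | x
    · exact (hσ a a.2).symm
    · rfl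
  rw [this, StrongHomClass.realize_formula]

theorem pre_repr {n : ℕ} (σ : M ≃[L] M) (ψ : L.Formula (γ ⊕ Fin n)) (d : Fin n → M) :
    (fun v : γ → M => σ ∘ v) ⁻¹' {v | ψ.Realize (Sum.elim v d)}
      = {v : γ → M | ψ.Realize (Sum.elim v (σ.symm ∘ d))} := by
  ext v
  simp only [Set.mem_preimage, Set.mem_setOf_eq]
  have : Sum.elim (σ ∘ v) d = σ ∘ Sum.elim v (σ.symm ∘ d) := by
    funext z; rcases z with x | i
    · rfl
    · exact (σ.apply_symm_apply (d i)).symm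
  rw [this, StrongHomClass.realize_formula]

theorem defPre (σ : M ≃[L] M) {X : Set (γ → M)} (hX : (Set.univ : Set M).Definable L X) :
    (Set.univ : Set M).Definable L ((fun v : γ → M => σ ∘ v) ⁻¹' X) := by
  obtain ⟨n, ψ, d, rfl⟩ := exists_param hX
  rw [pre_repr]
  exact defParam ψ _

theorem sameType_symm_param (σ : M ≃[L] M) (hσ : ∀ a ∈ A, σ a = a) {n : ℕ} (d : Fin n → M) :
    SameTypeOver L A d (σ.symm ∘ d) := by
  intro Z hZ
  have hσ' : ∀ a ∈ A, σ.symm a = a := fun a ha => by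
    conv_lhs => rw [← hσ a ha]
    exact σ.symm_apply_apply a
  exact fix_mem σ.symm hσ' hZ d


section Meas
variable (κ : KeislerMeasure L M A γ)

theorem meas_empty : κ.toFun ∅ = 0 := by
  have := κ.compl' Set.univ Set.definable_univ
  rw [Set.compl_univ, κ.measure_univ] at this
  linarith

theorem meas_union {s t : Set (γ → M)} (hs : A.Definable L s) (ht : A.Definable L t)
    (h : s ∩ t = ∅) : κ.toFun (s ∪ t) = κ.toFun s + κ.toFun t := by
  rw [κ.union_inter' s t hs ht, h, meas_empty]; ring

theorem meas_biUnion {ι : Type*} [DecidableEq ι] (F : Finset ι) (P : ι → Set (γ → M))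
    (hdef : ∀ i, A.Definable L (P i)) (hdisj : ∀ i j, i ≠ j → P i ∩ P j = ∅) :
    κ.toFun (⋃ i ∈ F, P i) = ∑ i ∈ F, κ.toFun (P i) := by
  induction F using Finset.induction_on with
  | empty => simpa using meas_empty κ
  | insert _ _ hnotmem ih =>
    rename_i a F
    rw [Finset.set_biUnion_insert, Finset.sum_insert hnotmem, ← ih,
      meas_union κ (hdef a) (Set.definable_biUnion_finset hdef F)]
    ext x
    simp only [Set.mem_inter_iff, Set.mem_iUnion, Set.mem_empty_iff_false, iff_false,
      not_and, not_exists]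
    rintro hxa i hiF hxi
    have := hdisj a i (by rintro rfl; exact hnotmem hiF)
    have : x ∈ P a ∩ P i := ⟨hxa, hxi⟩
    rw [hdisj a i (by rintro rfl; exact hnotmem hiF)] at this
    exact this

end Meas

section Atom
open scoped Classical
open Classical in
noncomputable def patt {W : Type*} {ι : Type*} (S : ι → Set W) (x : W) : ι → Bool :=
  fun i => decide (x ∈ S i)

def atomOf {W : Type*} {ι : Type*} (S : ι → Set W) (T : ι → Bool) : Set W :=
  {x | patt S x = T}

variable {W ι : Type*} {S : ι → Set W} {T : ι → Bool}

theorem decide_eq_iff {p : Prop} [Decidable p] {b : Bool} : decide p = b ↔ (p ↔ b = true) := by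
  cases b <;> simp

theorem mem_atomOf {x : W} : x ∈ atomOf S T ↔ ∀ i, (x ∈ S i ↔ T i = true) := by
  simp only [atomOf, Set.mem_setOf_eq, funext_iff, patt]
  exact forall_congr' fun i => decide_eq_iff

theorem self_mem_atomOf {x : W} : x ∈ atomOf S (patt S x) := rfl

theorem atomOf_disjoint {T' : ι → Bool} (h : T ≠ T') : atomOf S T ∩ atomOf S T' = ∅ := by
  ext x
  simp only [Set.mem_inter_iff, Set.mem_empty_iff_false, iff_false, not_and, atomOf,
    Set.mem_setOf_eq]
  rintro rfl rfl; exact h rfl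

theorem patt_comp {ι' : Type*} (f : ι' → ι) (x : W) : patt (S ∘ f) x = patt S x ∘ f := rfl

theorem atomOf_comp_eq_biUnion {ι' : Type*} [Fintype ι] [DecidableEq ι] (f : ι' → ι)
    (U : ι' → Bool) [DecidablePred (fun T : ι → Bool => T ∘ f = U)] :
    atomOf (S ∘ f) U = ⋃ T ∈ Finset.univ.filter (fun T : ι → Bool => T ∘ f = U),
      atomOf S T := by
  classical
  ext x
  simp only [Set.mem_iUnion, Finset.mem_filter, Finset.mem_univ, true_and, atomOf,
    Set.mem_setOf_eq]
  constructor
  · intro h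
    refine ⟨patt S x, ?_, rfl⟩
    rw [← h]; rfl
  · rintro ⟨T, hTf, rfl⟩
    rw [patt_comp f x, hTf]

theorem set_eq_biUnion_atomOf [Fintype ι] [DecidableEq ι] (i : ι) :
    S i = ⋃ T ∈ Finset.univ.filter (fun T : ι → Bool => T i = true), atomOf S T := by
  classical
  ext x
  simp only [Set.mem_iUnion, Finset.mem_filter, Finset.mem_univ, true_and]
  constructor
  · intro h
    exact ⟨patt S x, by simp [patt, h], self_mem_atomOf⟩
  · rintro ⟨T, hTi, hx⟩
    exact (mem_atomOf.1 hx i).2 hTi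

theorem univ_eq_biUnion_atomOf [Fintype ι] [DecidableEq ι] :
    (Set.univ : Set W) = ⋃ T ∈ (Finset.univ : Finset (ι → Bool)), atomOf S T := by
  ext x
  simp only [Set.mem_univ, true_iff, Set.mem_iUnion]
  exact ⟨patt S x, Finset.mem_univ _, self_mem_atomOf⟩

theorem atomOf_definable [Fintype ι] {S : ι → Set (γ → M)} (h : ∀ i, A.Definable L (S i))
    (T : ι → Bool) : A.Definable L (atomOf S T) := by
  classical
  have : atomOf S T = ⋂ i ∈ (Finset.univ : Finset ι),
      (if T i = true then S i else (S i)ᶜ) := by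
    ext x
    simp only [Set.mem_iInter, mem_atomOf, Finset.mem_univ, forall_const]
    refine forall_congr' fun i => ?_
    by_cases hT : T i = true <;> simp [hT]
  rw [this]
  exact Set.definable_biInter_finset (fun i => by
    by_cases hT : T i = true <;> simp [hT, h i, (h i).compl]) _

variable (κ : KeislerMeasure L M A γ)

theorem meas_atom_filter [Fintype ι] [DecidableEq ι] {S : ι → Set (γ → M)}
    (h : ∀ i, A.Definable L (S i)) {Z : Set (γ → M)} (F : Finset (ι → Bool))
    (hZ : Z = ⋃ T ∈ F, atomOf S T) :
    κ.toFun Z = ∑ T ∈ F, κ.toFun (atomOf S T) := by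
  classical
  rw [hZ]
  exact meas_biUnion κ F _ (atomOf_definable h) (fun _ _ => atomOf_disjoint)

theorem meas_inter_partition [Fintype ι] [DecidableEq ι] {S : ι → Set (γ → M)}
    (h : ∀ i, A.Definable L (S i)) {Z : Set (γ → M)} (hZ : A.Definable L Z) :
    κ.toFun Z = ∑ T : ι → Bool, κ.toFun (atomOf S T ∩ Z) := by
  classical
  have hU : Z = ⋃ T ∈ (Finset.univ : Finset (ι → Bool)), (atomOf S T ∩ Z) := by
    ext x
    constructor
    · intro hx
      exact Set.mem_biUnion (Finset.mem_univ (patt S x)) ⟨self_mem_atomOf, hx⟩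
    · intro hx
      obtain ⟨T, -, -, hx2⟩ := Set.mem_iUnion₂.1 hx
      exact hx2
  calc κ.toFun Z = κ.toFun (⋃ T ∈ (Finset.univ : Finset (ι → Bool)), (atomOf S T ∩ Z)) :=
        congrArg _ hU
    _ = ∑ T : ι → Bool, κ.toFun (atomOf S T ∩ Z) := by
        refine meas_biUnion κ _ _ (fun T => (atomOf_definable h T).inter hZ) ?_
        intro T T' hne
        have := atomOf_disjoint (S := S) hne
        ext x
        simp only [Set.mem_inter_iff, Set.mem_empty_iff_false, iff_false, not_and, and_imp]
        intro h1 _ h2 _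
        have : x ∈ atomOf S T ∩ atomOf S T' := ⟨h1, h2⟩
        rw [atomOf_disjoint hne] at this
        exact this.elim

end Atom

section CylAtom
variable {M : Type*}

theorem cyl_atomOf' {ι α' β' : Type*} {S : ι → Set (α' → M)} {T : ι → Bool}
    {f : α' → β'} :
    cyl f (KMAux.atomOf S T) = KMAux.atomOf (fun i => cyl (M := M) f (S i)) T := by
  ext x
  show (fun a => x (f a)) ∈ KMAux.atomOf S T ↔ _
  rw [KMAux.mem_atomOf, KMAux.mem_atomOf]
  rfl

end CylAtom

open scoped Classical in
noncomputable def indR {W : Type*} (S : Set W) (x : W) : ℝ := if x ∈ S then 1 else 0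

section Key
open scoped Classical

variable {L : FirstOrder.Language} {M : Type*} [L.Structure M] {A : Set M} {α β : Type*}

set_option maxHeartbeats 2000000 in
theorem key' [Nonempty M] (lam : KeislerMeasure L M A (α ⊕ β))
    (mu : KeislerMeasure L M (Set.univ : Set M) α)
    (hmarg : ∀ X : Set (α → M), A.Definable L X → lam.toFun (cyl Sum.inl X) = mu.toFun X)
    (n1 n2 : ℕ) (s : Fin n1 → ℝ) (D : Fin n1 → Set ((α ⊕ β) → M))
    (hD : ∀ i, A.Definable L (D i))
    (t : Fin n2 → ℝ) (X : Fin n2 → Set (α → M))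
    (hX : ∀ j, (Set.univ : Set M).Definable L (X j)) (k : ℝ)
    (hpt : ∀ x : (α ⊕ β) → M,
      k ≤ (∑ i, s i * indR (D i) x) + ∑ j, t j * indR (X j) (x ∘ Sum.inl)) :
    k ≤ (∑ i, s i * lam.toFun (D i)) + ∑ j, t j * mu.toFun (X j) := by
  set v : (Fin n1 → Bool) → ℝ :=
    fun T => ∑ i ∈ Finset.univ.filter (fun i => T i = true), s i with hv
  set E : (Fin n1 → Bool) → Set (α → M) :=
    fun T => (fun x : (α ⊕ β) → M => x ∘ Sum.inl) '' atomOf D T with hEdef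
  have hE : ∀ T, A.Definable L (E T) := fun T => defProj (atomOf_definable hD T)
  set m : ((Fin n1 → Bool) → Bool) → ℝ := fun U =>
    if h : (Finset.univ.filter (fun T => U T = true)).Nonempty then
      (Finset.univ.filter (fun T => U T = true)).inf' h v else 0 with hm
  set C : ((Fin n1 → Bool) → Bool) → Set (α → M) := fun U => atomOf E U with hCdef
  have hC : ∀ U, A.Definable L (C U) := fun U => atomOf_definable hE U
  set G : ((Fin n1 → Bool) ⊕ Fin n2) → Set (α → M) := Sum.elim E X with hGdef
  have hG : ∀ p, (Set.univ : Set M).Definable L (G p) := by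
    rintro (T | j)
    · exact (hE T).mono (Set.subset_univ A)
    · exact hX j
  -- pointwise value of the upstairs sum on an atom
  have hptw1 : ∀ (T : Fin n1 → Bool) (x : (α ⊕ β) → M), x ∈ atomOf D T →
      (∑ i, s i * indR (D i) x) = v T := by
    intro T x hx
    have hmem := mem_atomOf.1 hx
    simp only [hv]
    rw [Finset.sum_filter]
    refine Finset.sum_congr rfl fun i _ => ?_
    by_cases hi : x ∈ D i
    · rw [indR, if_pos hi, mul_one, if_pos ((hmem i).1 hi)]
    · rw [indR, if_neg hi, mul_zero, if_neg (fun h => hi ((hmem i).2 h))]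
  -- step (a)
  have ha : (∑ i, s i * lam.toFun (D i)) = ∑ T : Fin n1 → Bool,
      v T * lam.toFun (atomOf D T) := by
    calc (∑ i, s i * lam.toFun (D i))
        = ∑ i, ∑ T : Fin n1 → Bool,
            (if T i = true then s i * lam.toFun (atomOf D T) else 0) := by
          refine Finset.sum_congr rfl fun i _ => ?_
          rw [meas_atom_filter lam hD _ (set_eq_biUnion_atomOf i), Finset.mul_sum,
            Finset.sum_filter]
      _ = ∑ T : Fin n1 → Bool, ∑ i,
            (if T i = true then s i * lam.toFun (atomOf D T) else 0) := Finset.sum_comm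
      _ = ∑ T : Fin n1 → Bool, v T * lam.toFun (atomOf D T) := by
          refine Finset.sum_congr rfl fun T _ => ?_
          simp only [hv]
          rw [← Finset.sum_filter, ← Finset.sum_mul]
  -- step (b)
  have hb : (∑ U : (Fin n1 → Bool) → Bool, m U * mu.toFun (C U))
      ≤ ∑ T : Fin n1 → Bool, v T * lam.toFun (atomOf D T) := by
    have hY : ∀ U, cyl (Sum.inl : α → α ⊕ β) (C U) = atomOf (fun T => cyl (Sum.inl : α → α ⊕ β) (E T)) U := by
      intro U
      simp only [hCdef]
      exact cyl_atomOf'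
    have hdef_cylE : ∀ T, A.Definable L (cyl (Sum.inl : α → α ⊕ β) (E T)) := fun T => defCyl _ (hE T)
    have h3 : ∀ U, mu.toFun (C U) = ∑ T : Fin n1 → Bool,
        lam.toFun (atomOf D T ∩ cyl (Sum.inl : α → α ⊕ β) (C U)) := by
      intro U
      rw [← hmarg _ (hC U)]
      exact meas_inter_partition lam hD (defCyl _ (hC U))
    calc (∑ U : (Fin n1 → Bool) → Bool, m U * mu.toFun (C U))
        = ∑ U : (Fin n1 → Bool) → Bool, ∑ T : Fin n1 → Bool,
            m U * lam.toFun (atomOf D T ∩ cyl (Sum.inl : α → α ⊕ β) (C U)) := by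
          refine Finset.sum_congr rfl fun U _ => ?_
          rw [h3 U, Finset.mul_sum]
      _ = ∑ T : Fin n1 → Bool, ∑ U : (Fin n1 → Bool) → Bool,
            m U * lam.toFun (atomOf D T ∩ cyl (Sum.inl : α → α ⊕ β) (C U)) := Finset.sum_comm
      _ ≤ ∑ T : Fin n1 → Bool, ∑ U : (Fin n1 → Bool) → Bool,
            v T * lam.toFun (atomOf D T ∩ cyl (Sum.inl : α → α ⊕ β) (C U)) := by
          refine Finset.sum_le_sum fun T _ => Finset.sum_le_sum fun U _ => ?_
          by_cases hemp : (atomOf D T ∩ cyl (Sum.inl : α → α ⊕ β) (C U)) = ∅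
          · rw [hemp, meas_empty lam, mul_zero, mul_zero]
          · obtain ⟨x, hx1, hx2⟩ := Set.nonempty_iff_ne_empty.2 hemp
            have hUT : U T = true := by
              have hmemE : (fun a => x (Sum.inl a)) ∈ E T := ⟨x, hx1, rfl⟩
              exact (mem_atomOf.1 hx2 T).1 hmemE
            have hne : (Finset.univ.filter (fun T' => U T' = true)).Nonempty :=
              ⟨T, by simp [hUT]⟩
            have hvm : m U ≤ v T := by
              simp only [hm]
              rw [dif_pos hne]
              exact Finset.inf'_le v (by simp [hUT])
            exact mul_le_mul_of_nonneg_right hvm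
              (lam.nonneg' _ ((atomOf_definable hD T).inter (defCyl _ (hC U))))
      _ = ∑ T : Fin n1 → Bool, v T * lam.toFun (atomOf D T) := by
          refine Finset.sum_congr rfl fun T _ => ?_
          rw [← Finset.mul_sum]
          congr 1
          have h2 := meas_inter_partition lam hdef_cylE (atomOf_definable hD T)
          rw [h2]
          refine Finset.sum_congr rfl fun U _ => ?_
          rw [hY U, Set.inter_comm]
  -- covering
  have hcov : ∀ a : α → M, ∃ T, a ∈ E T := by
    intro a
    refine ⟨patt D (Sum.elim a (fun _ => Classical.arbitrary M)),
      Sum.elim a (fun _ => Classical.arbitrary M), self_mem_atomOf, ?_⟩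
    funext i; rfl
  -- step (c)
  have hc : k ≤ (∑ U : (Fin n1 → Bool) → Bool, m U * mu.toFun (C U))
      + ∑ j, t j * mu.toFun (X j) := by
    have h1U : ∀ U, mu.toFun (C U) = ∑ P ∈ Finset.univ.filter
        (fun P : ((Fin n1 → Bool) ⊕ Fin n2) → Bool => P ∘ Sum.inl = U),
        mu.toFun (atomOf G P) := by
      intro U
      refine meas_atom_filter mu hG _ ?_
      have hGE : G ∘ Sum.inl = E := by funext T; rfl
      have hCe : C U = atomOf (G ∘ Sum.inl) U := by rw [hCdef, hGE]
      rw [hCe]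
      exact atomOf_comp_eq_biUnion Sum.inl U
    have h1X : ∀ j, mu.toFun (X j) = ∑ P ∈ Finset.univ.filter
        (fun P : ((Fin n1 → Bool) ⊕ Fin n2) → Bool => P (Sum.inr j) = true),
        mu.toFun (atomOf G P) := by
      intro j
      refine meas_atom_filter mu hG _ ?_
      have hXe : X j = G (Sum.inr j) := rfl
      rw [hXe]
      exact set_eq_biUnion_atomOf (Sum.inr j)
    have h1 : (1 : ℝ) = ∑ P : ((Fin n1 → Bool) ⊕ Fin n2) → Bool,
        mu.toFun (atomOf G P) := by
      rw [← mu.measure_univ]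
      exact meas_atom_filter mu hG _ univ_eq_biUnion_atomOf
    have hterm : ∀ P : ((Fin n1 → Bool) ⊕ Fin n2) → Bool,
        k * mu.toFun (atomOf G P) ≤ (m (P ∘ Sum.inl)
          + ∑ j ∈ Finset.univ.filter (fun j => P (Sum.inr j) = true), t j)
          * mu.toFun (atomOf G P) := by
      intro P
      by_cases hemp : atomOf G P = ∅
      · rw [hemp, meas_empty mu, mul_zero, mul_zero]
      · obtain ⟨a, ha'⟩ := Set.nonempty_iff_ne_empty.2 hemp
        refine mul_le_mul_of_nonneg_right ?_ (mu.nonneg' _ (atomOf_definable hG P))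
        have haE : ∀ T, (a ∈ E T ↔ P (Sum.inl T) = true) :=
          fun T => mem_atomOf.1 ha' (Sum.inl T)
        have haX : ∀ j, (a ∈ X j ↔ P (Sum.inr j) = true) :=
          fun j => mem_atomOf.1 ha' (Sum.inr j)
        obtain ⟨T1, hT1⟩ := hcov a
        have hne : (Finset.univ.filter (fun T => (P ∘ Sum.inl) T = true)).Nonempty :=
          ⟨T1, by simp [Function.comp, (haE T1).1 hT1]⟩
        have hm' : ∃ T0, (P (Sum.inl T0) = true) ∧ m (P ∘ Sum.inl) = v T0 := by
          simp only [hm]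
          rw [dif_pos hne]
          obtain ⟨T0, hT0mem, hT0⟩ := Finset.exists_mem_eq_inf' hne v
          exact ⟨T0, (Finset.mem_filter.1 hT0mem).2, hT0⟩
        obtain ⟨T0, hPT0, hmeq⟩ := hm'
        obtain ⟨x0, hx0, hx0a⟩ := (haE T0).2 hPT0
        have hx := hpt x0
        rw [hptw1 T0 x0 hx0] at hx
        have h2nd : (∑ j, t j * indR (X j) (x0 ∘ Sum.inl))
            = ∑ j ∈ Finset.univ.filter (fun j => P (Sum.inr j) = true), t j := by
          rw [Finset.sum_filter]
          refine Finset.sum_congr rfl fun j _ => ?_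
          have hx0a' : x0 ∘ Sum.inl = a := hx0a
          rw [hx0a']
          by_cases hj : a ∈ X j
          · rw [indR, if_pos hj, mul_one, if_pos ((haX j).1 hj)]
          · rw [indR, if_neg hj, mul_zero, if_neg (fun h => hj ((haX j).2 h))]
        rw [h2nd] at hx
        rw [hmeq]
        exact hx
    calc k = k * 1 := (mul_one k).symm
      _ = ∑ P : ((Fin n1 → Bool) ⊕ Fin n2) → Bool, k * mu.toFun (atomOf G P) := by
          rw [h1, Finset.mul_sum]
      _ ≤ ∑ P : ((Fin n1 → Bool) ⊕ Fin n2) → Bool, (m (P ∘ Sum.inl)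
            + ∑ j ∈ Finset.univ.filter (fun j => P (Sum.inr j) = true), t j)
            * mu.toFun (atomOf G P) := Finset.sum_le_sum fun P _ => hterm P
      _ = (∑ P : ((Fin n1 → Bool) ⊕ Fin n2) → Bool, m (P ∘ Sum.inl) * mu.toFun (atomOf G P))
          + ∑ P : ((Fin n1 → Bool) ⊕ Fin n2) → Bool,
            (∑ j ∈ Finset.univ.filter (fun j => P (Sum.inr j) = true), t j)
            * mu.toFun (atomOf G P) := by
          rw [← Finset.sum_add_distrib]
          exact Finset.sum_congr rfl fun P _ => add_mul _ _ _
      _ = (∑ U : (Fin n1 → Bool) → Bool, m U * mu.toFun (C U))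
          + ∑ j, t j * mu.toFun (X j) := by
          congr 1
          · calc (∑ P : ((Fin n1 → Bool) ⊕ Fin n2) → Bool,
                m (P ∘ Sum.inl) * mu.toFun (atomOf G P))
                = ∑ P : ((Fin n1 → Bool) ⊕ Fin n2) → Bool,
                  ∑ U : (Fin n1 → Bool) → Bool,
                    (if P ∘ Sum.inl = U then m U * mu.toFun (atomOf G P) else 0) := by
                  refine Finset.sum_congr rfl fun P _ => ?_
                  rw [Finset.sum_ite_eq]
                  simp
              _ = ∑ U : (Fin n1 → Bool) → Bool, ∑ P : ((Fin n1 → Bool) ⊕ Fin n2) → Bool,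
                    (if P ∘ Sum.inl = U then m U * mu.toFun (atomOf G P) else 0) :=
                  Finset.sum_comm
              _ = ∑ U : (Fin n1 → Bool) → Bool, m U * mu.toFun (C U) := by
                  refine Finset.sum_congr rfl fun U _ => ?_
                  rw [h1U U, Finset.mul_sum, Finset.sum_filter]
          · calc (∑ P : ((Fin n1 → Bool) ⊕ Fin n2) → Bool,
                (∑ j ∈ Finset.univ.filter (fun j => P (Sum.inr j) = true), t j)
                  * mu.toFun (atomOf G P))
                = ∑ P : ((Fin n1 → Bool) ⊕ Fin n2) → Bool, ∑ j,
                    (if P (Sum.inr j) = true then t j * mu.toFun (atomOf G P) else 0) := by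
                  refine Finset.sum_congr rfl fun P _ => ?_
                  rw [Finset.sum_mul, Finset.sum_filter]
              _ = ∑ j, ∑ P : ((Fin n1 → Bool) ⊕ Fin n2) → Bool,
                    (if P (Sum.inr j) = true then t j * mu.toFun (atomOf G P) else 0) :=
                  Finset.sum_comm
              _ = ∑ j, t j * mu.toFun (X j) := by
                  refine Finset.sum_congr rfl fun j _ => ?_
                  rw [h1X j, Finset.mul_sum, Finset.sum_filter]
  calc k ≤ _ := hc
    _ ≤ (∑ T : Fin n1 → Bool, v T * lam.toFun (atomOf D T))
        + ∑ j, t j * mu.toFun (X j) := add_le_add_left hb _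
    _ = (∑ i, s i * lam.toFun (D i)) + ∑ j, t j * mu.toFun (X j) := by rw [ha]

end Key

variable (lam : KeislerMeasure L M A (α ⊕ β)) (mu : KeislerMeasure L M (Set.univ : Set M) α)

def BasicP (S : Set ((α ⊕ β) → M)) (w : ℝ) : Prop :=
  (A.Definable L S ∧ w = lam.toFun S) ∨
  (∃ X : Set (α → M), (Set.univ : Set M).Definable L X ∧ S = cyl Sum.inl X ∧ w = mu.toFun X)

def CSet (f : ((α ⊕ β) → M) → ℝ) : Set ℝ :=
  {c | ∃ (n : ℕ) (s w : Fin n → ℝ) (S : Fin n → Set ((α ⊕ β) → M)),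
    (∀ i, BasicP lam mu (S i) (w i)) ∧ (∀ x, f x ≤ ∑ i, s i * indR (S i) x) ∧
    c = ∑ i, s i * w i}

set_option maxHeartbeats 800000 in
theorem key [Nonempty M]
    (hmarg : ∀ X : Set (α → M), A.Definable L X → lam.toFun (cyl Sum.inl X) = mu.toFun X)
    (n : ℕ) (s w : Fin n → ℝ) (S : Fin n → Set ((α ⊕ β) → M))
    (hB : ∀ i, BasicP lam mu (S i) (w i)) (k : ℝ)
    (hk : ∀ x, k ≤ ∑ i, s i * indR (S i) x) : k ≤ ∑ i, s i * w i := by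
  classical
  have hsplit : ∀ i, ∃ (D : Set ((α ⊕ β) → M)) (s1 : ℝ) (X : Set (α → M)) (t1 : ℝ),
      A.Definable L D ∧ (Set.univ : Set M).Definable L X ∧
      (s1 * lam.toFun D + t1 * mu.toFun X = s i * w i) ∧
      (∀ x : (α ⊕ β) → M, s1 * indR D x + t1 * indR X (x ∘ Sum.inl)
        = s i * indR (S i) x) := by
    intro i
    rcases hB i with ⟨hdef, hw⟩ | ⟨X, hXdef, hSX, hw⟩
    · exact ⟨S i, s i, Set.univ, 0, hdef, Set.definable_univ, by rw [hw]; ring,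
        fun x => by ring⟩
    · refine ⟨Set.univ, 0, X, s i, Set.definable_univ, hXdef, by rw [hw]; ring, fun x => ?_⟩
      have hiX : indR (S i) x = indR X (x ∘ Sum.inl) := by
        rw [hSX]; exact if_congr Iff.rfl rfl rfl
      rw [hiX]; ring
  choose D s1 X t1 hDdef hXdef hval hptw using hsplit
  have hmain := key' lam mu hmarg n n s1 D hDdef t1 X hXdef k ?hpt
  case hpt =>
    intro x
    calc k ≤ ∑ i, s i * indR (S i) x := hk x
      _ = ∑ i, (s1 i * indR (D i) x + t1 i * indR (X i) (x ∘ Sum.inl)) :=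
        (Finset.sum_congr rfl fun i _ => (hptw i x).symm)
      _ = _ := Finset.sum_add_distrib
  calc k ≤ _ := hmain
    _ = ∑ i, (s1 i * lam.toFun (D i) + t1 i * mu.toFun (X i)) :=
      Finset.sum_add_distrib.symm
    _ = ∑ i, s i * w i := Finset.sum_congr rfl fun i _ => hval i

set_option maxHeartbeats 2000000 in
theorem exists_mem_extSpace [Nonempty M]
    (hmarg : ∀ X : Set (α → M), A.Definable L X → lam.toFun (cyl Sum.inl X) = mu.toFun X) :
    ∃ om : KeislerMeasure L M (Set.univ : Set M) (α ⊕ β),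
      (∀ s : Set ((α ⊕ β) → M), A.Definable L s → om.toFun s = lam.toFun s) ∧
      (∀ X : Set (α → M), (Set.univ : Set M).Definable L X →
        om.toFun (cyl Sum.inl X) = mu.toFun X) := by
  classical
  -- the submodule of bounded functions
  let Bdd : Submodule ℝ (((α ⊕ β) → M) → ℝ) :=
    { carrier := {f | ∃ Cb : ℝ, ∀ x, |f x| ≤ Cb}
      add_mem' := by
        rintro f g ⟨Cf, hf⟩ ⟨Cg, hg⟩
        exact ⟨Cf + Cg, fun x => (abs_add_le _ _).trans (add_le_add (hf x) (hg x))⟩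
      zero_mem' := ⟨0, fun x => by simp⟩
      smul_mem' := by
        rintro c f ⟨Cf, hf⟩
        exact ⟨|c| * Cf, fun x => by
          simpa [abs_mul] using mul_le_mul_of_nonneg_left (hf x) (abs_nonneg c)⟩ }
  have hCS_const : ∀ (f : ((α ⊕ β) → M) → ℝ) (Cb : ℝ), (∀ x, f x ≤ Cb) →
      Cb ∈ CSet lam mu f := by
    intro f Cb hC
    refine ⟨1, fun _ => Cb, fun _ => lam.toFun Set.univ, fun _ => Set.univ,
      fun _ => Or.inl ⟨Set.definable_univ, rfl⟩, ?_, ?_⟩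
    · intro x
      rw [Fin.sum_univ_one]
      have : indR (Set.univ : Set ((α ⊕ β) → M)) x = 1 := if_pos (Set.mem_univ x)
      rw [this, mul_one]
      exact hC x
    · rw [Fin.sum_univ_one, lam.measure_univ, mul_one]
  have hCS_lb : ∀ (f : ((α ⊕ β) → M) → ℝ) (k : ℝ), (∀ x, k ≤ f x) →
      ∀ c ∈ CSet lam mu f, k ≤ c := by
    rintro f k hk c ⟨n, s, w, S, hB, hle, rfl⟩
    exact key lam mu hmarg n s w S hB k (fun x => (hk x).trans (hle x))
  have hne : ∀ f : Bdd, (CSet lam mu f.1).Nonempty := by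
    rintro ⟨f, Cb, hC⟩
    exact ⟨Cb, hCS_const f Cb (fun x => (le_abs_self _).trans (hC x))⟩
  have hbdd : ∀ f : Bdd, BddBelow (CSet lam mu f.1) := by
    rintro ⟨f, Cb, hC⟩
    exact ⟨-Cb, fun c hc => hCS_lb f (-Cb) (fun x => neg_le_of_abs_le (hC x)) c hc⟩
  set p : Bdd → ℝ := fun f => sInf (CSet lam mu f.1) with hp
  have p_le : ∀ (f : Bdd) (c : ℝ), c ∈ CSet lam mu f.1 → p f ≤ c :=
    fun f c hc => csInf_le (hbdd f) hc
  have le_p : ∀ (f : Bdd) (k : ℝ), (∀ c ∈ CSet lam mu f.1, k ≤ c) → k ≤ p f :=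
    fun f k h => le_csInf (hne f) h
  have N_add : ∀ f g : Bdd, p (f + g) ≤ p f + p g := by
    intro f g
    have hadd : ∀ c1 ∈ CSet lam mu f.1, ∀ c2 ∈ CSet lam mu g.1,
        c1 + c2 ∈ CSet lam mu ((f + g : Bdd) : ((α ⊕ β) → M) → ℝ) := by
      rintro c1 ⟨n1, s1, w1, S1, hB1, hle1, rfl⟩ c2 ⟨n2, s2, w2, S2, hB2, hle2, rfl⟩
      refine ⟨n1 + n2, Fin.append s1 s2, Fin.append w1 w2, Fin.append S1 S2, ?_, ?_, ?_⟩
      · intro i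
        induction i using Fin.addCases with
        | left i => simpa [Fin.append_left] using hB1 i
        | right i => simpa [Fin.append_right] using hB2 i
      · intro x
        rw [Fin.sum_univ_add]
        simp only [Fin.append_left, Fin.append_right]
        exact add_le_add (hle1 x) (hle2 x)
      · rw [Fin.sum_univ_add]
        simp only [Fin.append_left, Fin.append_right]
    refine le_of_forall_pos_le_add ?_
    intro ε hε
    obtain ⟨c1, hc1, hlt1⟩ := exists_lt_of_csInf_lt (hne f)
      (lt_add_of_pos_right (p f) (half_pos hε))
    obtain ⟨c2, hc2, hlt2⟩ := exists_lt_of_csInf_lt (hne g)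
      (lt_add_of_pos_right (p g) (half_pos hε))
    have := p_le (f + g) _ (hadd c1 hc1 c2 hc2)
    have hhalf : ε / 2 + ε / 2 = ε := add_halves ε
    linarith
  have hle' : ∀ (c : ℝ), 0 < c → ∀ f : Bdd, p (c • f) ≤ c * p f := by
    intro c hc f
    have hsm : ∀ b ∈ CSet lam mu f.1,
        c * b ∈ CSet lam mu ((c • f : Bdd) : ((α ⊕ β) → M) → ℝ) := by
      rintro b ⟨n, s, w, S, hB, hle, rfl⟩
      refine ⟨n, fun i => c * s i, w, S, hB, ?_, ?_⟩
      · intro x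
        have hcf : ((c • f : Bdd) : ((α ⊕ β) → M) → ℝ) x = c * f.1 x := rfl
        rw [hcf]
        calc c * f.1 x ≤ c * ∑ i, s i * indR (S i) x :=
            mul_le_mul_of_nonneg_left (hle x) hc.le
          _ = ∑ i, (c * s i) * indR (S i) x := by
            rw [Finset.mul_sum]
            exact Finset.sum_congr rfl fun i _ => (mul_assoc _ _ _).symm
      · rw [Finset.mul_sum]
        exact Finset.sum_congr rfl fun i _ => (mul_assoc _ _ _).symm
    have h1 : ∀ b ∈ CSet lam mu f.1, p (c • f) ≤ c * b :=
      fun b hb => p_le _ _ (hsm b hb)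
    have h2 : p (c • f) / c ≤ p f :=
      le_p f _ (fun b hb => (div_le_iff₀ hc).2 (by linarith [h1 b hb]))
    have := (div_le_iff₀ hc).1 h2
    linarith
  have N_hom : ∀ (c : ℝ), 0 < c → ∀ f : Bdd, p (c • f) = c * p f := by
    intro c hc f
    refine le_antisymm (hle' c hc f) ?_
    have h3 := hle' c⁻¹ (inv_pos.2 hc) (c • f)
    rw [smul_smul, inv_mul_cancel₀ hc.ne', one_smul] at h3
    calc c * p f ≤ c * (c⁻¹ * p (c • f)) := mul_le_mul_of_nonneg_left h3 hc.le
      _ = p (c • f) := by field_simp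
  let f0 : Bdd →ₗ.[ℝ] ℝ := ⟨⊥, 0⟩
  have hf0 : ∀ x : f0.domain, f0 x ≤ p x := by
    rintro ⟨x, hx⟩
    have hx0 : x = 0 := (Submodule.mem_bot ℝ).1 hx
    subst hx0
    have hp0 : p 0 ≥ 0 := le_p 0 0 (fun c hc => hCS_lb _ 0 (fun x => le_of_eq rfl) c hc)
    have hz : f0 ⟨0, hx⟩ = 0 := map_zero f0.toFun
    rw [hz]
    simpa using hp0
  obtain ⟨g, -, hg⟩ := exists_extension_of_le_sublinear f0 p N_hom N_add hf0
  -- indicator elements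
  let indE : Set ((α ⊕ β) → M) → Bdd := fun S =>
    ⟨indR S, 1, fun x => by rw [indR]; split <;> norm_num⟩
  have hind_basic : ∀ S w, BasicP lam mu S w → g (indE S) = w := by
    intro S w hB
    have h1 : g (indE S) ≤ w := by
      refine (hg _).trans (p_le _ w ?_)
      exact ⟨1, fun _ => 1, fun _ => w, fun _ => S, fun _ => hB,
        fun x => by rw [Fin.sum_univ_one, one_mul], by rw [Fin.sum_univ_one, one_mul]⟩
    have h2 : -(g (indE S)) ≤ -w := by
      have h3 := (hg (-(indE S))).trans (p_le (-(indE S)) (-w)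
        ⟨1, fun _ => -1, fun _ => w, fun _ => S, fun _ => hB,
          fun x => by rw [Fin.sum_univ_one]; ring_nf; exact le_of_eq rfl,
          by rw [Fin.sum_univ_one]; ring⟩)
      rw [map_neg] at h3
      exact h3
    linarith
  have hind_nonneg : ∀ S, 0 ≤ g (indE S) := by
    intro S
    have h3 := (hg (-(indE S))).trans (p_le (-(indE S)) 0
      ⟨0, Fin.elim0, Fin.elim0, Fin.elim0, fun i => i.elim0, fun x => ?_, by simp⟩)
    · rw [map_neg] at h3
      linarith
    · show -(indR S x) ≤ _
      rw [Finset.univ_eq_empty, Finset.sum_empty, indR]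
      split <;> norm_num
  refine ⟨{ toFun := fun S => g (indE S)
            measure_univ := by
              show g (indE Set.univ) = 1
              rw [hind_basic _ _ (Or.inl ⟨Set.definable_univ, rfl⟩), lam.measure_univ]
            nonneg' := fun S _ => hind_nonneg S
            compl' := fun S _ => by
              show g (indE Sᶜ) = 1 - g (indE S)
              have hE : indE Sᶜ = indE Set.univ - indE S := by
                apply Subtype.ext
                funext x
                show indR Sᶜ x = indR Set.univ x - indR S x
                by_cases hx : x ∈ S <;> simp [indR, hx]
              rw [hE, map_sub, hind_basic _ _ (Or.inl ⟨Set.definable_univ, rfl⟩),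
                lam.measure_univ]
            union_inter' := fun S T _ _ => by
              show g (indE (S ∪ T)) = g (indE S) + g (indE T) - g (indE (S ∩ T))
              have hE : indE (S ∪ T) = indE S + indE T - indE (S ∩ T) := by
                apply Subtype.ext
                funext x
                show indR (S ∪ T) x = indR S x + indR T x - indR (S ∩ T) x
                by_cases hS : x ∈ S <;> by_cases hT : x ∈ T <;> simp [indR, hS, hT]
              rw [hE, map_sub, map_add] },
    fun S hS => hind_basic S _ (Or.inl ⟨hS, rfl⟩),
    fun X hX => hind_basic _ _ (Or.inr ⟨X, hX, rfl, rfl⟩)⟩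

end KMAux

/-- If `M` is strongly homogeneous over `A`, `μ` is `A`-invariant and `μ ≥_{E,A} ν`,
then `ν` is `A`-invariant. -/
theorem invariant_of_extDom {L : FirstOrder.Language} {M : Type*} [L.Structure M]
    (A : Set M) {α β : Type*}
    (hhom : StronglyHomogeneousOver L M A)
    (mu : KeislerMeasure L M (Set.univ : Set M) α)
    (nu : KeislerMeasure L M (Set.univ : Set M) β)
    (hinv : InvariantOver L A mu)
    (hdom : ExtDomOver L A mu nu) :
    InvariantOver L A nu := by
  classical
  rcases isEmpty_or_nonempty M with hM | hM
  · intro n φ b c _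
    have hbc : b = c := funext fun i => (hM.elim (b i))
    rw [hbc]
  · intro n φ b c hbc
    obtain ⟨lam, hmarg, hdp⟩ := hdom
    obtain ⟨om, hom1, hom2⟩ := KMAux.exists_mem_extSpace lam mu hmarg
    obtain ⟨σ, hσA, hσb⟩ := hhom n b c hbc
    have mu_pre : ∀ X : Set (α → M), (Set.univ : Set M).Definable L X →
        ((Set.univ : Set M).Definable L ((fun a : α → M => σ ∘ a) ⁻¹' X) ∧
          mu.toFun ((fun a : α → M => σ ∘ a) ⁻¹' X) = mu.toFun X) := by
      intro X hX
      obtain ⟨nn, ψ, d, rfl⟩ := KMAux.exists_param hX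
      rw [KMAux.pre_repr σ ψ d]
      exact ⟨KMAux.defParam ψ _,
        (hinv nn ψ d (σ.symm ∘ d) (KMAux.sameType_symm_param σ hσA d)).symm⟩
    let om' : KeislerMeasure L M (Set.univ : Set M) (α ⊕ β) :=
      { toFun := fun S => om.toFun ((fun v : (α ⊕ β) → M => σ ∘ v) ⁻¹' S)
        measure_univ := by
          show om.toFun ((fun v : (α ⊕ β) → M => σ ∘ v) ⁻¹' Set.univ) = 1
          rw [Set.preimage_univ, om.measure_univ]
        nonneg' := fun S hS => om.nonneg' _ (KMAux.defPre σ hS)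
        compl' := fun S hS => by
          show om.toFun ((fun v : (α ⊕ β) → M => σ ∘ v) ⁻¹' Sᶜ)
            = 1 - om.toFun ((fun v : (α ⊕ β) → M => σ ∘ v) ⁻¹' S)
          rw [Set.preimage_compl]
          exact om.compl' _ (KMAux.defPre σ hS)
        union_inter' := fun S T hS hT => by
          show om.toFun ((fun v : (α ⊕ β) → M => σ ∘ v) ⁻¹' (S ∪ T))
            = om.toFun ((fun v : (α ⊕ β) → M => σ ∘ v) ⁻¹' S)
              + om.toFun ((fun v : (α ⊕ β) → M => σ ∘ v) ⁻¹' T)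
              - om.toFun ((fun v : (α ⊕ β) → M => σ ∘ v) ⁻¹' (S ∩ T))
          rw [Set.preimage_union, Set.preimage_inter]
          exact om.union_inter' _ _ (KMAux.defPre σ hS) (KMAux.defPre σ hT) }
    have hom'1 : ∀ s : Set ((α ⊕ β) → M), A.Definable L s → om'.toFun s = lam.toFun s := by
      intro s hs
      show om.toFun ((fun v : (α ⊕ β) → M => σ ∘ v) ⁻¹' s) = lam.toFun s
      have hfix : (fun v : (α ⊕ β) → M => σ ∘ v) ⁻¹' s = s := by
        ext v
        rw [Set.mem_preimage]
        exact (KMAux.fix_mem σ hσA hs v).symm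
      rw [hfix]
      exact hom1 s hs
    have hom'2 : ∀ X : Set (α → M), (Set.univ : Set M).Definable L X →
        om'.toFun (cyl Sum.inl X) = mu.toFun X := by
      intro X hX
      show om.toFun ((fun v : (α ⊕ β) → M => σ ∘ v) ⁻¹' cyl Sum.inl X) = mu.toFun X
      have hcylpre : (fun v : (α ⊕ β) → M => σ ∘ v) ⁻¹' cyl Sum.inl X
          = cyl Sum.inl ((fun a : α → M => σ ∘ a) ⁻¹' X) := rfl
      rw [hcylpre, hom2 _ (mu_pre X hX).1, (mu_pre X hX).2]
    have hmem : om ∈ extSpace L A lam mu := ⟨hom1, hom2⟩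
    have hmem' : om' ∈ extSpace L A lam mu := ⟨hom'1, hom'2⟩
    have e1 := hdp om hmem {y : β → M | φ.Realize (Sum.elim y b)} (KMAux.defParam φ b)
    have e2 := hdp om' hmem' {y : β → M | φ.Realize (Sum.elim y c)} (KMAux.defParam φ c)
    have hkey : om'.toFun (cyl Sum.inr {y : β → M | φ.Realize (Sum.elim y c)})
        = om.toFun (cyl Sum.inr {y : β → M | φ.Realize (Sum.elim y b)}) := by
      show om.toFun ((fun v : (α ⊕ β) → M => σ ∘ v) ⁻¹'
        cyl Sum.inr {y : β → M | φ.Realize (Sum.elim y c)}) = _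
      have h1 : (fun v : (α ⊕ β) → M => σ ∘ v) ⁻¹'
          cyl Sum.inr {y : β → M | φ.Realize (Sum.elim y c)}
          = cyl Sum.inr ((fun y : β → M => σ ∘ y) ⁻¹' {y : β → M | φ.Realize (Sum.elim y c)}) :=
        rfl
      have h2 : (fun y : β → M => σ ∘ y) ⁻¹' {y : β → M | φ.Realize (Sum.elim y c)}
          = {y : β → M | φ.Realize (Sum.elim y b)} := by
        ext y
        simp only [Set.mem_preimage, Set.mem_setOf_eq]
        have helim : Sum.elim (σ ∘ y) c = σ ∘ Sum.elim y b := by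
          funext z
          rcases z with z | i
          · rfl
          · exact (hσb i).symm
        rw [helim, FirstOrder.Language.StrongHomClass.realize_formula]
      rw [h1, h2]
    show nu.toFun {a : β → M | φ.Realize (Sum.elim a b)}
      = nu.toFun {a : β → M | φ.Realize (Sum.elim a c)}
    rw [← e1, ← hkey, e2]
end

section
/- Let A ⊆ M and let ν ∈ 𝔐_y(M) be a global Keisler measure that is smooth over A. Then for every global Keisler measure μ ∈ 𝔐_x(M), μ ≥_{E,A} ν. -/
open FirstOrder

/-- A global Keisler measure `μ ∈ 𝔐_α(M)` is smooth over `A`: any global Keisler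
measure agreeing with `μ` on `A`-definable sets agrees with `μ` on all (globally)
definable sets. -/
def SmoothOver (L : FirstOrder.Language) {M : Type*} [L.Structure M] (A : Set M)
    {α : Type*} (mu : KeislerMeasure L M (Set.univ : Set M) α) : Prop :=
  ∀ mu' : KeislerMeasure L M (Set.univ : Set M) α,
    (∀ s : Set (α → M), A.Definable L s → mu'.toFun s = mu.toFun s) →
    ∀ s : Set (α → M), (Set.univ : Set M).Definable L s → mu'.toFun s = mu.toFun s

section KMAux

variable {ι : Type*}

/-- bounded function -/
def KMBdd (f : ι → ℝ) : Prop := ∃ C : ℝ, ∀ x, |f x| ≤ C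

lemma KMBdd.add {f g : ι → ℝ} (hf : KMBdd f) (hg : KMBdd g) : KMBdd (f + g) := by
  obtain ⟨C, hC⟩ := hf; obtain ⟨D, hD⟩ := hg
  exact ⟨C + D, fun x => (abs_add_le _ _).trans (add_le_add (hC x) (hD x))⟩

lemma KMBdd.smul (c : ℝ) {f : ι → ℝ} (hf : KMBdd f) : KMBdd (c • f) := by
  obtain ⟨C, hC⟩ := hf
  refine ⟨|c| * C, fun x => ?_⟩
  have : |(c • f) x| = |c| * |f x| := by simp [abs_mul]
  rw [this]
  exact mul_le_mul_of_nonneg_left (hC x) (abs_nonneg c)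

lemma KMBdd.neg {f : ι → ℝ} (hf : KMBdd f) : KMBdd (-f) := by
  have := hf.smul (-1)
  simpa using this

lemma KMBdd.sub {f g : ι → ℝ} (hf : KMBdd f) (hg : KMBdd g) : KMBdd (f - g) := by
  have := hf.add hg.neg; simpa [sub_eq_add_neg] using this

lemma kmBdd_const (c : ℝ) : KMBdd (fun _ : ι => c) := ⟨|c|, fun _ => le_rfl⟩

lemma kmBdd_zero : KMBdd (0 : ι → ℝ) := ⟨0, fun _ => by simp⟩

lemma kmBdd_indicator (S : Set ι) : KMBdd (S.indicator (1 : ι → ℝ)) := by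
  refine ⟨1, fun x => ?_⟩
  by_cases h : x ∈ S <;> simp [Set.indicator_apply, h]

lemma kmBdd_of_bounds {f : ι → ℝ} {a b : ℝ} (h1 : ∀ x, a ≤ f x) (h2 : ∀ x, f x ≤ b) :
    KMBdd f := by
  refine ⟨max |a| |b|, fun x => ?_⟩
  rw [abs_le]
  constructor
  · calc -(max |a| |b|) ≤ -|a| := by simp
      _ ≤ a := neg_abs_le a
      _ ≤ f x := h1 x
  · calc f x ≤ b := h2 x
      _ ≤ |b| := le_abs_self b
      _ ≤ max |a| |b| := le_max_right _ _

/-- Atoms of the finite Boolean algebra generated by `S 0, ..., S (n-1)`. -/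
def kmAtom {n : ℕ} (S : Fin n → Set ι) (σ : Fin n → Bool) : Set ι :=
  ⋂ i, (bif σ i then S i else (S i)ᶜ)

lemma kmAtom_mem_iff {n : ℕ} {S : Fin n → Set ι} {σ : Fin n → Bool} {x : ι}
    (hx : x ∈ kmAtom S σ) (i : Fin n) : x ∈ S i ↔ σ i = true := by
  have h := Set.mem_iInter.1 hx i
  cases hσ : σ i <;> rw [hσ] at h <;> simp_all

lemma kmAtom_succ {n : ℕ} (S : Fin (n + 1) → Set ι) (a : Bool) (τ : Fin n → Bool) :
    kmAtom S (Fin.cons a τ) =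
      (bif a then S 0 else (S 0)ᶜ) ∩ kmAtom (fun i => S i.succ) τ := by
  ext x
  simp only [kmAtom, Set.mem_iInter, Set.mem_inter_iff, Fin.forall_fin_succ,
    Fin.cons_zero, Fin.cons_succ]

/-- The data of a finitely additive probability measure `κ` on the algebra `Def`. -/
structure KMData (Def : Set ι → Prop) (κ : Set ι → ℝ) : Prop where
  duniv : Def Set.univ
  dcompl : ∀ s, Def s → Def sᶜ
  dinter : ∀ s t, Def s → Def t → Def (s ∩ t)
  kuniv : κ Set.univ = 1
  knonneg : ∀ s, Def s → 0 ≤ κ s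
  kcompl : ∀ s, Def s → κ sᶜ = 1 - κ s
  kadd : ∀ s t, Def s → Def t → κ (s ∪ t) = κ s + κ t - κ (s ∩ t)

namespace KMData

variable {Def : Set ι → Prop} {κ : Set ι → ℝ} (h : KMData Def κ)

include h

lemma kempty : κ ∅ = 0 := by
  have h1 := h.kcompl _ h.duniv
  rw [Set.compl_univ, h.kuniv] at h1
  linarith

lemma def_iInter : ∀ {n : ℕ} (g : Fin n → Set ι), (∀ i, Def (g i)) → Def (⋂ i, g i) := by
  intro n
  induction n with
  | zero =>
    intro g _
    rw [Set.iInter_of_empty]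
    exact h.duniv
  | succ n ih =>
    intro g hg
    have he : (⋂ i, g i) = g 0 ∩ ⋂ i : Fin n, g i.succ := by
      ext x
      simp only [Set.mem_iInter, Set.mem_inter_iff, Fin.forall_fin_succ]
    rw [he]
    exact h.dinter _ _ (hg 0) (ih _ (fun i => hg i.succ))

lemma def_kmAtom {n : ℕ} {S : Fin n → Set ι} (hS : ∀ i, Def (S i)) (σ : Fin n → Bool) :
    Def (kmAtom S σ) := by
  refine h.def_iInter _ (fun i => ?_)
  cases hσ : σ i
  · simpa using h.dcompl _ (hS i)
  · simpa using hS i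

lemma split {P Q : Set ι} (hP : Def P) (hQ : Def Q) :
    κ (P ∩ Q) + κ (P ∩ Qᶜ) = κ P := by
  have h1 : (P ∩ Q) ∪ (P ∩ Qᶜ) = P := by
    rw [← Set.inter_union_distrib_left, Set.union_compl_self, Set.inter_univ]
  have h2 : (P ∩ Q) ∩ (P ∩ Qᶜ) = ∅ := by
    ext x; simp only [Set.mem_inter_iff, Set.mem_compl_iff, Set.mem_empty_iff_false, iff_false]
    tauto
  have h3 := h.kadd (P ∩ Q) (P ∩ Qᶜ) (h.dinter _ _ hP hQ) (h.dinter _ _ hP (h.dcompl _ hQ))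
  rw [h1, h2, h.kempty] at h3
  linarith

lemma part : ∀ {n : ℕ} (S : Fin n → Set ι), (∀ i, Def (S i)) → ∀ R, Def R →
    κ R = ∑ σ : Fin n → Bool, κ (R ∩ kmAtom S σ) := by
  intro n
  induction n with
  | zero =>
    intro S _ R _
    rw [Fintype.sum_unique]
    have hA : ∀ σ : Fin 0 → Bool, R ∩ kmAtom S σ = R := fun σ => by
      rw [kmAtom, Set.iInter_of_empty, Set.inter_univ]
    rw [hA]
  | succ n ih =>
    intro S hS R hR
    have he : ∑ σ : Fin (n + 1) → Bool, κ (R ∩ kmAtom S σ) =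
        ∑ p : Bool × (Fin n → Bool), κ (R ∩ kmAtom S (Fin.cons p.1 p.2)) := by
      refine (Fintype.sum_equiv (Fin.consEquiv (fun _ => Bool))
        (fun p => κ (R ∩ kmAtom S (Fin.cons p.1 p.2)))
        (fun σ => κ (R ∩ kmAtom S σ)) (fun p => rfl)).symm
    rw [he, Fintype.sum_prod_type, Fintype.sum_bool]
    have hre : ∀ (b : Bool) (τ : Fin n → Bool), R ∩ kmAtom S (Fin.cons b τ) =
        (R ∩ kmAtom (fun i => S i.succ) τ) ∩ (bif b then S 0 else (S 0)ᶜ) := by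
      intro b τ
      rw [kmAtom_succ]
      ext x
      simp only [Set.mem_inter_iff]
      tauto
    have hstep : ∀ τ : Fin n → Bool,
        κ (R ∩ kmAtom S (Fin.cons true τ)) + κ (R ∩ kmAtom S (Fin.cons false τ)) =
          κ (R ∩ kmAtom (fun i => S i.succ) τ) := by
      intro τ
      rw [hre true τ, hre false τ]
      exact h.split (h.dinter _ _ hR (h.def_kmAtom (fun i => hS i.succ) τ)) (hS 0)
    rw [← Finset.sum_add_distrib]
    rw [Finset.sum_congr rfl (fun τ _ => hstep τ)]
    exact ih (fun i => S i.succ) (fun i => hS i.succ) R hR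

lemma core {n : ℕ} (c : Fin n → ℝ) (S : Fin n → Set ι) (hS : ∀ i, Def (S i)) (b : ℝ)
    (hb : ∀ x, b ≤ ∑ i, c i * (S i).indicator 1 x) :
    b ≤ ∑ i, c i * κ (S i) := by
  classical
  have hAt : ∀ σ, Def (kmAtom S σ) := fun σ => h.def_kmAtom hS σ
  have hsum1 : ∑ σ : Fin n → Bool, κ (kmAtom S σ) = 1 := by
    have hp := h.part S hS Set.univ h.duniv
    simp only [Set.univ_inter] at hp
    rw [← hp, h.kuniv]
  have h2 : ∀ (i : Fin n) (σ : Fin n → Bool),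
      S i ∩ kmAtom S σ = bif σ i then kmAtom S σ else ∅ := by
    intro i σ
    cases hσ : σ i
    · simp only [cond_false]
      rw [Set.eq_empty_iff_forall_notMem]
      rintro x ⟨hxS, hxA⟩
      have := (kmAtom_mem_iff hxA i).1 hxS
      rw [hσ] at this
      exact Bool.false_ne_true this
    · simp only [cond_true]
      exact Set.inter_eq_right.mpr (fun x hx => (kmAtom_mem_iff hx i).2 hσ)
  have h3 : ∑ i, c i * κ (S i) =
      ∑ σ : Fin n → Bool, (∑ i, (bif σ i then c i else 0)) * κ (kmAtom S σ) := by
    calc ∑ i, c i * κ (S i)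
        = ∑ i, ∑ σ : Fin n → Bool, c i * κ (S i ∩ kmAtom S σ) := by
          refine Finset.sum_congr rfl (fun i _ => ?_)
          rw [h.part S hS (S i) (hS i), Finset.mul_sum]
      _ = ∑ σ : Fin n → Bool, ∑ i, c i * κ (S i ∩ kmAtom S σ) := Finset.sum_comm
      _ = ∑ σ : Fin n → Bool, ∑ i, (bif σ i then c i else 0) * κ (kmAtom S σ) := by
          refine Finset.sum_congr rfl (fun σ _ => Finset.sum_congr rfl (fun i _ => ?_))
          rw [h2 i σ]
          cases hσ : σ i
          · simp [h.kempty]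
          · simp
      _ = ∑ σ : Fin n → Bool, (∑ i, (bif σ i then c i else 0)) * κ (kmAtom S σ) := by
          refine Finset.sum_congr rfl (fun σ _ => ?_)
          rw [Finset.sum_mul]
  have hb2 : b = ∑ σ : Fin n → Bool, b * κ (kmAtom S σ) := by
    rw [← Finset.mul_sum, hsum1, mul_one]
  rw [h3, hb2]
  refine Finset.sum_le_sum (fun σ _ => ?_)
  rcases Set.eq_empty_or_nonempty (kmAtom S σ) with hemp | ⟨x, hx⟩
  · rw [hemp, h.kempty, mul_zero, mul_zero]
  · refine mul_le_mul_of_nonneg_right ?_ (h.knonneg _ (hAt σ))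
    have hw : ∑ i, (bif σ i then c i else 0) = ∑ i, c i * (S i).indicator 1 x := by
      refine Finset.sum_congr rfl (fun i _ => ?_)
      cases hσ : σ i
      · have hxS : x ∉ S i := fun hc => by
          have := (kmAtom_mem_iff hx i).1 hc; rw [hσ] at this; exact Bool.false_ne_true this
        simp [Set.indicator_apply, hxS]
      · have hxS : x ∈ S i := (kmAtom_mem_iff hx i).2 hσ
        simp [Set.indicator_apply, hxS]
    rw [hw]
    exact hb x

end KMData

end KMAux

section KMFunctional

variable {ι : Type*}

/-- Upper representations of `f` by simple functions over the algebra `Def`. -/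
def kmRep (Def : Set ι → Prop) (κ : Set ι → ℝ) (f : ι → ℝ) : Set ℝ :=
  {r | ∃ (n : ℕ) (c : Fin n → ℝ) (S : Fin n → Set ι), (∀ i, Def (S i)) ∧
    (∀ x, f x ≤ ∑ i, c i * (S i).indicator 1 x) ∧ r = ∑ i, c i * κ (S i)}

theorem KMData.exists_functional {Def : Set ι → Prop} {κ : Set ι → ℝ}
    (h : KMData Def κ) :
    ∃ g : (ι → ℝ) → ℝ,
      (∀ f₁ f₂, KMBdd f₁ → KMBdd f₂ → g (f₁ + f₂) = g f₁ + g f₂) ∧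
      (∀ (c : ℝ) f, KMBdd f → g (c • f) = c * g f) ∧
      (∀ f₁ f₂, KMBdd f₁ → KMBdd f₂ → (∀ x, f₁ x ≤ f₂ x) → g f₁ ≤ g f₂) ∧
      (∀ S, Def S → g (S.indicator 1) = κ S) := by
  classical
  let Sub : Submodule ℝ (ι → ℝ) :=
    { carrier := {f | KMBdd f}
      add_mem' := fun hf hg => hf.add hg
      zero_mem' := kmBdd_zero
      smul_mem' := fun c f hf => hf.smul c }
  have memSub : ∀ {f : ι → ℝ}, KMBdd f → f ∈ Sub := fun hf => hf
  let p : ↥Sub → ℝ := fun f => sInf (kmRep Def κ f.1)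
  have hone : ∀ (f : ι → ℝ) (c : ℝ) (S : Set ι), Def S →
      (∀ x, f x ≤ c * S.indicator 1 x) → (c * κ S) ∈ kmRep Def κ f := by
    intro f c S hS hle
    refine ⟨1, fun _ => c, fun _ => S, fun _ => hS, fun x => ?_, ?_⟩
    · rw [Fin.sum_univ_one]; exact hle x
    · rw [Fin.sum_univ_one]
  have hlow : ∀ (f : ι → ℝ) (b : ℝ), (∀ x, b ≤ f x) → ∀ r ∈ kmRep Def κ f, b ≤ r := by
    rintro f b hb r ⟨n, c, S, hS, hle, rfl⟩
    exact h.core c S hS b (fun x => (hb x).trans (hle x))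
  have hbdd : ∀ f : ↥Sub, BddBelow (kmRep Def κ f.1) := by
    intro f
    obtain ⟨C, hC⟩ := f.2
    exact ⟨-C, fun r hr => hlow f.1 (-C) (fun x => (abs_le.1 (hC x)).1) r hr⟩
  have hne : ∀ f : ↥Sub, (kmRep Def κ f.1).Nonempty := by
    intro f
    obtain ⟨C, hC⟩ := f.2
    refine ⟨C * κ Set.univ, hone f.1 C Set.univ h.duniv (fun x => ?_)⟩
    rw [Set.indicator_univ]
    simpa using (abs_le.1 (hC x)).2
  have hple : ∀ (f : ↥Sub) (r : ℝ), r ∈ kmRep Def κ f.1 → p f ≤ r :=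
    fun f r hr => csInf_le (hbdd f) hr
  have hpge : ∀ (f : ↥Sub) (b : ℝ), (∀ x, b ≤ f.1 x) → b ≤ p f :=
    fun f b hb => le_csInf (hne f) (hlow f.1 b hb)
  have hadd : ∀ f g : ↥Sub, p (f + g) ≤ p f + p g := by
    intro f g
    have key : ∀ r ∈ kmRep Def κ f.1, ∀ s ∈ kmRep Def κ g.1, p (f + g) ≤ r + s := by
      rintro r ⟨n, c, S, hS, hle, rfl⟩ s ⟨m, d, T, hT, hle', rfl⟩
      refine hple (f + g) _ ⟨n + m, Fin.append c d, Fin.append S T, ?_, ?_, ?_⟩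
      · intro i
        refine Fin.addCases (fun i => ?_) (fun j => ?_) i
        · rw [Fin.append_left]; exact hS i
        · rw [Fin.append_right]; exact hT j
      · intro x
        have hfg : (f + g).1 x = f.1 x + g.1 x := rfl
        rw [hfg, Fin.sum_univ_add]
        simp only [Fin.append_left, Fin.append_right]
        exact add_le_add (hle x) (hle' x)
      · rw [Fin.sum_univ_add]
        simp only [Fin.append_left, Fin.append_right]
    have h1 : ∀ s ∈ kmRep Def κ g.1, p (f + g) - s ≤ p f :=
      fun s hs => le_csInf (hne f) (fun r hr => sub_le_iff_le_add.2 (key r hr s hs))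
    have h2 : p (f + g) - p f ≤ p g :=
      le_csInf (hne g) (fun s hs => sub_le_comm.1 (h1 s hs))
    linarith
  have half : ∀ (c : ℝ), 0 < c → ∀ f : ↥Sub, p (c • f) ≤ c * p f := by
    intro c hc f
    have key : ∀ r ∈ kmRep Def κ f.1, p (c • f) ≤ c * r := by
      rintro r ⟨n, co, S, hS, hle, rfl⟩
      have hmem2 : (∑ i, c * co i * κ (S i)) ∈ kmRep Def κ (c • f).1 := by
        refine ⟨n, fun i => c * co i, S, hS, fun x => ?_, rfl⟩
        have h1 : (c • f).1 x = c * f.1 x := rfl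
        rw [h1]
        calc c * f.1 x ≤ c * ∑ i, co i * (S i).indicator 1 x :=
              mul_le_mul_of_nonneg_left (hle x) hc.le
          _ = ∑ i, c * co i * (S i).indicator 1 x := by
              rw [Finset.mul_sum]; exact Finset.sum_congr rfl fun i _ => (mul_assoc _ _ _).symm
      calc p (c • f) ≤ ∑ i, c * co i * κ (S i) := hple _ _ hmem2
        _ = c * ∑ i, co i * κ (S i) := by
            rw [Finset.mul_sum]; exact Finset.sum_congr rfl fun i _ => mul_assoc _ _ _
    have hdiv : p (c • f) / c ≤ p f :=
      le_csInf (hne f) (fun r hr => (div_le_iff₀' hc).2 (key r hr))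
    calc p (c • f) = c * (p (c • f) / c) := by field_simp
      _ ≤ c * p f := mul_le_mul_of_nonneg_left hdiv hc.le
  have hsmul : ∀ (c : ℝ), 0 < c → ∀ f : ↥Sub, p (c • f) = c * p f := by
    intro c hc f
    refine le_antisymm (half c hc f) ?_
    have h2 := half c⁻¹ (inv_pos.2 hc) (c • f)
    have h3 : c⁻¹ • (c • f) = f := by rw [smul_smul, inv_mul_cancel₀ hc.ne', one_smul]
    rw [h3] at h2
    calc c * p f ≤ c * (c⁻¹ * p (c • f)) := mul_le_mul_of_nonneg_left h2 hc.le
      _ = p (c • f) := by field_simp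
  have hp0 : ∀ f : ↥Sub, (∀ x, f.1 x ≤ 0) → p f ≤ 0 := by
    intro f hf
    refine hple f 0 ⟨0, Fin.elim0, Fin.elim0, fun i => i.elim0, fun x => ?_, by simp⟩
    simpa using hf x
  have hf0 : ∀ x : ((0 : ↥Sub →ₗ[ℝ] ℝ).toPMap ⊥).domain,
      ((0 : ↥Sub →ₗ[ℝ] ℝ).toPMap ⊥) x ≤ p ↑x := by
    intro x
    erw [LinearMap.toPMap_apply]
    simp only [LinearMap.zero_apply]
    have hx0 : (↑x : ↥Sub) = 0 := (Submodule.mem_bot ℝ).1 x.2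
    rw [hx0]
    exact hpge 0 0 (fun x => le_rfl)
  obtain ⟨G, -, hG⟩ := exists_extension_of_le_sublinear
    ((0 : ↥Sub →ₗ[ℝ] ℝ).toPMap ⊥) p hsmul hadd hf0
  have hGmono : ∀ f g : ↥Sub, (∀ x, f.1 x ≤ g.1 x) → G f ≤ G g := by
    intro f g hfg
    have h1 : G (f - g) ≤ p (f - g) := hG _
    have h2 : p (f - g) ≤ 0 := hp0 _ (fun x => sub_nonpos.2 (hfg x))
    have h3 : G (f - g) = G f - G g := map_sub G f g
    linarith [h1.trans h2, h3]
  have hGpin : ∀ (S : Set ι) (hS : Def S),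
      G ⟨S.indicator 1, kmBdd_indicator S⟩ = κ S := by
    intro S hS
    have h1 : G ⟨S.indicator 1, kmBdd_indicator S⟩ ≤ κ S := by
      have hm := hone (S.indicator 1) 1 S hS (fun x => by rw [one_mul])
      rw [one_mul] at hm
      exact (hG _).trans (hple _ _ hm)
    have h2 : κ S ≤ G ⟨S.indicator 1, kmBdd_indicator S⟩ := by
      have hm := hone (-(S.indicator 1)) (-1) S hS (fun x => by simp)
      rw [neg_one_mul] at hm
      have h3 : G (-⟨S.indicator 1, kmBdd_indicator S⟩) ≤ -κ S := (hG _).trans (hple _ _ hm)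
      rw [map_neg] at h3
      linarith
    exact le_antisymm h1 h2
  refine ⟨fun f => if hf : KMBdd f then G ⟨f, memSub hf⟩ else 0, ?_, ?_, ?_, ?_⟩
  · intro f1 f2 h1 h2
    simp only [dif_pos (h1.add h2), dif_pos h1, dif_pos h2]
    have he : (⟨f1 + f2, memSub (h1.add h2)⟩ : ↥Sub) = ⟨f1, memSub h1⟩ + ⟨f2, memSub h2⟩ := rfl
    rw [he, map_add]
  · intro c f hf
    simp only [dif_pos (hf.smul c), dif_pos hf]
    have he : (⟨c • f, memSub (hf.smul c)⟩ : ↥Sub) = c • ⟨f, memSub hf⟩ := rfl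
    rw [he, map_smul, smul_eq_mul]
  · intro f1 f2 h1 h2 hle
    simp only [dif_pos h1, dif_pos h2]
    exact hGmono _ _ hle
  · intro S hS
    simp only [dif_pos (kmBdd_indicator S)]
    exact hGpin S hS

end KMFunctional


lemma kmBdd_one {ι : Type*} : KMBdd (1 : ι → ℝ) := kmBdd_const 1

lemma km_fun_sub {ι : Type*} {g : (ι → ℝ) → ℝ}
    (hadd : ∀ f₁ f₂, KMBdd f₁ → KMBdd f₂ → g (f₁ + f₂) = g f₁ + g f₂)
    (hsmul : ∀ (c : ℝ) f, KMBdd f → g (c • f) = c * g f)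
    {f₁ f₂ : ι → ℝ} (h1 : KMBdd f₁) (h2 : KMBdd f₂) :
    g (f₁ - f₂) = g f₁ - g f₂ := by
  have e : f₁ - f₂ = f₁ + (-1 : ℝ) • f₂ := by funext x; simp [sub_eq_add_neg]
  rw [e, hadd _ _ h1 (h2.smul (-1)), hsmul (-1) _ h2]
  ring

/-- The slice of a set in the variables `α ⊕ β` at a point `a : α → M`. -/
def kmSlice {M α β : Type*} (S : Set (α ⊕ β → M)) (a : α → M) : Set (β → M) :=
  {b | Sum.elim a b ∈ S}


/-- A measure smooth over `A` is extension dominated over `A` by every global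
Keisler measure: if `ν ∈ 𝔐_β(M)` is smooth over `A`, then `μ ≥_{E,A} ν` for all
`μ ∈ 𝔐_α(M)`. -/
theorem extDom_of_smooth {L : FirstOrder.Language} {M : Type*} [L.Structure M]
    (A : Set M) {α β : Type*}
    (nu : KeislerMeasure L M (Set.univ : Set M) β)
    (hsmooth : SmoothOver L A nu) :
    ∀ mu : KeislerMeasure L M (Set.univ : Set M) α, ExtDomOver L A mu nu := by
  intro mu
  classical
  -- finitely additive measure data for `mu` and `nu` on globally definable sets
  have hμdata : KMData (fun s : Set (α → M) => (Set.univ : Set M).Definable L s) mu.toFun :=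
    ⟨Set.definable_univ, fun s hs => hs.compl, fun s t hs ht => hs.inter ht,
      mu.measure_univ, mu.nonneg', mu.compl', mu.union_inter'⟩
  have hνdata : KMData (fun s : Set (β → M) => (Set.univ : Set M).Definable L s) nu.toFun :=
    ⟨Set.definable_univ, fun s hs => hs.compl, fun s t hs ht => hs.inter ht,
      nu.measure_univ, nu.nonneg', nu.compl', nu.union_inter'⟩
  obtain ⟨Iμ, hμadd, hμsmul, hμmono, hμpin⟩ := hμdata.exists_functional
  obtain ⟨Iν, hνadd, hνsmul, hνmono, hνpin⟩ := hνdata.exists_functional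
  -- basic facts about the functionals
  have hμ1 : Iμ 1 = 1 := by
    have := hμpin Set.univ (Set.definable_univ)
    rwa [Set.indicator_univ, mu.measure_univ] at this
  have hν1 : Iν 1 = 1 := by
    have := hνpin Set.univ (Set.definable_univ)
    rwa [Set.indicator_univ, nu.measure_univ] at this
  have hμ0 : Iμ 0 = 0 := by
    have := hμsmul 0 0 kmBdd_zero
    simpa using this
  have hν0 : Iν 0 = 0 := by
    have := hνsmul 0 0 kmBdd_zero
    simpa using this
  have hμconst : ∀ c : ℝ, Iμ (fun _ => c) = c := by
    intro c
    have e : (fun _ : α → M => c) = c • (1 : (α → M) → ℝ) := by funext a; simp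
    rw [e, hμsmul c 1 kmBdd_one, hμ1, mul_one]
  -- the fibrewise integral
  set out : Set (α ⊕ β → M) → (α → M) → ℝ :=
    fun S a => Iν ((kmSlice S a).indicator 1) with hout_def
  have houtmem : ∀ S a, 0 ≤ out S a ∧ out S a ≤ 1 := by
    intro S a
    constructor
    · have h1 := hνmono 0 ((kmSlice S a).indicator 1) kmBdd_zero (kmBdd_indicator _)
        (fun b => by by_cases hb : b ∈ kmSlice S a <;> simp [Set.indicator_apply, hb])
      rw [hν0] at h1
      exact h1
    · have h1 := hνmono ((kmSlice S a).indicator 1) 1 (kmBdd_indicator _) kmBdd_one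
        (fun b => by by_cases hb : b ∈ kmSlice S a <;> simp [Set.indicator_apply, hb])
      rw [hν1] at h1
      exact h1
  have houtBdd : ∀ S, KMBdd (out S) :=
    fun S => kmBdd_of_bounds (fun a => (houtmem S a).1) (fun a => (houtmem S a).2)
  -- the coupling λ
  refine ⟨⟨fun S => Iμ (out S), ?_, ?_, ?_, ?_⟩, ?_, ?_⟩
  · -- measure_univ
    have h1 : out Set.univ = 1 := by
      funext a
      show Iν ((kmSlice Set.univ a).indicator 1) = 1
      rw [show kmSlice (Set.univ : Set (α ⊕ β → M)) a = Set.univ from rfl,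
        Set.indicator_univ, hν1]
    show Iμ (out Set.univ) = 1
    rw [h1, hμ1]
  · -- nonneg'
    intro S _
    have h1 := hμmono 0 (out S) kmBdd_zero (houtBdd S) (fun a => (houtmem S a).1)
    rw [hμ0] at h1
    exact h1
  · -- compl'
    intro S _
    have h1 : out Sᶜ = (1 : (α → M) → ℝ) - out S := by
      funext a
      show Iν ((kmSlice Sᶜ a).indicator 1) = 1 - out S a
      rw [show kmSlice Sᶜ a = (kmSlice S a)ᶜ from rfl, Set.indicator_compl,
        km_fun_sub hνadd hνsmul kmBdd_one (kmBdd_indicator _), hν1]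
    show Iμ (out Sᶜ) = 1 - Iμ (out S)
    rw [h1, km_fun_sub hμadd hμsmul kmBdd_one (houtBdd S), hμ1]
  · -- union_inter'
    intro s t _ _
    have h1 : out (s ∪ t) = out s + out t - out (s ∩ t) := by
      funext a
      show Iν ((kmSlice (s ∪ t) a).indicator 1) = out s a + out t a - out (s ∩ t) a
      set u := kmSlice s a with hu
      set v := kmSlice t a with hv
      have e1 : kmSlice (s ∪ t) a = u ∪ v := rfl
      have e2 : kmSlice (s ∩ t) a = u ∩ v := rfl
      have hpt : (u ∪ v).indicator (1 : (β → M) → ℝ) + (u ∩ v).indicator 1 =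
          u.indicator 1 + v.indicator 1 := by
        funext b
        by_cases hb1 : b ∈ u <;> by_cases hb2 : b ∈ v <;>
          simp [Set.indicator_apply, hb1, hb2]
      have h2 := hνadd _ _ (kmBdd_indicator (u ∪ v)) (kmBdd_indicator (u ∩ v))
      have h3 := hνadd _ _ (kmBdd_indicator u) (kmBdd_indicator v)
      have h4 := congrArg Iν hpt
      rw [h2, h3] at h4
      have e3 : out s a = Iν (u.indicator 1) := rfl
      have e4 : out t a = Iν (v.indicator 1) := rfl
      have e5 : out (s ∩ t) a = Iν ((u ∩ v).indicator 1) := by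
        show Iν ((kmSlice (s ∩ t) a).indicator 1) = Iν ((u ∩ v).indicator 1)
        rw [e2]
      rw [e1, e3, e4, e5]
      linarith
    show Iμ (out (s ∪ t)) = Iμ (out s) + Iμ (out t) - Iμ (out (s ∩ t))
    rw [h1, km_fun_sub hμadd hμsmul ((houtBdd s).add (houtBdd t)) (houtBdd (s ∩ t)),
      hμadd _ _ (houtBdd s) (houtBdd t)]
  · -- first marginal
    intro X hX
    have h1 : out (cyl Sum.inl X) = X.indicator 1 := by
      funext a
      show Iν ((kmSlice (cyl (Sum.inl : α → α ⊕ β) X) a).indicator 1) = X.indicator 1 a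
      by_cases hXa : a ∈ X
      · have e : kmSlice (cyl (Sum.inl : α → α ⊕ β) X) a = Set.univ := by
          ext b
          simp only [kmSlice, cyl, Set.mem_setOf_eq, Set.mem_univ, iff_true]
          exact hXa
        rw [e, Set.indicator_univ, hν1, Set.indicator_of_mem hXa]
        rfl
      · have e : kmSlice (cyl (Sum.inl : α → α ⊕ β) X) a = ∅ := by
          ext b
          simp only [kmSlice, cyl, Set.mem_setOf_eq, Set.mem_empty_iff_false, iff_false]
          exact hXa
        rw [e]
        have hz : ((∅ : Set (β → M)).indicator (1 : (β → M) → ℝ)) = 0 := by funext b; simp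
        rw [hz, hν0, Set.indicator_of_notMem hXa]
    show Iμ (out (cyl Sum.inl X)) = mu.toFun X
    rw [h1, hμpin X (hX.mono (Set.subset_univ A))]
  · -- second bullet: extension measures project to ν
    rintro om ⟨hom1, hom2⟩ Y hY
    have hmargr : ∀ Z : Set (β → M), out (cyl Sum.inr Z) = fun _ => Iν (Z.indicator 1) := by
      intro Z
      funext a
      show Iν ((kmSlice (cyl Sum.inr Z) a).indicator 1) = Iν (Z.indicator 1)
      rw [show kmSlice (cyl Sum.inr Z) a = Z from rfl]
    -- push `om` forward to a Keisler measure on `β`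
    set nu' : KeislerMeasure L M (Set.univ : Set M) β :=
      { toFun := fun Z => om.toFun (cyl Sum.inr Z)
        measure_univ := by
          show om.toFun (cyl (Sum.inr : β → α ⊕ β) Set.univ) = 1
          rw [show cyl (Sum.inr : β → α ⊕ β) (Set.univ : Set (β → M)) = Set.univ from rfl]
          exact om.measure_univ
        nonneg' := fun Z hZ => om.nonneg' _ (hZ.preimage_comp Sum.inr)
        compl' := fun Z hZ => by
          show om.toFun (cyl Sum.inr Zᶜ) = 1 - om.toFun (cyl Sum.inr Z)
          rw [show cyl (Sum.inr : β → α ⊕ β) Zᶜ = (cyl Sum.inr Z)ᶜ from rfl]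
          exact om.compl' _ (hZ.preimage_comp Sum.inr)
        union_inter' := fun Z W hZ hW => by
          show om.toFun (cyl Sum.inr (Z ∪ W)) =
            om.toFun (cyl Sum.inr Z) + om.toFun (cyl Sum.inr W) - om.toFun (cyl Sum.inr (Z ∩ W))
          rw [show cyl (Sum.inr : β → α ⊕ β) (Z ∪ W) = cyl Sum.inr Z ∪ cyl Sum.inr W from rfl,
            show cyl (Sum.inr : β → α ⊕ β) (Z ∩ W) = cyl Sum.inr Z ∩ cyl Sum.inr W from rfl]
          exact om.union_inter' _ _ (hZ.preimage_comp Sum.inr) (hW.preimage_comp Sum.inr) } with hnu'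
    have hagree : ∀ Z : Set (β → M), A.Definable L Z → nu'.toFun Z = nu.toFun Z := by
      intro Z hZ
      show om.toFun (cyl Sum.inr Z) = nu.toFun Z
      rw [hom1 (cyl Sum.inr Z) (hZ.preimage_comp Sum.inr)]
      show Iμ (out (cyl Sum.inr Z)) = nu.toFun Z
      rw [hmargr Z, hνpin Z (hZ.mono (Set.subset_univ A)), hμconst]
    exact hsmooth nu' hagree Y hY
end

section
/- Let M₀ ≼ M be an elementary substructure and let μ ∈ 𝔐_x(M), ν ∈ 𝔐_y(M) be global Keisler measures. If μ is finitely satisfiable in M₀ and μ ≥_{E,M₀} ν (extension domination over the underlying set of M₀), then ν is finitely satisfiable in M₀. -/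
open FirstOrder

/-- A global Keisler measure `μ ∈ 𝔐_α(M)` is finitely satisfiable in a set
`N ⊆ M`: every definable set of positive measure contains a tuple from `N^α`. -/
def FinitelySatisfiableIn (L : FirstOrder.Language) {M : Type*} [L.Structure M]
    (N : Set M) {α : Type*} (mu : KeislerMeasure L M (Set.univ : Set M) α) : Prop :=
  ∀ X : Set (α → M), (Set.univ : Set M).Definable L X → 0 < mu.toFun X →
    ∃ a ∈ X, ∀ i, a i ∈ N

/-! ### Auxiliary material -/

namespace EDaux

open FirstOrder.Language

attribute [local instance] Classical.propDecidable

variable {α β γ : Type*}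

/-- Realization of a formula only depends on its free variables. -/
theorem realize_congr_freeVar {L' : FirstOrder.Language} {N : Type*} [L'.Structure N]
    {δ : Type*} [DecidableEq δ] {φ : L'.Formula δ} {v₁ v₂ : δ → N}
    (h : ∀ z ∈ φ.freeVarFinset, v₁ z = v₂ z) : φ.Realize v₁ ↔ φ.Realize v₂ := by
  have hsub : ↑φ.freeVarFinset ⊆ (↑φ.freeVarFinset : Set δ) := Set.Subset.refl _
  have h1 := BoundedFormula.realize_restrictFreeVar' (M := N) hsub (v := v₁)
    (xs := (default : Fin 0 → N))
  have h2 := BoundedFormula.realize_restrictFreeVar' (M := N) hsub (v := v₂)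
    (xs := (default : Fin 0 → N))
  show BoundedFormula.Realize φ v₁ default ↔ BoundedFormula.Realize φ v₂ default
  have hv : v₁ ∘ (Subtype.val : (↑φ.freeVarFinset : Set δ) → δ)
      = v₂ ∘ (Subtype.val :  (↑φ.freeVarFinset : Set δ) → δ) := by
    funext z
    exact h z.1 (by exact_mod_cast z.2)
  rw [← h1, ← h2, hv]

/-- Realizing the existential closure over the `Fin k` part. -/
theorem realize_exsProj {L' : FirstOrder.Language} {N : Type*} [L'.Structure N]
    {δ : Type*} {k : ℕ} (Ψ : L'.Formula (δ ⊕ Fin k)) (v : δ → N) :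
    (BoundedFormula.exs (BoundedFormula.relabel id Ψ)).Realize v ↔
      ∃ w : Fin k → N, Ψ.Realize (Sum.elim v w) := by
  rw [BoundedFormula.realize_exs]
  constructor
  · rintro ⟨xs, hxs⟩
    rw [BoundedFormula.realize_relabel] at hxs
    refine ⟨xs ∘ Fin.castAdd 0, ?_⟩
    show BoundedFormula.Realize Ψ _ default
    convert hxs using 2
    rfl
  · rintro ⟨w, hw⟩
    refine ⟨w ∘ Fin.cast (by simp), ?_⟩
    rw [BoundedFormula.realize_relabel]
    show BoundedFormula.Realize Ψ _ _
    have hw' : BoundedFormula.Realize Ψ (Sum.elim v w) default := hw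
    convert hw' using 2
    rfl

variable {L : FirstOrder.Language} {M : Type*} [L.Structure M]

/-- The projection of a subset of `M^(α⊕β)` to `M^α`. -/
def projS (D : Set (α ⊕ β → M)) : Set (α → M) := {a | ∃ b : β → M, Sum.elim a b ∈ D}

theorem cyl_definable {A : Set M} (f : α → β) {S : Set (α → M)}
    (h : A.Definable L S) : A.Definable L (cyl f S) :=
  h.preimage_comp f

/-- Projections of definable sets are definable (arbitrary variable index types). -/
theorem definable_projS {A : Set M} {D : Set (α ⊕ β → M)} (hD : A.Definable L D) :
    A.Definable L (projS D) := by
  rcases isEmpty_or_nonempty M with hM | hM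
  · rcases isEmpty_or_nonempty α with hα | hα
    · rcases Set.eq_empty_or_nonempty (projS D) with h | h
      · rw [h]; exact Set.definable_empty
      · obtain ⟨a, ha⟩ := h
        have : projS D = Set.univ := by
          apply Set.eq_univ_of_forall
          intro x
          have : x = a := funext fun i => isEmptyElim i
          rw [this]; exact ha
        rw [this]; exact Set.definable_univ
    · have : projS D = ∅ := by
        apply Set.eq_empty_iff_forall_notMem.mpr
        intro a _
        exact hM.false (a (Classical.arbitrary α))
      rw [this]; exact Set.definable_empty
  · classical
    obtain ⟨φ, rfl⟩ := hD
    set V : Finset β := φ.freeVarFinset.preimage Sum.inr Sum.inr_injective.injOn with hV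
    set k := Fintype.card ↥V with hk
    let e : ↥V ≃ Fin k := Fintype.equivFin ↥V
    set r : β → Fin (k+1) := fun bb => if h : bb ∈ V then (e ⟨bb, h⟩).castSucc
      else Fin.last k with hr
    set ψ : (L[[↥A]]).Formula (α ⊕ Fin (k+1)) := φ.relabel (Sum.map id r) with hψ
    have himg : A.Definable L ((fun g : α ⊕ Fin (k+1) → M => g ∘ Sum.inl) ''
        setOf ψ.Realize) :=
      Set.Definable.image_comp_sumInl_fin (k+1) ⟨ψ, rfl⟩
    have heq : projS (setOf φ.Realize) =
        (fun g : α ⊕ Fin (k+1) → M => g ∘ Sum.inl) '' setOf ψ.Realize := by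
      ext a
      constructor
      · rintro ⟨b, hb⟩
        let w : Fin (k+1) → M := fun i =>
          if h : i = Fin.last k then Classical.arbitrary M
          else b (e.symm (i.castPred h)).1
        refine ⟨Sum.elim a w, ?_, funext fun x => rfl⟩
        show ψ.Realize (Sum.elim a w)
        rw [hψ, Formula.realize_relabel]
        have hfv : ∀ z ∈ φ.freeVarFinset,
            ((Sum.elim a w) ∘ Sum.map id r) z = (Sum.elim a b) z := by
          rintro (x | bb) hz
          · rfl
          · have hbbV : bb ∈ V := by
              rw [hV]; exact Finset.mem_preimage.mpr hz
            show w (r bb) = b bb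
            rw [hr]
            simp only [dif_pos hbbV]
            have hne : (e ⟨bb, hbbV⟩).castSucc ≠ Fin.last k :=
              (Fin.castSucc_lt_last _).ne
            show (if h : (e ⟨bb, hbbV⟩).castSucc = Fin.last k then _ else
              b (e.symm ((e ⟨bb, hbbV⟩).castSucc.castPred h)).1) = b bb
            rw [dif_neg hne]
            simp
        exact (realize_congr_freeVar hfv).mpr hb
      · rintro ⟨g, hg, rfl⟩
        refine ⟨fun bb => g (Sum.inr (r bb)), ?_⟩
        have hg' : φ.Realize (g ∘ Sum.map id r) := (Formula.realize_relabel).mp hg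
        have : Sum.elim (g ∘ Sum.inl) (fun bb => g (Sum.inr (r bb)))
            = g ∘ Sum.map id r := by
          funext z; rcases z with z | z <;> rfl
        show φ.Realize _
        rw [this]; exact hg'
    change A.Definable L (projS (setOf φ.Realize)); rw [heq]; exact himg

/-- Fibers of definable sets over tuples from the parameter set are definable. -/
theorem definable_fiber {A : Set M} {D : Set (α ⊕ β → M)} (hD : A.Definable L D)
    {a : α → M} (ha : ∀ i, a i ∈ A) :
    A.Definable L {b : β → M | Sum.elim a b ∈ D} := by
  obtain ⟨φ, rfl⟩ := hD
  classical
  set tf : (α ⊕ β) → (L[[↥A]]).Term β :=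
    Sum.elim (fun i => ((L.con (⟨a i, ha i⟩ : A))).term) (fun j => Term.var j) with htf
  refine ⟨BoundedFormula.subst φ tf, ?_⟩
  ext b
  have hass : (fun z => Term.realize b (tf z)) = Sum.elim a b := by
    funext z
    rcases z with i | j
    · show Term.realize b ((L.con (⟨a i, ha i⟩ : A)).term) = a i
      exact Term.realize_con
    · rfl
  constructor
  · intro h
    show BoundedFormula.Realize (BoundedFormula.subst φ tf) b default
    rw [BoundedFormula.realize_subst, hass]
    exact h
  · intro h
    have h' : BoundedFormula.Realize (BoundedFormula.subst φ tf) b default := h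
    rw [BoundedFormula.realize_subst, hass] at h'
    exact h'

/-- Tarski–Vaught: a nonempty `M₀`-definable set contains a tuple from `M₀`. -/
theorem tv_witness {M₀ : L.ElementarySubstructure M} {s : Set (γ → M)}
    (hs : ((M₀ : Set M)).Definable L s) (hne : s.Nonempty) :
    ∃ g ∈ s, ∀ i, g i ∈ M₀ := by
  classical
  rcases isEmpty_or_nonempty γ with hγ | hγ
  · obtain ⟨g, hg⟩ := hne
    exact ⟨g, hg, fun i => isEmptyElim i⟩
  obtain ⟨g₀, hg₀⟩ := hne
  haveI : Nonempty M := ⟨g₀ (Classical.arbitrary γ)⟩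
  rw [Set.definable_iff_exists_formula_sum] at hs
  obtain ⟨Φ, hΦ⟩ := hs
  set V : Finset γ := Φ.freeVarFinset.preimage Sum.inr Sum.inr_injective.injOn with hV
  set k := Fintype.card ↥V with hk
  let e : ↥V ≃ Fin k := Fintype.equivFin ↥V
  set r : γ → Fin (k+1) := fun z => if h : z ∈ V then (e ⟨z, h⟩).castSucc
    else Fin.last k with hr
  set Ψ : L.Formula (↥(M₀ : Set M) ⊕ Fin (k+1)) := Φ.relabel (Sum.map id r) with hΨ
  set θ : L.Formula ↥(M₀ : Set M) := BoundedFormula.exs (BoundedFormula.relabel id Ψ)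
    with hθ
  have hg₀' : Φ.Realize (Sum.elim (Subtype.val) g₀) := by
    have := hΦ ▸ hg₀
    exact this
  have hθM : θ.Realize (Subtype.val : ↥(M₀ : Set M) → M) := by
    rw [hθ, realize_exsProj]
    let w : Fin (k+1) → M := fun i =>
      if h : i = Fin.last k then Classical.arbitrary M
      else g₀ (e.symm (i.castPred h)).1
    refine ⟨w, ?_⟩
    rw [hΨ, Formula.realize_relabel]
    have hfv : ∀ z ∈ Φ.freeVarFinset,
        ((Sum.elim Subtype.val w) ∘ Sum.map id r) z = (Sum.elim Subtype.val g₀) z := by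
      rintro (x | z) hz
      · rfl
      · have hzV : z ∈ V := by rw [hV]; exact Finset.mem_preimage.mpr hz
        show w (r z) = g₀ z
        rw [hr]
        simp only [dif_pos hzV]
        have hne : (e ⟨z, hzV⟩).castSucc ≠ Fin.last k := (Fin.castSucc_lt_last _).ne
        show (if h : (e ⟨z, hzV⟩).castSucc = Fin.last k then _ else
          g₀ (e.symm ((e ⟨z, hzV⟩).castSucc.castPred h)).1) = g₀ z
        rw [dif_neg hne]
        simp
    exact (realize_congr_freeVar hfv).mpr hg₀'
  haveI : Nonempty ↥M₀ := M₀.instNonempty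
  let f := M₀.subtype
  let j : ↥(M₀ : Set M) → ↥M₀ := fun x => ⟨x.1, x.2⟩
  have hfj : (⇑f) ∘ j = (Subtype.val : ↥(M₀ : Set M) → M) := rfl
  have hθM₀ : θ.Realize j := by
    have := f.map_formula θ j
    rw [hfj] at this
    exact this.mp hθM
  rw [hθ, realize_exsProj] at hθM₀
  obtain ⟨ws, hws⟩ := hθM₀
  have hΨM : Ψ.Realize (Sum.elim (Subtype.val : ↥(M₀ : Set M) → M)
      (fun i => ((ws i : ↥M₀) : M))) := by
    have := f.map_formula Ψ (Sum.elim j ws)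
    have hcomp : (⇑f) ∘ (Sum.elim j ws)
        = Sum.elim (Subtype.val : ↥(M₀ : Set M) → M) (fun i => ((ws i : ↥M₀) : M)) := by
      funext z; rcases z with z | z <;> rfl
    rw [hcomp] at this
    exact this.mpr hws
  rw [hΨ, Formula.realize_relabel] at hΨM
  refine ⟨fun z => ((ws (r z) : ↥M₀) : M), ?_, fun z => (ws (r z)).2⟩
  rw [hΦ]
  show Φ.Realize _
  have : (Sum.elim (Subtype.val : ↥(M₀ : Set M) → M) (fun i => ((ws i : ↥M₀) : M)))
      ∘ Sum.map id r
      = Sum.elim (Subtype.val : ↥(M₀ : Set M) → M) (fun z => ((ws (r z) : ↥M₀) : M)) := by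
    funext z; rcases z with z | z <;> rfl
  rw [this] at hΨM
  exact hΨM

/-! ### Basic facts about Keisler measures -/

variable {A : Set M}

theorem km_empty (κ : KeislerMeasure L M A γ) : κ.toFun ∅ = 0 := by
  have h := κ.compl' Set.univ Set.definable_univ
  rw [Set.compl_univ, κ.measure_univ] at h
  linarith

theorem km_add_disjoint (κ : KeislerMeasure L M A γ) {u v : Set (γ → M)}
    (hu : A.Definable L u) (hv : A.Definable L v) (h : u ∩ v = ∅) :
    κ.toFun (u ∪ v) = κ.toFun u + κ.toFun v := by
  rw [κ.union_inter' u v hu hv, h, km_empty]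
  ring

theorem km_mono (κ : KeislerMeasure L M A γ) {u v : Set (γ → M)}
    (hu : A.Definable L u) (hv : A.Definable L v) (huv : u ⊆ v) :
    κ.toFun u ≤ κ.toFun v := by
  have hveq : v = u ∪ (v ∩ uᶜ) := by
    ext x
    constructor
    · intro hx
      by_cases hxu : x ∈ u
      · exact Or.inl hxu
      · exact Or.inr ⟨hx, hxu⟩
    · rintro (hx | ⟨hx, _⟩)
      · exact huv hx
      · exact hx
  have hdisj : u ∩ (v ∩ uᶜ) = ∅ := by
    ext x; simp only [Set.mem_inter_iff, Set.mem_compl_iff, Set.mem_empty_iff_false]; tauto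
  have hnn := κ.nonneg' (v ∩ uᶜ) (hv.inter hu.compl)
  calc κ.toFun u ≤ κ.toFun u + κ.toFun (v ∩ uᶜ) := by linarith
    _ = κ.toFun (u ∪ (v ∩ uᶜ)) := (km_add_disjoint κ hu (hv.inter hu.compl) hdisj).symm
    _ = κ.toFun v := by rw [← hveq]

theorem km_pos_nonempty (κ : KeislerMeasure L M A γ) {u : Set (γ → M)}
    (h : κ.toFun u ≠ 0) : u.Nonempty := by
  rcases Set.eq_empty_or_nonempty u with rfl | hne
  · exact absurd (km_empty κ) h
  · exact hne

/-- Partition summation for finitely additive measures. -/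
theorem km_partition_sum (κ : KeislerMeasure L M A γ) {ι : Type*} (I : Finset ι)
    (P : ι → Set (γ → M)) :
    (∀ i ∈ I, A.Definable L (P i)) →
    (∀ i ∈ I, ∀ j ∈ I, i ≠ j → P i ∩ P j = ∅) →
    ∀ s : Set (γ → M), A.Definable L s → s ⊆ (⋃ i ∈ I, P i) →
    κ.toFun s = ∑ i ∈ I, κ.toFun (P i ∩ s) := by
  classical
  induction I using Finset.induction_on with
  | empty =>
    intro _ _ s hs hcov
    have : s = ∅ := by
      apply Set.eq_empty_iff_forall_notMem.mpr
      intro x hx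
      simpa using hcov hx
    rw [this, km_empty, Finset.sum_empty]
  | @insert a I ha ih =>
    intro hdef hdisj s hs hcov
    have hPa : A.Definable L (P a) := hdef a (Finset.mem_insert_self a I)
    have hs2 : A.Definable L (s ∩ (P a)ᶜ) := hs.inter hPa.compl
    have hsplit : s = (P a ∩ s) ∪ (s ∩ (P a)ᶜ) := by
      ext x
      constructor
      · intro hx
        by_cases hxa : x ∈ P a
        · exact Or.inl ⟨hxa, hx⟩
        · exact Or.inr ⟨hx, hxa⟩
      · rintro (⟨_, hx⟩ | ⟨hx, _⟩) <;> exact hx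
    have hdisj2 : (P a ∩ s) ∩ (s ∩ (P a)ᶜ) = ∅ := by
      ext x
      simp only [Set.mem_inter_iff, Set.mem_compl_iff, Set.mem_empty_iff_false]
      tauto
    have hcov2 : s ∩ (P a)ᶜ ⊆ ⋃ i ∈ I, P i := by
      rintro x ⟨hx, hxa⟩
      have := hcov hx
      simp only [Set.mem_iUnion] at this ⊢
      obtain ⟨i, hi, hxi⟩ := this
      rcases Finset.mem_insert.mp hi with rfl | hiI
      · exact absurd hxi hxa
      · exact ⟨i, hiI, hxi⟩
    have hrec := ih (fun i hi => hdef i (Finset.mem_insert_of_mem hi))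
      (fun i hi j hj hij =>
        hdisj i (Finset.mem_insert_of_mem hi) j (Finset.mem_insert_of_mem hj) hij)
      (s ∩ (P a)ᶜ) hs2 hcov2
    have hterm : ∀ i ∈ I, P i ∩ (s ∩ (P a)ᶜ) = P i ∩ s := by
      intro i hi
      have hia : P i ∩ P a = ∅ := hdisj i (Finset.mem_insert_of_mem hi) a
        (Finset.mem_insert_self a I) (by rintro rfl; exact ha hi)
      ext x
      simp only [Set.mem_inter_iff, Set.mem_compl_iff]
      constructor
      · rintro ⟨h1, h2, _⟩; exact ⟨h1, h2⟩
      · rintro ⟨h1, h2⟩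
        refine ⟨h1, h2, fun hxa => ?_⟩
        have : x ∈ P i ∩ P a := ⟨h1, hxa⟩
        rw [hia] at this
        exact this
    calc κ.toFun s = κ.toFun ((P a ∩ s) ∪ (s ∩ (P a)ᶜ)) := by rw [← hsplit]
      _ = κ.toFun (P a ∩ s) + κ.toFun (s ∩ (P a)ᶜ) :=
        km_add_disjoint κ (hPa.inter hs) hs2 hdisj2
      _ = κ.toFun (P a ∩ s) + ∑ i ∈ I, κ.toFun (P i ∩ (s ∩ (P a)ᶜ)) := by rw [hrec]
      _ = κ.toFun (P a ∩ s) + ∑ i ∈ I, κ.toFun (P i ∩ s) := by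
          congr 1
          exact Finset.sum_congr rfl fun i hi => by rw [hterm i hi]
      _ = ∑ i ∈ insert a I, κ.toFun (P i ∩ s) := by rw [Finset.sum_insert ha]

/-! ### Boolean atoms of a finite family of sets -/

variable {W : Type*}

/-- The Boolean atom of the family `C` determined by the subfamily `ρ`. -/
def atomOf (C ρ : Finset (Set W)) : Set W :=
  ⋂ s ∈ C, (if s ∈ ρ then s else sᶜ)

theorem mem_atomOf {C ρ : Finset (Set W)} {w : W} :
    w ∈ atomOf C ρ ↔ ∀ s ∈ C, (if s ∈ ρ then w ∈ s else w ∉ s) := by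
  simp only [atomOf, Set.mem_iInter]
  refine forall₂_congr fun s _ => ?_
  split_ifs
  · rfl
  · simp

theorem atomOf_subset_of_mem {C ρ : Finset (Set W)} {s : Set W} (hs : s ∈ C)
    (h : s ∈ ρ) : atomOf C ρ ⊆ s := by
  intro w hw
  have := mem_atomOf.mp hw s hs
  rwa [if_pos h] at this

theorem atomOf_subset_compl {C ρ : Finset (Set W)} {s : Set W} (hs : s ∈ C)
    (h : s ∉ ρ) : atomOf C ρ ⊆ sᶜ := by
  intro w hw
  have := mem_atomOf.mp hw s hs
  rwa [if_neg h] at this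

theorem mem_atomOf_filter (C : Finset (Set W)) (w : W) :
    w ∈ atomOf C (C.filter (fun s => w ∈ s)) := by
  rw [mem_atomOf]
  intro s hs
  split_ifs with h
  · exact (Finset.mem_filter.mp h).2
  · intro hw
    exact h (Finset.mem_filter.mpr ⟨hs, hw⟩)

theorem atomOf_eq_filter {C ρ : Finset (Set W)} (hρ : ρ ⊆ C) {w : W}
    (h : w ∈ atomOf C ρ) : ρ = C.filter (fun s => w ∈ s) := by
  ext s
  rw [Finset.mem_filter]
  constructor
  · intro hsρ
    have hsC := hρ hsρ
    have := mem_atomOf.mp h s hsC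
    rw [if_pos hsρ] at this
    exact ⟨hsC, this⟩
  · rintro ⟨hsC, hws⟩
    by_contra hsρ
    have := mem_atomOf.mp h s hsC
    rw [if_neg hsρ] at this
    exact this hws

theorem atomOf_disjoint {C ρ ρ' : Finset (Set W)} (hρ : ρ ∈ C.powerset)
    (hρ' : ρ' ∈ C.powerset) (hne : ρ ≠ ρ') : atomOf C ρ ∩ atomOf C ρ' = ∅ := by
  apply Set.eq_empty_iff_forall_notMem.mpr
  rintro w ⟨h1, h2⟩
  exact hne ((atomOf_eq_filter (Finset.mem_powerset.mp hρ) h1).trans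
    (atomOf_eq_filter (Finset.mem_powerset.mp hρ') h2).symm)

theorem atomOf_cover (C : Finset (Set W)) (s : Set W) :
    s ⊆ ⋃ ρ ∈ C.powerset, atomOf C ρ := by
  intro w _
  simp only [Set.mem_iUnion]
  exact ⟨C.filter (fun t => w ∈ t), Finset.mem_powerset.mpr (Finset.filter_subset _ _),
    mem_atomOf_filter C w⟩

theorem atomOf_definable (C ρ : Finset (Set (γ → M))) :
    (∀ s ∈ C, A.Definable L s) → A.Definable L (atomOf C ρ) := by
  classical
  induction C using Finset.induction_on with
  | empty =>
    intro _
    simp only [atomOf, Finset.notMem_empty, Set.iInter_of_empty, Set.iInter_univ]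
    exact Set.definable_univ
  | @insert a C ha ih =>
    intro hC
    have : atomOf (insert a C) ρ = (if a ∈ ρ then a else aᶜ) ∩ atomOf C ρ := by
      rw [atomOf, atomOf, Finset.set_biInter_insert]
    rw [this]
    refine Set.Definable.inter ?_ (ih fun s hs => hC s (Finset.mem_insert_of_mem hs))
    split_ifs
    · exact hC a (Finset.mem_insert_self a C)
    · exact (hC a (Finset.mem_insert_self a C)).compl

end EDaux

namespace EDaux

open FirstOrder.Language

attribute [local instance] Classical.propDecidable

/-- The finite-stage approximation measure. -/
theorem stage_measure {L : FirstOrder.Language} {M : Type*} [L.Structure M]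
    (M₀ : L.ElementarySubstructure M) {α β : Type*}
    (mu : KeislerMeasure L M (Set.univ : Set M) α)
    (lam : KeislerMeasure L M (M₀ : Set M) (α ⊕ β))
    (hfs : FinitelySatisfiableIn L (M₀ : Set M) mu)
    (hlam : ∀ X : Set (α → M), (M₀ : Set M).Definable L X →
      lam.toFun (cyl Sum.inl X) = mu.toFun X)
    (S : Finset (Set (α ⊕ β → M))) (T : Finset (Set (α → M))) :
    ∃ om : Set (α ⊕ β → M) → ℝ,
      (∀ D, 0 ≤ om D) ∧ (∀ D, om D ≤ 1) ∧ om Set.univ = 1 ∧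
      (∀ D, om Dᶜ = 1 - om D) ∧
      (∀ D D', om (D ∪ D') = om D + om D' - om (D ∩ D')) ∧
      (∀ s ∈ S, (M₀ : Set M).Definable L s → om s = lam.toFun s) ∧
      (∀ X ∈ T, (Set.univ : Set M).Definable L X → om (cyl Sum.inl X) = mu.toFun X) ∧
      (∀ D : Set (α ⊕ β → M), (∀ g ∈ D, ∃ i, g i ∉ (M₀ : Set M)) → om D = 0) := by
  classical
  set J : Finset (Set (α ⊕ β → M)) := S.filter (fun s => (M₀ : Set M).Definable L s)
    with hJ
  have hJdef : ∀ s ∈ J, (M₀ : Set M).Definable L s := fun s hs =>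
    (Finset.mem_filter.mp hs).2
  set XT : Finset (Set (α → M)) := T.filter (fun X => (Set.univ : Set M).Definable L X)
    with hXT
  have hXdef : ∀ X ∈ XT, (Set.univ : Set M).Definable L X := fun X hX =>
    (Finset.mem_filter.mp hX).2
  have hatomJ : ∀ ρ, (M₀ : Set M).Definable L (atomOf J ρ) := fun ρ =>
    atomOf_definable J ρ hJdef
  set EF : Finset (Set (α → M)) := J.powerset.image (fun ρ => projS (atomOf J ρ))
    with hEF
  have hEdef : ∀ X ∈ EF, (M₀ : Set M).Definable L X := by
    intro X hX
    obtain ⟨ρ, _, rfl⟩ := Finset.mem_image.mp hX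
    exact definable_projS (hatomJ ρ)
  have hatomE : ∀ t, (M₀ : Set M).Definable L (atomOf EF t) := fun t =>
    atomOf_definable EF t hEdef
  have hatomEu : ∀ t, (Set.univ : Set M).Definable L (atomOf EF t) := fun t =>
    (hatomE t).mono (Set.subset_univ _)
  have hatomX : ∀ σ, (Set.univ : Set M).Definable L (atomOf XT σ) := fun σ =>
    atomOf_definable XT σ hXdef
  set G : Finset (Set (α → M)) → Set (α ⊕ β → M) := fun t => cyl Sum.inl (atomOf EF t)
    with hG
  have hGdef : ∀ t, (M₀ : Set M).Definable L (G t) := fun t =>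
    cyl_definable Sum.inl (hatomE t)
  set Lf : Finset (Set (α ⊕ β → M)) → Finset (Set (α → M)) → ℝ :=
    fun ρ t => lam.toFun (atomOf J ρ ∩ G t) with hLfdef
  set cc : Finset (Set (α → M)) → Finset (Set (α → M)) → ℝ :=
    fun σ t => if mu.toFun (atomOf EF t) = 0 then 0
      else mu.toFun (atomOf XT σ ∩ atomOf EF t) / mu.toFun (atomOf EF t) with hccdef
  set wt : Finset (Set (α ⊕ β → M)) → Finset (Set (α → M)) → Finset (Set (α → M)) → ℝ :=
    fun ρ σ t => Lf ρ t * cc σ t with hwtdef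
  have hLf_nonneg : ∀ ρ t, 0 ≤ Lf ρ t := fun ρ t =>
    lam.nonneg' _ ((hatomJ ρ).inter (hGdef t))
  have hcc_nonneg : ∀ σ t, 0 ≤ cc σ t := by
    intro σ t
    rw [hccdef]
    dsimp only
    split_ifs with h
    · exact le_refl 0
    · exact div_nonneg (mu.nonneg' _ ((hatomX σ).inter (hatomEu t)))
        (mu.nonneg' _ (hatomEu t))
  have hwt_nonneg : ∀ ρ σ t, 0 ≤ wt ρ σ t := fun ρ σ t =>
    mul_nonneg (hLf_nonneg ρ t) (hcc_nonneg σ t)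
  have hLf_le : ∀ ρ t, Lf ρ t ≤ mu.toFun (atomOf EF t) := by
    intro ρ t
    have h1 : Lf ρ t ≤ lam.toFun (G t) :=
      km_mono lam ((hatomJ ρ).inter (hGdef t)) (hGdef t) Set.inter_subset_right
    rwa [hG, hlam _ (hatomE t)] at h1
  have hLf_zero : ∀ ρ t, mu.toFun (atomOf EF t) = 0 → Lf ρ t = 0 := fun ρ t h =>
    le_antisymm (h ▸ hLf_le ρ t) (hLf_nonneg ρ t)
  have hXE_zero : ∀ σ t, mu.toFun (atomOf EF t) = 0 →
      mu.toFun (atomOf XT σ ∩ atomOf EF t) = 0 := by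
    intro σ t h
    refine le_antisymm ?_ (mu.nonneg' _ ((hatomX σ).inter (hatomEu t)))
    calc mu.toFun (atomOf XT σ ∩ atomOf EF t) ≤ mu.toFun (atomOf EF t) :=
          km_mono mu ((hatomX σ).inter (hatomEu t)) (hatomEu t) Set.inter_subset_right
      _ = 0 := h
  have hJdisj : ∀ ρ ∈ J.powerset, ∀ ρ' ∈ J.powerset, ρ ≠ ρ' →
      atomOf J ρ ∩ atomOf J ρ' = ∅ := fun ρ hρ ρ' hρ' h => atomOf_disjoint hρ hρ' h
  have hXdisj : ∀ σ ∈ XT.powerset, ∀ σ' ∈ XT.powerset, σ ≠ σ' →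
      atomOf XT σ ∩ atomOf XT σ' = ∅ := fun σ hσ σ' hσ' h => atomOf_disjoint hσ hσ' h
  have hEdisj : ∀ t ∈ EF.powerset, ∀ t' ∈ EF.powerset, t ≠ t' →
      atomOf EF t ∩ atomOf EF t' = ∅ := fun t ht t' ht' h => atomOf_disjoint ht ht' h
  have hGdisj : ∀ t ∈ EF.powerset, ∀ t' ∈ EF.powerset, t ≠ t' → G t ∩ G t' = ∅ := by
    intro t ht t' ht' hne
    apply Set.eq_empty_iff_forall_notMem.mpr
    rintro g ⟨h1, h2⟩
    have hmem : (fun i => g (Sum.inl i)) ∈ atomOf EF t ∩ atomOf EF t' := ⟨h1, h2⟩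
    rw [hEdisj t ht t' ht' hne] at hmem
    exact hmem
  have hGcover : ∀ s : Set (α ⊕ β → M), s ⊆ ⋃ t ∈ EF.powerset, G t := by
    intro s g _
    simp only [Set.mem_iUnion]
    refine ⟨EF.filter (fun X => (fun i => g (Sum.inl i)) ∈ X),
      Finset.mem_powerset.mpr (Finset.filter_subset _ _), ?_⟩
    exact mem_atomOf_filter EF _
  have hsum_Lf : ∀ t, (∑ ρ ∈ J.powerset, Lf ρ t) = mu.toFun (atomOf EF t) := by
    intro t
    have hpart := km_partition_sum lam J.powerset (fun ρ => atomOf J ρ)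
      (fun ρ _ => hatomJ ρ) hJdisj (G t) (hGdef t) (atomOf_cover J (G t))
    rw [hLfdef]
    dsimp only
    rw [← hpart, hG]
    dsimp only
    exact hlam _ (hatomE t)
  have hsum_Lf_t : ∀ ρ, (∑ t ∈ EF.powerset, Lf ρ t) = lam.toFun (atomOf J ρ) := by
    intro ρ
    have hpart := km_partition_sum lam EF.powerset G (fun t _ => hGdef t) hGdisj
      (atomOf J ρ) (hatomJ ρ) (hGcover _)
    rw [hpart, hLfdef]
    dsimp only
    exact Finset.sum_congr rfl fun t _ => by rw [Set.inter_comm]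
  have hmulcc : ∀ σ t, mu.toFun (atomOf EF t) * cc σ t
      = mu.toFun (atomOf XT σ ∩ atomOf EF t) := by
    intro σ t
    rw [hccdef]
    dsimp only
    split_ifs with h
    · rw [mul_zero, hXE_zero σ t h]
    · rw [mul_comm, div_mul_cancel₀ _ h]
  have hsum_cc : ∀ t, (∑ σ ∈ XT.powerset, cc σ t)
      = if mu.toFun (atomOf EF t) = 0 then 0 else 1 := by
    intro t
    split_ifs with h
    · refine Finset.sum_eq_zero fun σ _ => ?_
      rw [hccdef]
      dsimp only
      rw [if_pos h]
    · have hpart := km_partition_sum mu XT.powerset (fun σ => atomOf XT σ)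
        (fun σ _ => hatomX σ) hXdisj (atomOf EF t) (hatomEu t)
        (atomOf_cover XT _)
      have hstep : (∑ σ ∈ XT.powerset, cc σ t)
          = (∑ σ ∈ XT.powerset, mu.toFun (atomOf XT σ ∩ atomOf EF t))
            / mu.toFun (atomOf EF t) := by
        rw [Finset.sum_div]
        refine Finset.sum_congr rfl fun σ _ => ?_
        rw [hccdef]
        dsimp only
        rw [if_neg h]
      rw [hstep, ← hpart, div_self h]
  have hK : ∀ ρ, (∑ σ ∈ XT.powerset, ∑ t ∈ EF.powerset, wt ρ σ t)
      = lam.toFun (atomOf J ρ) := by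
    intro ρ
    rw [Finset.sum_comm]
    have hstep : ∀ t ∈ EF.powerset, (∑ σ ∈ XT.powerset, wt ρ σ t) = Lf ρ t := by
      intro t _
      have h1 : (∑ σ ∈ XT.powerset, wt ρ σ t) = Lf ρ t * ∑ σ ∈ XT.powerset, cc σ t := by
        rw [Finset.mul_sum, hwtdef]
      rw [h1, hsum_cc t]
      split_ifs with h
      · rw [mul_zero, hLf_zero ρ t h]
      · rw [mul_one]
    rw [Finset.sum_congr rfl hstep, hsum_Lf_t ρ]
  have hK' : ∀ σ, (∑ ρ ∈ J.powerset, ∑ t ∈ EF.powerset, wt ρ σ t)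
      = mu.toFun (atomOf XT σ) := by
    intro σ
    rw [Finset.sum_comm]
    have hstep : ∀ t ∈ EF.powerset, (∑ ρ ∈ J.powerset, wt ρ σ t)
        = mu.toFun (atomOf XT σ ∩ atomOf EF t) := by
      intro t _
      have h1 : (∑ ρ ∈ J.powerset, wt ρ σ t)
          = (∑ ρ ∈ J.powerset, Lf ρ t) * cc σ t := by
        rw [Finset.sum_mul, hwtdef]
      rw [h1, hsum_Lf t, hmulcc σ t]
    rw [Finset.sum_congr rfl hstep]
    have hpart := km_partition_sum mu EF.powerset (fun t => atomOf EF t)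
      (fun t _ => hatomEu t) hEdisj (atomOf XT σ) (hatomX σ)
      (atomOf_cover EF _)
    rw [hpart]
    exact Finset.sum_congr rfl fun t _ => by rw [Set.inter_comm]
  have htotal : (∑ ρ ∈ J.powerset, ∑ σ ∈ XT.powerset, ∑ t ∈ EF.powerset, wt ρ σ t)
      = 1 := by
    rw [Finset.sum_congr rfl (fun ρ _ => hK ρ)]
    have hpart := km_partition_sum lam J.powerset (fun ρ => atomOf J ρ)
      (fun ρ _ => hatomJ ρ) hJdisj Set.univ Set.definable_univ
      (atomOf_cover J _)
    rw [lam.measure_univ] at hpart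
    rw [hpart]
    exact Finset.sum_congr rfl fun ρ _ => by rw [Set.inter_univ]
  set Cpt : Finset (Set (α ⊕ β → M)) → Finset (Set (α → M)) → Prop :=
    fun ρ σ => ∃ g : α ⊕ β → M, g ∈ atomOf J ρ ∧ g ∈ cyl Sum.inl (atomOf XT σ) ∧
      ∀ i, g i ∈ (M₀ : Set M) with hCptdef
  have hcompat : ∀ ρ ∈ J.powerset, ∀ σ t, wt ρ σ t ≠ 0 → Cpt ρ σ := by
    intro ρ hρ σ t hw
    have hLfne : Lf ρ t ≠ 0 := by
      intro h
      apply hw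
      rw [hwtdef]
      dsimp only
      rw [h, zero_mul]
    have hccne : cc σ t ≠ 0 := by
      intro h
      apply hw
      rw [hwtdef]
      dsimp only
      rw [h, mul_zero]
    have hGne : mu.toFun (atomOf EF t) ≠ 0 := by
      intro h
      apply hccne
      rw [hccdef]
      dsimp only
      rw [if_pos h]
    have hnum : mu.toFun (atomOf XT σ ∩ atomOf EF t) ≠ 0 := by
      intro h
      apply hccne
      rw [hccdef]
      dsimp only
      rw [if_neg hGne, h, zero_div]
    have hpos : 0 < mu.toFun (atomOf XT σ ∩ atomOf EF t) :=
      lt_of_le_of_ne (mu.nonneg' _ ((hatomX σ).inter (hatomEu t))) (Ne.symm hnum)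
    obtain ⟨a, ⟨haX, haE⟩, haM⟩ := hfs _ ((hatomX σ).inter (hatomEu t)) hpos
    have hLfne2 : lam.toFun (atomOf J ρ ∩ G t) ≠ 0 := by
      intro h
      apply hLfne
      rw [hLfdef]
      dsimp only
      exact h
    have hne2 : (atomOf J ρ ∩ G t).Nonempty := km_pos_nonempty lam hLfne2
    obtain ⟨g1, hg1J, hg1G⟩ := hne2
    have ha1E : (fun i => g1 (Sum.inl i)) ∈ atomOf EF t := hg1G
    have ha1P : (fun i => g1 (Sum.inl i)) ∈ projS (atomOf J ρ) := by
      refine ⟨fun j => g1 (Sum.inr j), ?_⟩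
      have hgeq : Sum.elim (fun i => g1 (Sum.inl i)) (fun j => g1 (Sum.inr j)) = g1 := by
        funext z; rcases z with z | z <;> rfl
      rw [hgeq]
      exact hg1J
    have hPE : projS (atomOf J ρ) ∈ EF := by
      rw [hEF]
      exact Finset.mem_image.mpr ⟨ρ, hρ, rfl⟩
    have hsub : atomOf EF t ⊆ projS (atomOf J ρ) := by
      by_cases hmem : projS (atomOf J ρ) ∈ t
      · exact atomOf_subset_of_mem hPE hmem
      · exact absurd ha1P (atomOf_subset_compl hPE hmem ha1E)
    obtain ⟨b0, hb0⟩ := hsub haE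
    have hfib : (M₀ : Set M).Definable L {b : β → M | Sum.elim a b ∈ atomOf J ρ} :=
      definable_fiber (hatomJ ρ) haM
    obtain ⟨b, hbmem, hbM⟩ := tv_witness hfib ⟨b0, hb0⟩
    refine ⟨Sum.elim a b, hbmem, haX, ?_⟩
    rintro (i | j)
    · exact haM i
    · exact hbM j
  set dw : Finset (Set (α ⊕ β → M)) → Finset (Set (α → M)) → Finset (Set (α → M)) →
      Set (α ⊕ β → M) → ℝ :=
    fun ρ σ t D => if h : Cpt ρ σ then (if Classical.choose h ∈ D then wt ρ σ t else 0)
      else 0 with hdwdef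
  set om : Set (α ⊕ β → M) → ℝ :=
    fun D => ∑ ρ ∈ J.powerset, ∑ σ ∈ XT.powerset, ∑ t ∈ EF.powerset, dw ρ σ t D
    with homdef
  have hwt_zero : ∀ ρ ∈ J.powerset, ∀ σ t, ¬ Cpt ρ σ → wt ρ σ t = 0 := by
    intro ρ hρ σ t h
    by_contra hne
    exact h (hcompat ρ hρ σ t hne)
  have hdw_nonneg : ∀ ρ σ t D, 0 ≤ dw ρ σ t D := by
    intro ρ σ t D
    rw [hdwdef]
    dsimp only
    split_ifs
    · exact hwt_nonneg ρ σ t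
    · exact le_refl 0
    · exact le_refl 0
  have hdw_univ : ∀ ρ ∈ J.powerset, ∀ σ t, dw ρ σ t Set.univ = wt ρ σ t := by
    intro ρ hρ σ t
    rw [hdwdef]
    dsimp only
    by_cases h : Cpt ρ σ
    · rw [dif_pos h, if_pos (Set.mem_univ _)]
    · rw [dif_neg h, hwt_zero ρ hρ σ t h]
  have hdw_le : ∀ ρ σ t D, dw ρ σ t D ≤ wt ρ σ t := by
    intro ρ σ t D
    rw [hdwdef]
    dsimp only
    split_ifs
    · exact le_refl _
    · exact hwt_nonneg ρ σ t
    · exact hwt_nonneg ρ σ t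
  have hdw_compl : ∀ ρ ∈ J.powerset, ∀ σ t D,
      dw ρ σ t Dᶜ = wt ρ σ t - dw ρ σ t D := by
    intro ρ hρ σ t D
    rw [hdwdef]
    dsimp only
    by_cases h : Cpt ρ σ
    · rw [dif_pos h, dif_pos h]
      generalize Classical.choose h = c
      by_cases hc : c ∈ D <;> simp [Set.mem_compl_iff, hc]
    · rw [dif_neg h, dif_neg h, hwt_zero ρ hρ σ t h]
      ring
  have hdw_ui : ∀ ρ σ t D D', dw ρ σ t (D ∪ D')
      = dw ρ σ t D + dw ρ σ t D' - dw ρ σ t (D ∩ D') := by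
    intro ρ σ t D D'
    rw [hdwdef]
    dsimp only
    by_cases h : Cpt ρ σ
    · rw [dif_pos h, dif_pos h, dif_pos h, dif_pos h]
      generalize Classical.choose h = c
      by_cases h1 : c ∈ D <;> by_cases h2 : c ∈ D' <;>
        simp [Set.mem_union, Set.mem_inter_iff, h1, h2]
    · rw [dif_neg h, dif_neg h, dif_neg h, dif_neg h]
      ring
  have hom_nonneg : ∀ D, 0 ≤ om D := by
    intro D
    rw [homdef]
    dsimp only
    exact Finset.sum_nonneg fun ρ _ => Finset.sum_nonneg fun σ _ =>
      Finset.sum_nonneg fun t _ => hdw_nonneg ρ σ t D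
  have hom_univ : om Set.univ = 1 := by
    rw [homdef]
    dsimp only
    rw [← htotal]
    exact Finset.sum_congr rfl fun ρ hρ => Finset.sum_congr rfl fun σ _ =>
      Finset.sum_congr rfl fun t _ => hdw_univ ρ hρ σ t
  have hom_le : ∀ D, om D ≤ 1 := by
    intro D
    rw [homdef]
    dsimp only
    rw [← htotal]
    exact Finset.sum_le_sum fun ρ _ => Finset.sum_le_sum fun σ _ =>
      Finset.sum_le_sum fun t _ => hdw_le ρ σ t D
  have hom_compl : ∀ D, om Dᶜ = 1 - om D := by
    intro D
    rw [homdef]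
    dsimp only
    rw [Finset.sum_congr rfl fun ρ hρ => Finset.sum_congr rfl fun σ _ =>
      Finset.sum_congr rfl fun t _ => hdw_compl ρ hρ σ t D]
    simp only [Finset.sum_sub_distrib]
    rw [htotal]
  have hom_ui : ∀ D D', om (D ∪ D') = om D + om D' - om (D ∩ D') := by
    intro D D'
    rw [homdef]
    dsimp only
    rw [Finset.sum_congr rfl fun ρ _ => Finset.sum_congr rfl fun σ _ =>
      Finset.sum_congr rfl fun t _ => hdw_ui ρ σ t D D']
    simp only [Finset.sum_add_distrib, Finset.sum_sub_distrib]
  have hom_s : ∀ s ∈ S, (M₀ : Set M).Definable L s → om s = lam.toFun s := by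
    intro s hsS hsdef
    have hsJ : s ∈ J := by
      rw [hJ]
      exact Finset.mem_filter.mpr ⟨hsS, hsdef⟩
    have hdw_s : ∀ ρ ∈ J.powerset, ∀ σ t,
        dw ρ σ t s = if s ∈ ρ then wt ρ σ t else 0 := by
      intro ρ hρ σ t
      rw [hdwdef]
      dsimp only
      by_cases h : Cpt ρ σ
      · rw [dif_pos h]
        obtain ⟨hgJ, _, _⟩ := Classical.choose_spec h
        by_cases hsρ : s ∈ ρ
        · rw [if_pos hsρ, if_pos (atomOf_subset_of_mem hsJ hsρ hgJ)]
        · rw [if_neg hsρ, if_neg (atomOf_subset_compl hsJ hsρ hgJ)]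
      · rw [dif_neg h, hwt_zero ρ hρ σ t h, ite_self]
    rw [homdef]
    dsimp only
    have h1 : ∀ ρ ∈ J.powerset, (∑ σ ∈ XT.powerset, ∑ t ∈ EF.powerset, dw ρ σ t s)
        = (if s ∈ ρ then lam.toFun (atomOf J ρ) else 0) := by
      intro ρ hρ
      rw [Finset.sum_congr rfl fun σ _ => Finset.sum_congr rfl fun t _ =>
        hdw_s ρ hρ σ t]
      by_cases hsρ : s ∈ ρ
      · simp only [if_pos hsρ]
        exact hK ρ
      · simp only [if_neg hsρ, Finset.sum_const_zero]
    rw [Finset.sum_congr rfl h1]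
    have hpart := km_partition_sum lam J.powerset (fun ρ => atomOf J ρ)
      (fun ρ _ => hatomJ ρ) hJdisj s hsdef (atomOf_cover J s)
    rw [hpart]
    refine Finset.sum_congr rfl fun ρ _ => ?_
    by_cases hsρ : s ∈ ρ
    · rw [if_pos hsρ]
      congr 1
      exact (Set.inter_eq_left.mpr (atomOf_subset_of_mem hsJ hsρ)).symm
    · rw [if_neg hsρ]
      have hempty : atomOf J ρ ∩ s = ∅ := by
        apply Set.eq_empty_iff_forall_notMem.mpr
        rintro x ⟨hx1, hx2⟩
        exact (atomOf_subset_compl hsJ hsρ hx1) hx2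
      rw [hempty, km_empty]
  have hom_X : ∀ X ∈ T, (Set.univ : Set M).Definable L X →
      om (cyl Sum.inl X) = mu.toFun X := by
    intro X hXT' hXdef'
    have hXmem : X ∈ XT := by
      rw [hXT]
      exact Finset.mem_filter.mpr ⟨hXT', hXdef'⟩
    have hdw_X : ∀ ρ ∈ J.powerset, ∀ σ t,
        dw ρ σ t (cyl Sum.inl X) = if X ∈ σ then wt ρ σ t else 0 := by
      intro ρ hρ σ t
      rw [hdwdef]
      dsimp only
      by_cases h : Cpt ρ σ
      · rw [dif_pos h]
        obtain ⟨_, hgX, _⟩ := Classical.choose_spec h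
        by_cases hXσ : X ∈ σ
        · have hmem : Classical.choose h ∈ cyl Sum.inl X :=
            atomOf_subset_of_mem hXmem hXσ hgX
          rw [if_pos hXσ, if_pos hmem]
        · have hmem : Classical.choose h ∉ cyl Sum.inl X :=
            atomOf_subset_compl hXmem hXσ hgX
          rw [if_neg hXσ, if_neg hmem]
      · rw [dif_neg h, hwt_zero ρ hρ σ t h, ite_self]
    rw [homdef]
    dsimp only
    have h1 : ∀ ρ ∈ J.powerset, (∑ σ ∈ XT.powerset, ∑ t ∈ EF.powerset,
        dw ρ σ t (cyl Sum.inl X))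
        = ∑ σ ∈ XT.powerset, (if X ∈ σ then (∑ t ∈ EF.powerset, wt ρ σ t) else 0) := by
      intro ρ hρ
      refine Finset.sum_congr rfl fun σ _ => ?_
      rw [Finset.sum_congr rfl fun t _ => hdw_X ρ hρ σ t]
      by_cases hXσ : X ∈ σ
      · simp only [if_pos hXσ]
      · simp only [if_neg hXσ, Finset.sum_const_zero]
    rw [Finset.sum_congr rfl h1, Finset.sum_comm]
    have h2 : ∀ σ ∈ XT.powerset, (∑ ρ ∈ J.powerset,
        if X ∈ σ then (∑ t ∈ EF.powerset, wt ρ σ t) else 0)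
        = (if X ∈ σ then mu.toFun (atomOf XT σ) else 0) := by
      intro σ _
      by_cases hXσ : X ∈ σ
      · simp only [if_pos hXσ]
        exact hK' σ
      · simp only [if_neg hXσ, Finset.sum_const_zero]
    rw [Finset.sum_congr rfl h2]
    have hpart := km_partition_sum mu XT.powerset (fun σ => atomOf XT σ)
      (fun σ _ => hatomX σ) hXdisj X hXdef' (atomOf_cover XT X)
    rw [hpart]
    refine Finset.sum_congr rfl fun σ _ => ?_
    by_cases hXσ : X ∈ σ
    · rw [if_pos hXσ]
      congr 1
      exact (Set.inter_eq_left.mpr (atomOf_subset_of_mem hXmem hXσ)).symm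
    · rw [if_neg hXσ]
      have hempty : atomOf XT σ ∩ X = ∅ := by
        apply Set.eq_empty_iff_forall_notMem.mpr
        rintro x ⟨hx1, hx2⟩
        exact (atomOf_subset_compl hXmem hXσ hx1) hx2
      rw [hempty, km_empty]
  have hom_van : ∀ D : Set (α ⊕ β → M),
      (∀ g ∈ D, ∃ i, g i ∉ (M₀ : Set M)) → om D = 0 := by
    intro D hD
    rw [homdef]
    dsimp only
    refine Finset.sum_eq_zero fun ρ _ => Finset.sum_eq_zero fun σ _ =>
      Finset.sum_eq_zero fun t _ => ?_
    rw [hdwdef]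
    dsimp only
    by_cases h : Cpt ρ σ
    · rw [dif_pos h]
      obtain ⟨_, _, hgM⟩ := Classical.choose_spec h
      rw [if_neg ?_]
      intro hmem
      obtain ⟨i, hi⟩ := hD _ hmem
      exact hi (hgM i)
    · rw [dif_neg h]
  exact ⟨om, hom_nonneg, hom_le, hom_univ, hom_compl, hom_ui, hom_s, hom_X, hom_van⟩

end EDaux

namespace EDaux

attribute [local instance] Classical.propDecidable

/-- Ultrafilter limit of a `[0,1]`-valued function. -/
noncomputable def ulim {I : Type*} (U : Ultrafilter I) (f : I → ℝ) : ℝ :=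
  if h : ∃ r, Filter.Tendsto f ↑U (nhds r) then h.choose else 0

theorem tendsto_ulim {I : Type*} (U : Ultrafilter I) {f : I → ℝ}
    (hf : ∀ i, f i ∈ Set.Icc (0:ℝ) 1) :
    Filter.Tendsto f ↑U (nhds (ulim U f)) := by
  have hmem : Set.Icc (0:ℝ) 1 ∈ U.map f := by
    apply Filter.mem_map.mpr
    exact Filter.univ_mem' hf
  obtain ⟨r, _, hle⟩ := isCompact_Icc.ultrafilter_le_nhds' (U.map f) hmem
  have htd : Filter.Tendsto f ↑U (nhds r) := by
    have h2 := hle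
    rw [Ultrafilter.coe_map] at h2
    exact h2
  have hex : ∃ r, Filter.Tendsto f ↑U (nhds r) := ⟨r, htd⟩
  rw [ulim, dif_pos hex]
  exact hex.choose_spec

end EDaux

set_option synthInstance.maxHeartbeats 1000000 in
/-- Finite satisfiability is preserved under extension domination: if `M₀ ≼ M` is an
elementary substructure, `μ` is finitely satisfiable in `M₀`, and `μ ≥_{E,M₀} ν`,
then `ν` is finitely satisfiable in `M₀`. -/
theorem finSat_of_extDom {L : FirstOrder.Language} {M : Type*} [L.Structure M]
    (M₀ : L.ElementarySubstructure M) {α β : Type*}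
    (mu : KeislerMeasure L M (Set.univ : Set M) α)
    (nu : KeislerMeasure L M (Set.univ : Set M) β)
    (hfs : FinitelySatisfiableIn L (M₀ : Set M) mu)
    (hdom : ExtDomOver L (M₀ : Set M) mu nu) :
    FinitelySatisfiableIn L (M₀ : Set M) nu := by
  classical
  obtain ⟨lam, hlam, hpush⟩ := hdom
  intro Y hY hpos
  by_contra hno
  push_neg at hno
  -- stage measures indexed by pairs of finite constraint families
  set I := Finset (Set (α ⊕ β → M)) × Finset (Set (α → M)) with hI
  haveI : Nonempty I := ⟨(∅, ∅)⟩
  haveI hnb : (Filter.atTop : Filter I).NeBot := Filter.atTop_neBot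
  have hstage := fun (i : I) =>
    EDaux.stage_measure M₀ mu lam hfs hlam i.1 i.2
  choose om h0 h1 huniv hcompl hui hlamS hmuT hvan using hstage
  -- an ultrafilter refining the directed order of constraint families
  set U := Ultrafilter.of (Filter.atTop : Filter I) with hU
  have hUle : (U : Filter I) ≤ Filter.atTop := Ultrafilter.of_le _
  set lim : Set (α ⊕ β → M) → ℝ := fun D => EDaux.ulim U (fun i => om i D) with hlim
  have htend : ∀ D, Filter.Tendsto (fun i => om i D) ↑U (nhds (lim D)) := by
    intro D
    exact EDaux.tendsto_ulim U (fun i => ⟨h0 i D, h1 i D⟩)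
  have heqconst : ∀ (D : Set (α ⊕ β → M)) (c : ℝ),
      (∀ᶠ i in (U : Filter I), om i D = c) → lim D = c := by
    intro D c hev
    refine tendsto_nhds_unique (htend D) ?_
    exact (Filter.tendsto_congr' hev).mpr tendsto_const_nhds
  have hallconst : ∀ (D : Set (α ⊕ β → M)) (c : ℝ),
      (∀ i, om i D = c) → lim D = c := fun D c h =>
    heqconst D c (Filter.Eventually.of_forall h)
  -- the limit measure
  set Om : KeislerMeasure L M (Set.univ : Set M) (α ⊕ β) :=
    { toFun := lim
      measure_univ := hallconst Set.univ 1 huniv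
      nonneg' := fun s _ => ge_of_tendsto' (htend s) (fun i => h0 i s)
      compl' := by
        intro s _
        refine tendsto_nhds_unique (htend sᶜ) ?_
        have hfn : (fun i => om i sᶜ) = fun i => 1 - om i s :=
          funext fun i => hcompl i s
        rw [hfn]
        exact Filter.Tendsto.const_sub _ (htend s)
      union_inter' := by
        intro s t _ _
        refine tendsto_nhds_unique (htend (s ∪ t)) ?_
        have hfn : (fun i => om i (s ∪ t)) = fun i => om i s + om i t - om i (s ∩ t) :=
          funext fun i => hui i s t
        rw [hfn]
        exact (Filter.Tendsto.add (htend s) (htend t)).sub (htend (s ∩ t)) } with hOm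
  -- `Om` belongs to the extension space
  have hrestr : ∀ s : Set (α ⊕ β → M), (M₀ : Set M).Definable L s →
      Om.toFun s = lam.toFun s := by
    intro s hs
    have hev : ∀ᶠ i in (Filter.atTop : Filter I), om i s = lam.toFun s := by
      refine Filter.eventually_atTop.mpr ⟨({s}, ∅), fun i hi => ?_⟩
      have hsS : s ∈ i.1 := hi.1 (Finset.mem_singleton_self s)
      exact hlamS i s hsS hs
    exact heqconst s (lam.toFun s) (hUle hev)
  have hmarg : ∀ X : Set (α → M), (Set.univ : Set M).Definable L X →
      Om.toFun (cyl Sum.inl X) = mu.toFun X := by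
    intro X hX
    have hev : ∀ᶠ i in (Filter.atTop : Filter I), om i (cyl Sum.inl X) = mu.toFun X := by
      refine Filter.eventually_atTop.mpr ⟨(∅, {X}), fun i hi => ?_⟩
      have hXT : X ∈ i.2 := hi.2 (Finset.mem_singleton_self X)
      exact hmuT i X hXT hX
    exact heqconst (cyl Sum.inl X) (mu.toFun X) (hUle hev)
  have hmem : Om ∈ extSpace L (M₀ : Set M) lam mu := ⟨hrestr, hmarg⟩
  -- but `Om` vanishes on `cyl Sum.inr Y`
  have hvanY : Om.toFun (cyl Sum.inr Y) = 0 := by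
    refine hallconst (cyl Sum.inr Y) 0 fun i => ?_
    refine hvan i (cyl Sum.inr Y) ?_
    intro g hg
    obtain ⟨j, hj⟩ := hno (fun j => g (Sum.inr j)) hg
    exact ⟨Sum.inr j, hj⟩
  have hfinal := hpush Om hmem Y hY
  rw [hvanY] at hfinal
  linarith
end
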